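/- arXiv:1408.0197 — 8 statements merged into one kernel-verified Lean document; each statement's English description precedes it below -/
import Mathlib

section
/- Let H be a complex Hilbert space, A : D(A) ⊆ H → H a densely defined closed linear operator, and L : ℝ → L(H) a norm-continuous family of bounded operators. Define the operator T on L²(ℝ;H) by (Tf)(t) = L(t)f(t) + A f(t) with maximal domain D(T) = {f ∈ L²(ℝ;H) : f(t) ∈ D(A) for a.e. t ∈ ℝ and (t ↦ L(t)f(t) + A f(t)) ∈ L²(ℝ;H)}. Then T is closed: whenever f_n ∈ D(T), f_n → f in L²(ℝ;H) and T f_n → g in L²(ℝ;H), one has f ∈ D(T) and T f = g. -/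
open MeasureTheory Filter Topology

/-- first part of Lemma 2.1 of the paper.
Let `H` be a complex Hilbert space, `A` a densely defined closed linear operator on `H`
(modelled as a partially defined linear map with dense domain and closed graph), and
`L : ℝ → L(H)` a norm-continuous family of bounded operators.  The operator `T` on
`L²(ℝ;H)` given by `(Tf)(t) = L(t) f(t) + A f(t)` on its maximal domain is closed:
if `fₙ ∈ D(T)`, `fₙ → f` in `L²` and `T fₙ → g` in `L²`, then `f ∈ D(T)` and `T f = g`
(i.e. a.e. `f(t) ∈ D(A)` and `L(t) f(t) + A f(t) = g(t)`).
Here `Af n` is the pointwise a.e. value of `A` applied to `f n`. -/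
theorem stmt_0
    {H : Type*} [NormedAddCommGroup H] [InnerProductSpace ℂ H] [CompleteSpace H]
    (A : H →ₗ.[ℂ] H)
    (hdense : Dense (A.domain : Set H))
    (hclosed : IsClosed (A.graph : Set (H × H)))
    (L : ℝ → H →L[ℂ] H) (hL : Continuous L)
    (f Af : ℕ → ℝ → H) (flim g : ℝ → H)
    (hf2 : ∀ n, MemLp (f n) 2 (volume : Measure ℝ))
    (hfD : ∀ n, ∀ᵐ t : ℝ, ∃ h : f n t ∈ A.domain, A ⟨f n t, h⟩ = Af n t)
    (hTf2 : ∀ n, MemLp (fun t => L t (f n t) + Af n t) 2 (volume : Measure ℝ))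
    (hflim : MemLp flim 2 (volume : Measure ℝ))
    (hg : MemLp g 2 (volume : Measure ℝ))
    (hconv : Tendsto (fun n => eLpNorm (f n - flim) 2 volume) atTop (𝓝 0))
    (hTconv : Tendsto (fun n =>
        eLpNorm ((fun t => L t (f n t) + Af n t) - g) 2 volume) atTop (𝓝 0)) :
    ∀ᵐ t : ℝ, ∃ h : flim t ∈ A.domain, L t (flim t) + A ⟨flim t, h⟩ = g t := by
  -- convergence in measure
  have hm1 : TendstoInMeasure (volume : Measure ℝ) f atTop flim :=
    tendstoInMeasure_of_tendsto_eLpNorm (by norm_num)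
      (fun n => (hf2 n).aestronglyMeasurable) hflim.aestronglyMeasurable hconv
  obtain ⟨ns, hns, hae1⟩ := hm1.exists_seq_tendsto_ae
  have hm2 : TendstoInMeasure (volume : Measure ℝ)
      (fun k => (fun t => L t (f (ns k) t) + Af (ns k) t)) atTop g :=
    tendstoInMeasure_of_tendsto_eLpNorm (by norm_num)
      (fun k => (hTf2 (ns k)).aestronglyMeasurable) hg.aestronglyMeasurable
      (hTconv.comp hns.tendsto_atTop)
  obtain ⟨ms, hms, hae2⟩ := hm2.exists_seq_tendsto_ae
  have hfD' : ∀ᵐ t : ℝ, ∀ n, ∃ h : f n t ∈ A.domain, A ⟨f n t, h⟩ = Af n t :=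
    (ae_all_iff).2 hfD
  filter_upwards [hae1, hae2, hfD'] with t h1 h2 hD
  -- pointwise: f (ns (ms k)) t → flim t, and T-values → g t
  have h1' : Tendsto (fun k => f (ns (ms k)) t) atTop (𝓝 (flim t)) :=
    h1.comp hms.tendsto_atTop
  -- A f (ns (ms k)) t → g t - L t (flim t)
  have hLt : Tendsto (fun k => L t (f (ns (ms k)) t)) atTop (𝓝 (L t (flim t))) :=
    ((L t).continuous.tendsto _).comp h1'
  have hA : Tendsto (fun k => Af (ns (ms k)) t) atTop (𝓝 (g t - L t (flim t))) := by
    have := h2.sub hLt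
    simpa using this
  -- closed graph argument
  have hmem : (flim t, g t - L t (flim t)) ∈ A.graph := by
    refine hclosed.mem_of_tendsto (h1'.prodMk_nhds hA) (Eventually.of_forall fun k => ?_)
    obtain ⟨hk, hAk⟩ := hD (ns (ms k))
    have := A.mem_graph ⟨f (ns (ms k)) t, hk⟩
    rwa [hAk] at this
  rw [LinearPMap.mem_graph_iff] at hmem
  obtain ⟨y, hy1, hy2⟩ := hmem
  have hy1' : (y : H) = flim t := hy1
  refine ⟨hy1' ▸ y.2, ?_⟩
  have : A ⟨flim t, hy1' ▸ y.2⟩ = A y := by congr 1; exact Subtype.ext hy1'.symm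
  rw [this, hy2]
  simp
end

section
/- Let H be a complex Hilbert space and A : D(A) ⊆ H → H a densely defined closed linear operator which is accretive (Re⟨Ax|x⟩ ≥ 0 for all x ∈ D(A)), m-accretive (the operator x ↦ x + Ax maps D(A) onto H), and boundedly invertible: there is G ∈ L(H) with G(Ax) = x for x ∈ D(A) and AGy = y for y ∈ H; write C_A := ‖G‖. Let r > 0, let M : {w ∈ ℂ : |w + r| > r} → L(H) be analytic, let δ ∈ [0, 1/(2r)), and suppose K := sup{‖zM(z^{-1})‖ : z ∈ ℂ, 0 < |z| ≤ δ, Re z > −1/(2r)} satisfies K·C_A < 1, and that there are c > 0 and ρ₀ ∈ (0, 1/(2r)) such that Re⟨zM(z^{-1})x|x⟩ ≥ c‖x‖² for all x ∈ H and all z ∈ ℂ with Re z > −ρ₀ and |z| > δ. Then for every z ∈ ℂ with Re z > −ρ₀ and z ≠ 0, the operator D(A) ∋ x ↦ zM(z^{-1})x + Ax is a bijection onto H whose inverse is bounded with norm at most max{1/c, C_A/(1 − K·C_A)}. -/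
/-- `S` is a bounded two-sided inverse of the (generally unbounded) operator
`x ↦ B x + A x` defined on `D(A)`; in particular `x ↦ B x + A x : D(A) → H` is a
bijection onto `H` with bounded inverse `S`. -/
def IsBddInvPair {H : Type*} [NormedAddCommGroup H] [InnerProductSpace ℂ H]
    (A : H →ₗ.[ℂ] H) (B S : H →L[ℂ] H) : Prop :=
  (∀ x : A.domain, S (B x + A x) = x) ∧
    ∀ y : H, ∃ h : S y ∈ A.domain, B (S y) + A ⟨S y, h⟩ = y

set_option linter.unusedSectionVars false
set_option maxHeartbeats 1000000

section AuxStmt6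

variable {H : Type*} [NormedAddCommGroup H] [InnerProductSpace ℂ H] [CompleteSpace H]

lemma aux_re_smul (a : ℝ) (x : H) : (inner ℂ ((a : ℂ) • x) x : ℂ).re = a * ‖x‖ ^ 2 := by
  have h2 : (inner ℂ x x : ℂ).re = ‖x‖ ^ 2 := by
    simpa using inner_self_eq_norm_sq (𝕜 := ℂ) x
  rw [inner_smul_left, Complex.conj_ofReal]
  rw [Complex.re_ofReal_mul, h2]

lemma aux_norm_smul_one (a : ℝ) : ‖(a : ℂ) • (1 : H →L[ℂ] H)‖ ≤ |a| := by
  calc ‖(a : ℂ) • (1 : H →L[ℂ] H)‖ ≤ ‖(a : ℂ)‖ * ‖(1 : H →L[ℂ] H)‖ := norm_smul_le _ _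
  _ ≤ |a| * 1 := by
      rw [Complex.norm_real, Real.norm_eq_abs]
      refine mul_le_mul_of_nonneg_left ?_ (abs_nonneg a)
      rw [ContinuousLinearMap.one_def]
      exact ContinuousLinearMap.norm_id_le
  _ = |a| := mul_one _

lemma aux_coer_bound (A : H →ₗ.[ℂ] H) (B₀ : H →L[ℂ] H) (γ : ℝ) (hγ : 0 < γ)
    (h : ∀ x : A.domain, γ * ‖(x : H)‖ ^ 2 ≤ (inner ℂ (B₀ x + A x) (x : H) : ℂ).re) :
    ∀ x : A.domain, ‖(x : H)‖ ≤ (1 / γ) * ‖B₀ x + A x‖ := by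
  intro x
  have h1 := h x
  have h2 : ((inner ℂ (B₀ x + A x) (x : H) : ℂ)).re ≤ ‖B₀ x + A x‖ * ‖(x : H)‖ := by
    exact re_inner_le_norm (𝕜 := ℂ) (B₀ x + A x) (x : H)
  rw [one_div_mul_eq_div, le_div_iff₀ hγ]
  nlinarith [norm_nonneg (x : H), norm_nonneg (B₀ x + A x)]

lemma aux_pert (A : H →ₗ.[ℂ] H) (B₀ B₁ : H →L[ℂ] H) (C₀ : ℝ) (hC₀ : 0 ≤ C₀)
    (hbound : ∀ x : A.domain, ‖(x : H)‖ ≤ C₀ * ‖B₀ x + A x‖)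
    (hsurj : ∀ y : H, ∃ x : A.domain, B₀ x + A x = y)
    (hsmall : C₀ * ‖B₁ - B₀‖ < 1) :
    ∀ y : H, ∃ x : A.domain, B₁ x + A x = y := by
  classical
  set F : A.domain →ₗ[ℂ] H := (B₀.toLinearMap.comp A.domain.subtype) + A.toFun with hFdef
  have hF : ∀ x : A.domain, F x = B₀ x + A x := fun x => rfl
  have hinj : Function.Injective F := by
    intro x y hxy
    have h0 : F (x - y) = 0 := by rw [map_sub, hxy, sub_self]
    have hb := hbound (x - y)
    rw [← hF, h0, norm_zero, mul_zero] at hb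
    have : ((x - y : A.domain) : H) = 0 := norm_le_zero_iff.mp hb
    have : (x - y : A.domain) = 0 := by exact_mod_cast this
    exact sub_eq_zero.mp this
  have hsurjF : Function.Surjective F := by
    intro y; obtain ⟨x, hx⟩ := hsurj y; exact ⟨x, by rw [hF]; exact hx⟩
  set e : A.domain ≃ₗ[ℂ] H := LinearEquiv.ofBijective F ⟨hinj, hsurjF⟩ with hedef
  have heF : ∀ x : A.domain, e x = F x := fun x => rfl
  set g : H →ₗ[ℂ] H := (A.domain.subtype).comp e.symm.toLinearMap with hgdef
  have hg : ∀ y : H, ‖g y‖ ≤ C₀ * ‖y‖ := by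
    intro y
    have hb := hbound (e.symm y)
    rw [← hF] at hb
    have h1 : F (e.symm y) = y := by rw [← heF, e.apply_symm_apply]
    rw [h1] at hb
    exact hb
  set S₀ : H →L[ℂ] H := g.mkContinuous C₀ hg with hS₀def
  have hS₀ : ∀ y : H, S₀ y = ((e.symm y : A.domain) : H) := fun _ => rfl
  have hS₀norm : ‖S₀‖ ≤ C₀ := g.mkContinuous_norm_le hC₀ hg
  set E : H →L[ℂ] H := B₁ - B₀ with hEdef
  have hsm : ‖-(S₀.comp E)‖ < 1 := by
    rw [norm_neg]
    calc ‖S₀.comp E‖ ≤ ‖S₀‖ * ‖E‖ := ContinuousLinearMap.opNorm_comp_le _ _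
    _ ≤ C₀ * ‖E‖ := mul_le_mul_of_nonneg_right hS₀norm (norm_nonneg _)
    _ < 1 := hsmall
  set u : (H →L[ℂ] H)ˣ := Units.oneSub (-(S₀.comp E)) hsm with hudef
  intro y
  set v : H := ((u⁻¹ : (H →L[ℂ] H)ˣ) : H →L[ℂ] H) (S₀ y) with hvdef
  have huv : ((u : H →L[ℂ] H)) v = S₀ y := by
    rw [hvdef, ← ContinuousLinearMap.mul_apply, u.mul_inv, ContinuousLinearMap.one_apply]
  have hv : v = S₀ (y - E v) := by
    have h2 : v + S₀ (E v) = S₀ y := by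
      have h3 : (1 - -(S₀.comp E) : H →L[ℂ] H) v = S₀ y := huv
      simpa [ContinuousLinearMap.sub_apply, ContinuousLinearMap.comp_apply,
        sub_neg_eq_add] using h3
    rw [map_sub]
    exact eq_sub_of_add_eq h2
  refine ⟨e.symm (y - E v), ?_⟩
  have hx : ((e.symm (y - E v) : A.domain) : H) = v := by rw [← hS₀ (y - E v), ← hv]
  have hFx : B₀ v + A (e.symm (y - E v)) = y - E v := by
    have h4 := hF (e.symm (y - E v))
    rw [hx] at h4
    rw [← h4, ← heF, e.apply_symm_apply]
  have hE : E v = B₁ v - B₀ v := rfl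
  calc B₁ ((e.symm (y - E v) : A.domain) : H) + A (e.symm (y - E v))
      = B₁ v + A (e.symm (y - E v)) := by rw [hx]
    _ = (B₀ v + A (e.symm (y - E v))) + E v := by rw [hE]; abel
    _ = (y - E v) + E v := by rw [hFx]
    _ = y := by abel

lemma aux_build (A : H →ₗ.[ℂ] H) (B : H →L[ℂ] H) (C : ℝ) (hC : 0 ≤ C)
    (hbound : ∀ x : A.domain, ‖(x : H)‖ ≤ C * ‖B x + A x‖)
    (hsurj : ∀ y : H, ∃ x : A.domain, B x + A x = y) :
    ∃ S : H →L[ℂ] H, ((∀ x : A.domain, S (B x + A x) = x) ∧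
      ∀ y : H, ∃ h : S y ∈ A.domain, B (S y) + A ⟨S y, h⟩ = y) ∧ ‖S‖ ≤ C := by
  classical
  set F : A.domain →ₗ[ℂ] H := (B.toLinearMap.comp A.domain.subtype) + A.toFun with hFdef
  have hF : ∀ x : A.domain, F x = B x + A x := fun x => rfl
  have hinj : Function.Injective F := by
    intro x y hxy
    have h0 : F (x - y) = 0 := by rw [map_sub, hxy, sub_self]
    have hb := hbound (x - y)
    rw [← hF, h0, norm_zero, mul_zero] at hb
    have : ((x - y : A.domain) : H) = 0 := norm_le_zero_iff.mp hb
    have : (x - y : A.domain) = 0 := by exact_mod_cast this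
    exact sub_eq_zero.mp this
  have hsurjF : Function.Surjective F := by
    intro y; obtain ⟨x, hx⟩ := hsurj y; exact ⟨x, by rw [hF]; exact hx⟩
  set e : A.domain ≃ₗ[ℂ] H := LinearEquiv.ofBijective F ⟨hinj, hsurjF⟩ with hedef
  have heF : ∀ x : A.domain, e x = F x := fun x => rfl
  set g : H →ₗ[ℂ] H := (A.domain.subtype).comp e.symm.toLinearMap with hgdef
  have hg : ∀ y : H, ‖g y‖ ≤ C * ‖y‖ := by
    intro y
    have hb := hbound (e.symm y)
    rw [← hF] at hb
    have h1 : F (e.symm y) = y := by rw [← heF, e.apply_symm_apply]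
    rw [h1] at hb
    exact hb
  refine ⟨g.mkContinuous C hg, ⟨?_, ?_⟩, g.mkContinuous_norm_le hC hg⟩
  · intro x
    show ((e.symm (B x + A x) : A.domain) : H) = (x : H)
    have h2 : e.symm (B x + A x) = x := by
      rw [← hF x, ← heF x, e.symm_apply_apply]
    rw [h2]
  · intro y
    refine ⟨(e.symm y).2, ?_⟩
    show B ((e.symm y : A.domain) : H) + A ⟨((e.symm y : A.domain) : H), (e.symm y).2⟩ = y
    have h3 : (⟨((e.symm y : A.domain) : H), (e.symm y).2⟩ : A.domain) = e.symm y := rfl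
    rw [h3, ← hF, ← heF, e.apply_symm_apply]

lemma aux_lam (A : H →ₗ.[ℂ] H)
    (haccr : ∀ x : A.domain, 0 ≤ (inner ℂ (A x) (x : H) : ℂ).re)
    (hmaccr : ∀ y : H, ∃ x : A.domain, (x : H) + A x = y) :
    ∀ n : ℕ, ∀ y : H, ∃ x : A.domain,
      ((((3/2 : ℝ) ^ n : ℝ) : ℂ) • (1 : H →L[ℂ] H)) x + A x = y := by
  intro n
  induction n with
  | zero =>
    intro y
    obtain ⟨x, hx⟩ := hmaccr y
    exact ⟨x, by simpa using hx⟩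
  | succ n ih =>
    have hlam : (0:ℝ) < (3/2 : ℝ) ^ n := by positivity
    apply aux_pert A ((((3/2 : ℝ) ^ n : ℝ) : ℂ) • 1) ((((3/2 : ℝ) ^ (n+1) : ℝ) : ℂ) • 1)
      (1 / ((3/2 : ℝ) ^ n)) (by positivity) ?_ ih ?_
    · apply aux_coer_bound A _ _ hlam
      intro x
      have h1 : (((((3/2 : ℝ) ^ n : ℝ) : ℂ) • (1 : H →L[ℂ] H)) (x : H) + A x)
          = (((3/2 : ℝ) ^ n : ℝ) : ℂ) • (x : H) + A x := by
        simp
      rw [h1, inner_add_left, Complex.add_re, aux_re_smul]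
      have h2 := haccr x
      nlinarith [norm_nonneg (x : H)]
    · have hdiff : (((3/2 : ℝ) ^ (n+1) : ℝ) : ℂ) • (1 : H →L[ℂ] H)
          - (((3/2 : ℝ) ^ n : ℝ) : ℂ) • 1
          = ((((3/2 : ℝ) ^ (n+1) - (3/2 : ℝ) ^ n : ℝ)) : ℂ) • (1 : H →L[ℂ] H) := by
        rw [← sub_smul]; norm_cast
      rw [hdiff]
      have hval : (3/2 : ℝ) ^ (n+1) - (3/2 : ℝ) ^ n = (3/2 : ℝ) ^ n / 2 := by
        rw [pow_succ]; ring
      rw [hval]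
      calc (1 / ((3/2 : ℝ) ^ n)) * ‖((((3/2 : ℝ) ^ n / 2 : ℝ)) : ℂ) • (1 : H →L[ℂ] H)‖
          ≤ (1 / ((3/2 : ℝ) ^ n)) * ((3/2 : ℝ) ^ n / 2) := by
            refine mul_le_mul_of_nonneg_left ?_ (by positivity)
            calc ‖((((3/2 : ℝ) ^ n / 2 : ℝ)) : ℂ) • (1 : H →L[ℂ] H)‖
                ≤ |(3/2 : ℝ) ^ n / 2| := aux_norm_smul_one _
              _ = (3/2 : ℝ) ^ n / 2 := abs_of_pos (by positivity)
        _ = 1/2 := by field_simp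
        _ < 1 := by norm_num

end AuxStmt6

/-- frequency-domain content of Proposition 3.1 of the paper.
Let `A` be densely defined, closed, accretive, m-accretive and boundedly invertible
with bounded inverse `G` (so `C_A = ‖G‖`).  Let `M` be analytic on
`{w : |w + r| > r}`, let `δ ∈ [0, 1/(2r))`, `K` a bound for `‖z M(z⁻¹)‖` on
`{0 < |z| ≤ δ, Re z > −1/(2r)}` with `K‖G‖ < 1`, and assume
`Re⟨zM(z⁻¹)x|x⟩ ≥ c‖x‖²` for `Re z > −ρ₀`, `|z| > δ`.  Then for every `z ≠ 0` with
`Re z > −ρ₀` the operator `zM(z⁻¹) + A` is a bijection of `D(A)` onto `H` with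
bounded inverse of norm at most `max (1/c) (‖G‖/(1 − K‖G‖))`. -/
theorem stmt_6
    {H : Type*} [NormedAddCommGroup H] [InnerProductSpace ℂ H] [CompleteSpace H]
    (A : H →ₗ.[ℂ] H)
    (hdense : Dense (A.domain : Set H))
    (hclosed : IsClosed (A.graph : Set (H × H)))
    -- `A` is accretive
    (haccr : ∀ x : A.domain, 0 ≤ (inner ℂ (A x) (x : H) : ℂ).re)
    -- `A` is m-accretive: `1 + A` is onto
    (hmaccr : ∀ y : H, ∃ x : A.domain, (x : H) + A x = y)
    -- `A` is boundedly invertible with inverse `G`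
    (G : H →L[ℂ] H)
    (hGA : ∀ x : A.domain, G (A x) = x)
    (hAG : ∀ y : H, ∃ h : G y ∈ A.domain, A ⟨G y, h⟩ = y)
    (r : ℝ) (hr : 0 < r)
    (M : ℂ → H →L[ℂ] H)
    (hM : DifferentiableOn ℂ M {w : ℂ | r < ‖w + (r : ℂ)‖})
    (δ : ℝ) (hδ0 : 0 ≤ δ) (hδr : δ < 1 / (2 * r))
    (K : ℝ)
    (hK : ∀ z : ℂ, z ≠ 0 → ‖z‖ ≤ δ → -(1 / (2 * r)) < z.re →
      ‖z • M z⁻¹‖ ≤ K)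
    (hKG : K * ‖G‖ < 1)
    (c ρ₀ : ℝ) (hc : 0 < c) (hρ₀ : 0 < ρ₀) (hρ₀r : ρ₀ < 1 / (2 * r))
    (hpos : ∀ z : ℂ, -ρ₀ < z.re → δ < ‖z‖ →
      ∀ x : H, c * ‖x‖ ^ 2 ≤ (inner ℂ ((z • M z⁻¹) x) x : ℂ).re) :
    ∀ z : ℂ, z ≠ 0 → -ρ₀ < z.re →
      ∃ S : H →L[ℂ] H, IsBddInvPair A (z • M z⁻¹) S ∧
        ‖S‖ ≤ max (1 / c) (‖G‖ / (1 - K * ‖G‖)) := by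
  intro z hz hρz
  set B : H →L[ℂ] H := z • M z⁻¹ with hB
  by_cases hcase : δ < ‖z‖
  · -- coercive case
    have hcoerB : ∀ x : H, c * ‖x‖ ^ 2 ≤ (inner ℂ (B x) x : ℂ).re := hpos z hρz hcase
    have hco : ∀ x : A.domain, c * ‖(x : H)‖ ^ 2 ≤ (inner ℂ (B x + A x) (x : H) : ℂ).re := by
      intro x
      rw [inner_add_left, Complex.add_re]
      have h1 := haccr x
      have h2 := hcoerB (x : H)
      linarith
    have hbound := aux_coer_bound A B c hc hco
    obtain ⟨n, hn⟩ := pow_unbounded_of_one_lt ‖B‖ (by norm_num : (1:ℝ) < 3/2)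
    set lam : ℝ := (3/2 : ℝ) ^ n with hlamdef
    have hlam : 0 < lam := by positivity
    have step1 := aux_lam A haccr hmaccr n
    have step2 : ∀ y : H, ∃ x : A.domain,
        (((lam : ℂ)) • (1 : H →L[ℂ] H) + B) x + A x = y := by
      apply aux_pert A ((lam : ℂ) • 1) ((lam : ℂ) • 1 + B) (1 / lam) (by positivity) ?_ step1 ?_
      · apply aux_coer_bound A _ _ hlam
        intro x
        have h1 : ((((lam : ℂ)) • (1 : H →L[ℂ] H)) (x : H) + A x)
            = (lam : ℂ) • (x : H) + A x := by simp
        rw [h1, inner_add_left, Complex.add_re, aux_re_smul]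
        have h2 := haccr x
        nlinarith [norm_nonneg (x : H)]
      · rw [add_sub_cancel_left]
        calc (1 / lam) * ‖B‖ < (1 / lam) * lam := by
              exact mul_lt_mul_of_pos_left hn (by positivity)
          _ = 1 := by field_simp
    have step3 : ∀ y : H, ∃ x : A.domain, B x + A x = y := by
      apply aux_pert A ((lam : ℂ) • 1 + B) B (1 / (lam + c)) (by positivity) ?_ step2 ?_
      · apply aux_coer_bound A _ _ (by positivity : (0:ℝ) < lam + c)
        intro x
        have h1 : ((((lam : ℂ)) • (1 : H →L[ℂ] H) + B) (x : H) + A x)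
            = (lam : ℂ) • (x : H) + (B x + A x) := by
          simp [ContinuousLinearMap.add_apply, add_assoc]
        rw [h1, inner_add_left, Complex.add_re, aux_re_smul]
        have h2 := hco x
        nlinarith [norm_nonneg (x : H)]
      · have h3 : B - ((lam : ℂ) • (1 : H →L[ℂ] H) + B) = -((lam : ℂ) • 1) := by abel
        rw [h3, norm_neg]
        calc (1 / (lam + c)) * ‖(lam : ℂ) • (1 : H →L[ℂ] H)‖
            ≤ (1 / (lam + c)) * lam := by
              refine mul_le_mul_of_nonneg_left ?_ (by positivity)
              calc ‖(lam : ℂ) • (1 : H →L[ℂ] H)‖ ≤ |lam| := aux_norm_smul_one _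
                _ = lam := abs_of_pos hlam
          _ < 1 := by
              rw [one_div_mul_eq_div, div_lt_one (by positivity)]
              linarith
    obtain ⟨S, hS, hSn⟩ := aux_build A B (1 / c) (by positivity) hbound step3
    exact ⟨S, hS, hSn.trans (le_max_left _ _)⟩
  · -- small |z| case
    push_neg at hcase
    have hre : -(1 / (2 * r)) < z.re := by linarith
    have hBK : ‖B‖ ≤ K := hK z hz hcase hre
    have hK0 : 0 ≤ K := le_trans (norm_nonneg B) hBK
    have hden : 0 < 1 - K * ‖G‖ := by linarith
    have htn : ‖-(B.comp G)‖ < 1 := by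
      rw [norm_neg]
      calc ‖B.comp G‖ ≤ ‖B‖ * ‖G‖ := ContinuousLinearMap.opNorm_comp_le _ _
        _ ≤ K * ‖G‖ := mul_le_mul_of_nonneg_right hBK (norm_nonneg G)
        _ < 1 := hKG
    set u : (H →L[ℂ] H)ˣ := Units.oneSub (-(B.comp G)) htn with hudef
    set v : H →L[ℂ] H := ((u⁻¹ : (H →L[ℂ] H)ˣ) : H →L[ℂ] H) with hvdef
    have hveq : v = 1 + (-(B.comp G)) * v := by
      have h1 : ((u : H →L[ℂ] H)) * v = 1 := u.mul_inv
      have h2 : (1 - -(B.comp G)) * v = 1 := h1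
      rw [sub_mul, one_mul] at h2
      rw [← h2]
      abel
    have hnv : ‖v‖ ≤ 1 / (1 - K * ‖G‖) := by
      have h2 : ‖v‖ ≤ 1 + (K * ‖G‖) * ‖v‖ := by
        calc ‖v‖ = ‖1 + (-(B.comp G)) * v‖ := by rw [← hveq]
          _ ≤ ‖(1 : H →L[ℂ] H)‖ + ‖(-(B.comp G)) * v‖ := norm_add_le _ _
          _ ≤ 1 + (K * ‖G‖) * ‖v‖ := by
              refine add_le_add ?_ ?_
              · rw [ContinuousLinearMap.one_def]; exact ContinuousLinearMap.norm_id_le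
              · calc ‖(-(B.comp G)) * v‖ ≤ ‖-(B.comp G)‖ * ‖v‖ := norm_mul_le _ _
                  _ ≤ (K * ‖G‖) * ‖v‖ := by
                      refine mul_le_mul_of_nonneg_right ?_ (norm_nonneg v)
                      rw [norm_neg]
                      calc ‖B.comp G‖ ≤ ‖B‖ * ‖G‖ := ContinuousLinearMap.opNorm_comp_le _ _
                        _ ≤ K * ‖G‖ := mul_le_mul_of_nonneg_right hBK (norm_nonneg G)
      rw [le_div_iff₀ hden]
      nlinarith [norm_nonneg v]
    refine ⟨G.comp v, ⟨?_, ?_⟩, ?_⟩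
    · intro x
      have key : ((u : H →L[ℂ] H)) (A x) = B x + A x := by
        show (1 - -(B.comp G)) (A x) = B (x : H) + A x
        rw [ContinuousLinearMap.sub_apply, ContinuousLinearMap.one_apply,
          ContinuousLinearMap.neg_apply, ContinuousLinearMap.comp_apply, hGA x,
          sub_neg_eq_add, add_comm]
      have hv1 : v (B x + A x) = A x := by
        rw [← key, hvdef, ← ContinuousLinearMap.mul_apply, u.inv_mul,
          ContinuousLinearMap.one_apply]
      show G (v (B x + A x)) = (x : H)
      rw [hv1, hGA x]
    · intro y
      obtain ⟨h, hw⟩ := hAG (v y)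
      refine ⟨h, ?_⟩
      show B (G (v y)) + A ⟨G (v y), h⟩ = y
      rw [hw]
      have huy : ((u : H →L[ℂ] H)) (v y) = y := by
        rw [hvdef, ← ContinuousLinearMap.mul_apply, u.mul_inv, ContinuousLinearMap.one_apply]
      calc B (G (v y)) + v y = ((u : H →L[ℂ] H)) (v y) := by
            show _ = (1 - -(B.comp G)) (v y)
            rw [ContinuousLinearMap.sub_apply, ContinuousLinearMap.one_apply,
              ContinuousLinearMap.neg_apply, ContinuousLinearMap.comp_apply,
              sub_neg_eq_add, add_comm]
        _ = y := huy
    · calc ‖G.comp v‖ ≤ ‖G‖ * ‖v‖ := ContinuousLinearMap.opNorm_comp_le _ _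
        _ ≤ ‖G‖ * (1 / (1 - K * ‖G‖)) := mul_le_mul_of_nonneg_left hnv (norm_nonneg G)
        _ = ‖G‖ / (1 - K * ‖G‖) := by ring
        _ ≤ max (1 / c) (‖G‖ / (1 - K * ‖G‖)) := le_max_right _ _
end

section
/- Let H be a complex Hilbert space, M₀ ∈ L(H) selfadjoint with ⟨M₀x|x⟩ ≥ 0 for all x, M₁ ∈ L(H) with Re⟨M₁x|x⟩ ≥ c‖x‖² for all x, where c > 0, and let r > 0. Then for every z ∈ ℂ with |z + r| > r (equivalently z ≠ 0 and Re(z^{-1}) > −1/(2r)) and every x ∈ H: Re⟨z^{-1}(M₀ x + z M₁ x)|x⟩ ≥ (c − ‖M₀‖/(2r))‖x‖². In particular, if r > ‖M₀‖/(2c) this lower bound is strictly positive. -/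
/-- the estimate of Example 3.6 of the paper.
Let `H` be a complex Hilbert space, `M₀ ∈ L(H)` selfadjoint and non-negative,
`M₁ ∈ L(H)` with `Re⟨M₁x|x⟩ ≥ c‖x‖²` for some `c > 0`, and `r > 0`.  Then for every
`z` with `|z + r| > r` (equivalently `z ≠ 0` and `Re z⁻¹ > −1/(2r)`) and every `x`:
`Re⟨z⁻¹(M₀x + zM₁x)|x⟩ ≥ (c − ‖M₀‖/(2r))‖x‖²`; in particular, if `r > ‖M₀‖/(2c)`
this lower bound is strictly positive. -/
theorem stmt_9
    {H : Type*} [NormedAddCommGroup H] [InnerProductSpace ℂ H]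
    (M₀ M₁ : H →L[ℂ] H) (c r : ℝ) (hc : 0 < c) (hr : 0 < r)
    (hsa : ∀ x y : H, (inner ℂ (M₀ x) y : ℂ) = inner ℂ x (M₀ y))
    (hM₀ : ∀ x : H, 0 ≤ (inner ℂ (M₀ x) x : ℂ).re)
    (hM₁ : ∀ x : H, c * ‖x‖ ^ 2 ≤ (inner ℂ (M₁ x) x : ℂ).re) :
    (∀ z : ℂ, r < ‖z + (r : ℂ)‖ → ∀ x : H,
      (c - ‖M₀‖ / (2 * r)) * ‖x‖ ^ 2 ≤ (inner ℂ (z⁻¹ • (M₀ x + z • M₁ x)) x : ℂ).re) ∧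
    (‖M₀‖ / (2 * c) < r → 0 < c - ‖M₀‖ / (2 * r)) := by
  constructor
  · intro z hz x
    have hz0 : z ≠ 0 := by
      rintro rfl
      simp only [zero_add, Complex.norm_real, Real.norm_eq_abs, abs_of_pos hr] at hz
      exact lt_irrefl r hz
    have hns : 0 < Complex.normSq z := Complex.normSq_pos.mpr hz0
    -- Re z⁻¹ ≥ -1/(2r)
    have hsq : r * r < Complex.normSq (z + (r : ℂ)) := by
      have := mul_self_lt_mul_self hr.le hz
      rwa [Complex.norm_def, Real.mul_self_sqrt (Complex.normSq_nonneg _)] at this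
    have hpos : 0 < Complex.normSq z + 2 * r * z.re := by
      have h2 : Complex.normSq (z + (r : ℂ)) = (z.re + r) ^ 2 + z.im ^ 2 := by
        simp [Complex.normSq_apply, Complex.add_re, Complex.add_im]
        ring
      have h3 : Complex.normSq z = z.re ^ 2 + z.im ^ 2 := by
        simp [Complex.normSq_apply]; ring
      rw [h2] at hsq
      nlinarith
    have hre : -(1 / (2 * r)) ≤ (z⁻¹).re := by
      rw [Complex.inv_re, le_div_iff₀ hns]
      have h1 : 1 / (2 * r) * (2 * r) = 1 := div_mul_cancel₀ _ (by positivity)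
      nlinarith [mul_pos (show (0:ℝ) < 1 / (2 * r) by positivity) hpos]
    -- inner product computation
    have hconj : (starRingEnd ℂ z⁻¹) * (starRingEnd ℂ z) = 1 := by
      rw [← map_mul, inv_mul_cancel₀ hz0, map_one]
    have key : (inner ℂ (z⁻¹ • (M₀ x + z • M₁ x)) x : ℂ)
        = (starRingEnd ℂ z⁻¹) * inner ℂ (M₀ x) x + inner ℂ (M₁ x) x := by
      rw [inner_smul_left, inner_add_left, inner_smul_left, mul_add, ← mul_assoc,
        hconj, one_mul]
    set t : ℂ := inner ℂ (M₀ x) x with ht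
    have htim : t.im = 0 := by
      have h1 : (starRingEnd ℂ) t = t := by
        rw [ht, inner_conj_symm, ← hsa]
      exact (Complex.conj_eq_iff_im.mp h1)
    have hre_mul : ((starRingEnd ℂ z⁻¹) * t).re = (z⁻¹).re * t.re := by
      rw [Complex.mul_re, Complex.conj_re, Complex.conj_im, htim]
      ring
    have ht0 : 0 ≤ t.re := hM₀ x
    have htle : t.re ≤ ‖M₀‖ * ‖x‖ ^ 2 := by
      calc t.re ≤ ‖t‖ := Complex.re_le_norm t
        _ = ‖t‖ := rfl
        _ ≤ ‖M₀ x‖ * ‖x‖ := norm_inner_le_norm _ _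
        _ ≤ ‖M₀‖ * ‖x‖ * ‖x‖ := by
            have := M₀.le_opNorm x
            have hx : 0 ≤ ‖x‖ := norm_nonneg x
            nlinarith
        _ = ‖M₀‖ * ‖x‖ ^ 2 := by ring
    have hM1x := hM₁ x
    rw [key, Complex.add_re, hre_mul]
    have hdiv : ‖M₀‖ / (2 * r) * (2 * r) = ‖M₀‖ :=
      div_mul_cancel₀ _ (by positivity)
    have h1div : 1 / (2 * r) * (2 * r) = 1 :=
      div_mul_cancel₀ _ (by positivity)
    have hstep1 : -(1 / (2 * r)) * t.re ≤ (z⁻¹).re * t.re :=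
      mul_le_mul_of_nonneg_right hre ht0
    have hstep2 : -(1 / (2 * r)) * (‖M₀‖ * ‖x‖ ^ 2) ≤ -(1 / (2 * r)) * t.re := by
      apply mul_le_mul_of_nonpos_left htle
      have : 0 < 1 / (2 * r) := by positivity
      linarith
    have hstep3 : -(1 / (2 * r)) * (‖M₀‖ * ‖x‖ ^ 2) = -(‖M₀‖ / (2 * r)) * ‖x‖ ^ 2 := by
      ring
    nlinarith
  · intro h
    have h2 : ‖M₀‖ < 2 * c * r := by
      rw [div_lt_iff₀ (by positivity : (0:ℝ) < 2 * c)] at h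
      linarith
    rw [sub_pos, div_lt_iff₀ (by positivity : (0:ℝ) < 2 * r)]
    linarith
end

section
/- Let H₀ and H₁ be complex Hilbert spaces, r > 0, J ∈ L(H₁,H₀), and let M₀, M₁ : {w ∈ ℂ : |w+r| > r} → L(H₀) satisfy m₀ := sup_w ‖M₀(w)‖ < ∞ and m₁ := sup_w ‖M₁(w)‖ < ∞. Assume: (H1) for every ε > 0 there is η > 0 such that ‖M₁(z^{-1})‖ ≤ ε for all z with 0 < |z| < η and Re z > −1/(2r); and (H2) for every δ' > 0 there exist ρ₀ ∈ (0,1/(2r)) and c > 0 such that Re⟨z M₀(z^{-1})x + M₁(z^{-1})x|x⟩ ≥ c‖x‖² for all x ∈ H₀ and all z with Re z > −ρ₀ and |z| > δ'. For z ≠ 0 with Re z > −1/(2r) and d > 0 define the bounded operator B_d(z) on the Hilbert direct sum H₀ ⊕ H₁ by B_d(z)(x,y) = ( z M₀(z^{-1})x + M₁(z^{-1})x − d M₀(z^{-1})x + d(d M₀(z^{-1}) − M₁(z^{-1}))(J y), (z + d) y ). Then for every a > 0 there exist d₀ > 0 and δ > 0 such that ‖B_{d₀}(z)‖ < a for all z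 with 0 < |z| ≤ δ and Re z > −1/(2r), and there exist ρ₁ ∈ (0,1/(2r)) and c' > 0 such that Re⟨B_{d₀}(z)(x,y)|(x,y)⟩ ≥ c'(‖x‖² + ‖y‖²) for all (x,y) ∈ H₀ ⊕ H₁ and all z with Re z > −ρ₁ and |z| > δ. -/
set_option maxHeartbeats 1600000

/-- The Möbius-type correspondence: for `z ≠ 0`, `Re z > -1/(2r)` implies that
`z⁻¹` lies in the region `{w : |w + r| > r}`. -/
lemma aux_region {r : ℝ} (hr : 0 < r) {z : ℂ} (hz : z ≠ 0) (h : -(1/(2*r)) < z.re) :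
    r < ‖z⁻¹ + (r:ℂ)‖ := by
  have hza : 0 < ‖z‖ := norm_pos_iff.mpr hz
  have h1 : 0 < 1 + 2*r*z.re := by
    have h2 : -(1/(2*r)) * (2*r) < z.re * (2*r) :=
      mul_lt_mul_of_pos_right h (by linarith)
    have h3 : -(1/(2*r)) * (2*r) = -1 := by field_simp
    nlinarith
  have hkey : (r * ‖z‖)^2 < (‖1 + (r:ℂ)*z‖)^2 := by
    rw [mul_pow, Complex.sq_norm, Complex.sq_norm, Complex.normSq_apply, Complex.normSq_apply]
    simp only [Complex.add_re, Complex.add_im, Complex.mul_re, Complex.mul_im,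
      Complex.one_re, Complex.one_im, Complex.ofReal_re, Complex.ofReal_im]
    nlinarith [sq_nonneg z.im, sq_nonneg z.re, mul_pos hr hr]
  have h4 : r * ‖z‖ < ‖1 + (r:ℂ)*z‖ :=
    lt_of_pow_lt_pow_left₀ 2 (norm_nonneg _) hkey
  have h5 : ‖z⁻¹ + (r:ℂ)‖ * ‖z‖ = ‖1 + (r:ℂ)*z‖ := by
    rw [← norm_mul, add_mul, inv_mul_cancel₀ hz]
  rw [← h5] at h4
  exact lt_of_mul_lt_mul_right h4 (le_of_lt hza)

/-- Scalar inequality used for the boundedness estimate. -/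
lemma aux_sqrt {u v s A B : ℝ} (hu0 : 0 ≤ u) (hv0 : 0 ≤ v)
    (hu : u ≤ A*s) (hv : v ≤ B*s) : Real.sqrt (u^2 + v^2) ≤ (A+B)*s := by
  have hAs : 0 ≤ A*s := le_trans hu0 hu
  have hBs : 0 ≤ B*s := le_trans hv0 hv
  have h : u^2 + v^2 ≤ ((A+B)*s)^2 := by
    nlinarith [mul_self_le_mul_self hu0 hu, mul_self_le_mul_self hv0 hv, mul_nonneg hAs hBs]
  calc Real.sqrt (u^2+v^2) ≤ Real.sqrt (((A+B)*s)^2) := Real.sqrt_le_sqrt h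
    _ = (A+B)*s := Real.sqrt_sq (by linarith)

/-- Scalar inequality used for the positivity estimate. -/
lemma aux_pos {c d₀ m₀ K X Y H P W zre : ℝ}
    (hd₀ : 0 < d₀) (hX : 0 ≤ X) (hY : 0 ≤ Y)
    (hH : c * X^2 ≤ H) (hP : P ≤ m₀ * (X*X)) (hW : -(K*Y*X) ≤ W)
    (hzre : -(d₀/4) < zre) (hd₀c : d₀*(m₀+(K+1)^2) ≤ c/2) :
    min (c/2) (d₀/2) * (X^2+Y^2) ≤ (H - d₀*P + d₀*W) + (zre + d₀)*Y^2 := by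
  have hb1 := mul_le_mul_of_nonneg_left hP hd₀.le
  have hb2 := mul_le_mul_of_nonneg_left hW hd₀.le
  have hmin1 : min (c/2) (d₀/2) ≤ c/2 := min_le_left _ _
  have hmin2 : min (c/2) (d₀/2) ≤ d₀/2 := min_le_right _ _
  nlinarith [mul_nonneg hd₀.le (sq_nonneg ((K+1)*X - Y/2)),
    mul_nonneg (mul_nonneg hd₀.le hX) hY,
    mul_nonneg (sub_nonneg.mpr hd₀c) (sq_nonneg X),
    mul_nonneg (sub_nonneg.mpr hmin1) (sq_nonneg X),
    mul_nonneg (sub_nonneg.mpr hmin2) (sq_nonneg Y),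
    mul_nonneg (show (0:ℝ) ≤ zre + d₀/4 by linarith) (sq_nonneg Y)]

/-- Proposition 3.7 of the paper.
Let `H₀, H₁` be complex Hilbert spaces, `r > 0`, `J ∈ L(H₁,H₀)` (the role of `C⁻¹`),
and `M₀, M₁` families on `{w : |w+r| > r}` bounded by `m₀, m₁`.  Assume
(H1) `‖M₁(z⁻¹)‖ → 0` as `z → 0` in `{Re z > −1/(2r)}`, and
(H2) for every `δ' > 0` there are `ρ₀ ∈ (0,1/(2r))` and `c > 0` with
`Re⟨zM₀(z⁻¹)x + M₁(z⁻¹)x|x⟩ ≥ c‖x‖²` for `Re z > −ρ₀`, `|z| > δ'`.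
For `d > 0` let `B_d(z)(x,y) = (zM₀(z⁻¹)x + M₁(z⁻¹)x − dM₀(z⁻¹)x
+ d(dM₀(z⁻¹) − M₁(z⁻¹))(Jy), (z+d)y)` on the Hilbert direct sum `H₀ ⊕ H₁`
(whose norm is `√(‖x‖² + ‖y‖²)` and whose inner product is the sum of the component
inner products).  Then for every `a > 0` there are `d₀ > 0` and `δ > 0` such that
`‖B_{d₀}(z)‖ < a` for `0 < |z| ≤ δ`, `Re z > −1/(2r)`, and there are
`ρ₁ ∈ (0,1/(2r))`, `c' > 0` with `Re⟨B_{d₀}(z)(x,y)|(x,y)⟩ ≥ c'(‖x‖² + ‖y‖²)` for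
`Re z > −ρ₁`, `|z| > δ`. -/
theorem stmt_10
    {H₀ : Type*} [NormedAddCommGroup H₀] [InnerProductSpace ℂ H₀]
    {H₁ : Type*} [NormedAddCommGroup H₁] [InnerProductSpace ℂ H₁]
    (r : ℝ) (hr : 0 < r) (J : H₁ →L[ℂ] H₀)
    (M₀ M₁ : ℂ → H₀ →L[ℂ] H₀) (m₀ m₁ : ℝ)
    (hm₀ : ∀ w : ℂ, r < ‖w + (r : ℂ)‖ → ‖M₀ w‖ ≤ m₀)
    (hm₁ : ∀ w : ℂ, r < ‖w + (r : ℂ)‖ → ‖M₁ w‖ ≤ m₁)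
    (H1 : ∀ ε : ℝ, 0 < ε → ∃ η : ℝ, 0 < η ∧ ∀ z : ℂ, z ≠ 0 →
      ‖z‖ < η → -(1 / (2 * r)) < z.re → ‖M₁ z⁻¹‖ ≤ ε)
    (H2 : ∀ δ' : ℝ, 0 < δ' → ∃ ρ₀ : ℝ, 0 < ρ₀ ∧ ρ₀ < 1 / (2 * r) ∧ ∃ c : ℝ, 0 < c ∧
      ∀ z : ℂ, -ρ₀ < z.re → δ' < ‖z‖ →
        ∀ x : H₀, c * ‖x‖ ^ 2 ≤ (inner ℂ (z • M₀ z⁻¹ x + M₁ z⁻¹ x) x : ℂ).re) :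
    ∀ a : ℝ, 0 < a → ∃ d₀ : ℝ, 0 < d₀ ∧ ∃ δ : ℝ, 0 < δ ∧
      -- the boundedness condition: `‖B_{d₀}(z)‖ < a` for `0 < |z| ≤ δ`, `Re z > −1/(2r)`
      (∀ z : ℂ, z ≠ 0 → ‖z‖ ≤ δ → -(1 / (2 * r)) < z.re →
        ∃ a' : ℝ, a' < a ∧ ∀ (x : H₀) (y : H₁),
          Real.sqrt (‖z • M₀ z⁻¹ x + M₁ z⁻¹ x - d₀ • M₀ z⁻¹ x
              + d₀ • ((d₀ • M₀ z⁻¹ - M₁ z⁻¹) (J y))‖ ^ 2 + ‖(z + (d₀ : ℂ)) • y‖ ^ 2)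
            ≤ a' * Real.sqrt (‖x‖ ^ 2 + ‖y‖ ^ 2)) ∧
      -- the positivity condition
      (∃ ρ₁ : ℝ, 0 < ρ₁ ∧ ρ₁ < 1 / (2 * r) ∧ ∃ c' : ℝ, 0 < c' ∧
        ∀ z : ℂ, -ρ₁ < z.re → δ < ‖z‖ → ∀ (x : H₀) (y : H₁),
          c' * (‖x‖ ^ 2 + ‖y‖ ^ 2) ≤
            (inner ℂ (z • M₀ z⁻¹ x + M₁ z⁻¹ x - d₀ • M₀ z⁻¹ x
                + d₀ • ((d₀ • M₀ z⁻¹ - M₁ z⁻¹) (J y))) x : ℂ).re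
              + (inner ℂ ((z + (d₀ : ℂ)) • y) y : ℂ).re) := by
  intro a ha
  -- m₀, m₁ are nonnegative
  have hone : r < ‖(1:ℂ) + (r : ℂ)‖ := by
    have e : ((1:ℂ) + (r:ℂ)) = (((1+r : ℝ)) : ℂ) := by push_cast; ring
    rw [e, Complex.norm_real, Real.norm_eq_abs, abs_of_pos (by linarith)]; linarith
  have hm₀0 : 0 ≤ m₀ := le_trans (norm_nonneg _) (hm₀ 1 hone)
  have hm₁0 : 0 ≤ m₁ := le_trans (norm_nonneg _) (hm₁ 1 hone)
  set K : ℝ := (m₀ + m₁) * ‖J‖ with hKdef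
  have hK0 : 0 ≤ K := by positivity
  obtain ⟨η, hη, hM1small⟩ := H1 (a/8) (by linarith)
  set δ : ℝ := min (η/2) (a/(8*(m₀+1))) with hδdef
  have hδ : 0 < δ := lt_min (by linarith) (by positivity)
  obtain ⟨ρ₀, hρ₀, hρ₀r, c, hc, hpos⟩ := H2 δ hδ
  set d₀ : ℝ := min 1 (min (a/(8*(m₀+K+1))) (c/(2*(m₀+(K+1)^2)))) with hd₀def
  have hd₀ : 0 < d₀ := lt_min one_pos (lt_min (by positivity) (by positivity))
  have hd₀1 : d₀ ≤ 1 := min_le_left _ _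
  have hδη : δ < η := lt_of_le_of_lt (min_le_left _ _) (by linarith)
  have hδa : δ * (m₀ + 1) ≤ a/8 := by
    have h : δ ≤ a/(8*(m₀+1)) := min_le_right _ _
    rw [show a/8 = (a/(8*(m₀+1))) * (m₀+1) by field_simp]
    exact mul_le_mul_of_nonneg_right h (by linarith)
  have hd₀a : d₀ * (m₀ + K + 1) ≤ a/8 := by
    have h : d₀ ≤ a/(8*(m₀+K+1)) := le_trans (min_le_right _ _) (min_le_left _ _)
    rw [show a/8 = (a/(8*(m₀+K+1))) * (m₀+K+1) by field_simp]
    exact mul_le_mul_of_nonneg_right h (by linarith)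
  have hd₀c : d₀ * (m₀ + (K+1)^2) ≤ c/2 := by
    have h : d₀ ≤ c/(2*(m₀+(K+1)^2)) := le_trans (min_le_right _ _) (min_le_right _ _)
    rw [show c/2 = (c/(2*(m₀+(K+1)^2))) * (m₀+(K+1)^2) by field_simp]
    exact mul_le_mul_of_nonneg_right h (by positivity)
  have hδ8 : δ ≤ a/8 := by nlinarith
  have hd₀8 : d₀ ≤ a/8 := by nlinarith
  refine ⟨d₀, hd₀, δ, hδ, ?_, ?_⟩
  · -- boundedness condition
    intro z hz hzδ hzre
    have hreg : r < ‖z⁻¹ + (r:ℂ)‖ := aux_region hr hz hzre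
    have hP : ‖M₀ z⁻¹‖ ≤ m₀ := hm₀ _ hreg
    have hQ : ‖M₁ z⁻¹‖ ≤ a/8 := hM1small z hz (lt_of_le_of_lt hzδ hδη) hzre
    refine ⟨5*a/8, by linarith, ?_⟩
    intro x y
    set s : ℝ := Real.sqrt (‖x‖^2 + ‖y‖^2) with hs
    have hs0 : 0 ≤ s := Real.sqrt_nonneg _
    have hxs : ‖x‖ ≤ s := by
      have h := Real.sqrt_le_sqrt (le_add_of_nonneg_right (sq_nonneg ‖y‖) :
        ‖x‖^2 ≤ ‖x‖^2 + ‖y‖^2)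
      rwa [Real.sqrt_sq (norm_nonneg x)] at h
    have hys : ‖y‖ ≤ s := by
      have h := Real.sqrt_le_sqrt (le_add_of_nonneg_left (sq_nonneg ‖x‖) :
        ‖y‖^2 ≤ ‖x‖^2 + ‖y‖^2)
      rwa [Real.sqrt_sq (norm_nonneg y)] at h
    have hPx : ‖M₀ z⁻¹ x‖ ≤ m₀ * ‖x‖ :=
      le_trans ((M₀ z⁻¹).le_opNorm x) (mul_le_mul_of_nonneg_right hP (norm_nonneg x))
    have hzPx : ‖z • M₀ z⁻¹ x‖ ≤ δ * (m₀ * ‖x‖) := by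
      rw [norm_smul]
      exact mul_le_mul hzδ hPx (norm_nonneg _) (le_of_lt hδ)
    have hQx : ‖M₁ z⁻¹ x‖ ≤ (a/8) * ‖x‖ :=
      le_trans ((M₁ z⁻¹).le_opNorm x) (mul_le_mul_of_nonneg_right hQ (norm_nonneg x))
    have hdPx : ‖d₀ • M₀ z⁻¹ x‖ ≤ d₀ * (m₀ * ‖x‖) := by
      rw [norm_smul, Real.norm_eq_abs, abs_of_pos hd₀]
      exact mul_le_mul_of_nonneg_left hPx (le_of_lt hd₀)
    have hW : ‖(d₀ • M₀ z⁻¹ - M₁ z⁻¹) (J y)‖ ≤ K * ‖y‖ := by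
      have e : (d₀ • M₀ z⁻¹ - M₁ z⁻¹) (J y) = d₀ • M₀ z⁻¹ (J y) - M₁ z⁻¹ (J y) := by
        simp [ContinuousLinearMap.sub_apply, ContinuousLinearMap.smul_apply]
      rw [e]
      have hJy : ‖J y‖ ≤ ‖J‖ * ‖y‖ := J.le_opNorm y
      have h1 : ‖d₀ • M₀ z⁻¹ (J y)‖ ≤ d₀ * (m₀ * (‖J‖ * ‖y‖)) := by
        rw [norm_smul, Real.norm_eq_abs, abs_of_pos hd₀]
        refine mul_le_mul_of_nonneg_left (le_trans ((M₀ z⁻¹).le_opNorm _) ?_) (le_of_lt hd₀)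
        calc ‖M₀ z⁻¹‖ * ‖J y‖ ≤ m₀ * ‖J y‖ :=
              mul_le_mul_of_nonneg_right hP (norm_nonneg _)
          _ ≤ m₀ * (‖J‖ * ‖y‖) := mul_le_mul_of_nonneg_left hJy hm₀0
      have h2 : ‖M₁ z⁻¹ (J y)‖ ≤ m₁ * (‖J‖ * ‖y‖) := by
        refine le_trans ((M₁ z⁻¹).le_opNorm _) ?_
        calc ‖M₁ z⁻¹‖ * ‖J y‖ ≤ m₁ * ‖J y‖ :=
              mul_le_mul_of_nonneg_right (hm₁ _ hreg) (norm_nonneg _)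
          _ ≤ m₁ * (‖J‖ * ‖y‖) := mul_le_mul_of_nonneg_left hJy hm₁0
      have h3 := norm_sub_le (d₀ • M₀ z⁻¹ (J y)) (M₁ z⁻¹ (J y))
      have h4 : 0 ≤ (1 - d₀) * (m₀ * (‖J‖ * ‖y‖)) :=
        mul_nonneg (by linarith) (by positivity)
      rw [hKdef]; linarith [h1, h2, h3, h4]
    have hdW : ‖d₀ • ((d₀ • M₀ z⁻¹ - M₁ z⁻¹) (J y))‖ ≤ d₀ * (K * ‖y‖) := by
      rw [norm_smul, Real.norm_eq_abs, abs_of_pos hd₀]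
      exact mul_le_mul_of_nonneg_left hW (le_of_lt hd₀)
    -- norm bound for the first component
    have hu : ‖z • M₀ z⁻¹ x + M₁ z⁻¹ x - d₀ • M₀ z⁻¹ x
        + d₀ • ((d₀ • M₀ z⁻¹ - M₁ z⁻¹) (J y))‖ ≤ (3*a/8) * s := by
      have step1 := norm_add_le (z • M₀ z⁻¹ x + M₁ z⁻¹ x - d₀ • M₀ z⁻¹ x)
        (d₀ • ((d₀ • M₀ z⁻¹ - M₁ z⁻¹) (J y)))
      have step2 := norm_sub_le (z • M₀ z⁻¹ x + M₁ z⁻¹ x) (d₀ • M₀ z⁻¹ x)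
      have step3 := norm_add_le (z • M₀ z⁻¹ x) (M₁ z⁻¹ x)
      have g1 : (δ*m₀) * ‖x‖ ≤ (δ*m₀) * s :=
        mul_le_mul_of_nonneg_left hxs (by positivity)
      have g2 : (a/8) * ‖x‖ ≤ (a/8) * s :=
        mul_le_mul_of_nonneg_left hxs (by linarith)
      have g3 : (d₀*m₀) * ‖x‖ ≤ (d₀*m₀) * s :=
        mul_le_mul_of_nonneg_left hxs (by positivity)
      have g4 : (d₀*K) * ‖y‖ ≤ (d₀*K) * s :=
        mul_le_mul_of_nonneg_left hys (by positivity)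
      have g5 : 0 ≤ (a/8 - δ*m₀) * s := mul_nonneg (by linarith [hδa, hδ.le]) hs0
      have g6 : 0 ≤ (a/8 - d₀*m₀ - d₀*K) * s := mul_nonneg (by linarith [hd₀a, hd₀.le]) hs0
      linarith [step1, step2, step3, hzPx, hQx, hdPx, hdW, g1, g2, g3, g4, g5, g6]
    -- norm bound for the second component
    have hv : ‖(z + (d₀:ℂ)) • y‖ ≤ (a/4) * s := by
      have e : ‖(z + (d₀:ℂ)) • y‖ = ‖z + (d₀:ℂ)‖ * ‖y‖ := by
        rw [norm_smul]
      have habs : ‖z + (d₀:ℂ)‖ ≤ δ + d₀ := by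
        refine le_trans (norm_add_le _ _) ?_
        rw [Complex.norm_real, Real.norm_eq_abs, abs_of_pos hd₀]; linarith
      have p3 : (δ + d₀) * ‖y‖ ≤ (δ + d₀) * s :=
        mul_le_mul_of_nonneg_left hys (by linarith)
      have p4 : ‖z + (d₀:ℂ)‖ * ‖y‖ ≤ (δ + d₀) * ‖y‖ :=
        mul_le_mul_of_nonneg_right habs (norm_nonneg y)
      have p5 : 0 ≤ (a/4 - (δ + d₀)) * s := mul_nonneg (by linarith) hs0
      rw [e]; linarith [p3, p4, p5]
    calc Real.sqrt (‖z • M₀ z⁻¹ x + M₁ z⁻¹ x - d₀ • M₀ z⁻¹ x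
          + d₀ • ((d₀ • M₀ z⁻¹ - M₁ z⁻¹) (J y))‖ ^ 2 + ‖(z + (d₀:ℂ)) • y‖ ^ 2)
        ≤ (3*a/8 + a/4) * s := aux_sqrt (norm_nonneg _) (norm_nonneg _) hu hv
      _ = (5*a/8) * s := by ring
  · -- positivity condition
    refine ⟨min ρ₀ (d₀/4), lt_min hρ₀ (by linarith), lt_of_le_of_lt (min_le_left _ _) hρ₀r,
      min (c/2) (d₀/2), lt_min (by linarith) (by linarith), ?_⟩
    intro z hzre hzabs x y
    have hz : z ≠ 0 := by
      intro h; rw [h] at hzabs; simp at hzabs; linarith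
    have hzρ₀ : -ρ₀ < z.re := lt_of_le_of_lt (neg_le_neg (min_le_left _ _)) hzre
    have hzd₀ : -(d₀/4) < z.re := lt_of_le_of_lt (neg_le_neg (min_le_right _ _)) hzre
    have hzre' : -(1/(2*r)) < z.re := lt_trans (by linarith) hzρ₀
    have hreg : r < ‖z⁻¹ + (r:ℂ)‖ := aux_region hr hz hzre'
    have hP : ‖M₀ z⁻¹‖ ≤ m₀ := hm₀ _ hreg
    have hQ : ‖M₁ z⁻¹‖ ≤ m₁ := hm₁ _ hreg
    have hH2z := hpos z hzρ₀ hzabs x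
    set W : H₀ := (d₀ • M₀ z⁻¹ - M₁ z⁻¹) (J y) with hWdef
    have hW : ‖W‖ ≤ K * ‖y‖ := by
      have e : W = d₀ • M₀ z⁻¹ (J y) - M₁ z⁻¹ (J y) := by
        simp [hWdef, ContinuousLinearMap.sub_apply, ContinuousLinearMap.smul_apply]
      rw [e]
      have hJy : ‖J y‖ ≤ ‖J‖ * ‖y‖ := J.le_opNorm y
      have h1 : ‖d₀ • M₀ z⁻¹ (J y)‖ ≤ d₀ * (m₀ * (‖J‖ * ‖y‖)) := by
        rw [norm_smul, Real.norm_eq_abs, abs_of_pos hd₀]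
        refine mul_le_mul_of_nonneg_left (le_trans ((M₀ z⁻¹).le_opNorm _) ?_) (le_of_lt hd₀)
        calc ‖M₀ z⁻¹‖ * ‖J y‖ ≤ m₀ * ‖J y‖ :=
              mul_le_mul_of_nonneg_right hP (norm_nonneg _)
          _ ≤ m₀ * (‖J‖ * ‖y‖) := mul_le_mul_of_nonneg_left hJy hm₀0
      have h2 : ‖M₁ z⁻¹ (J y)‖ ≤ m₁ * (‖J‖ * ‖y‖) := by
        refine le_trans ((M₁ z⁻¹).le_opNorm _) ?_
        calc ‖M₁ z⁻¹‖ * ‖J y‖ ≤ m₁ * ‖J y‖ :=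
              mul_le_mul_of_nonneg_right hQ (norm_nonneg _)
          _ ≤ m₁ * (‖J‖ * ‖y‖) := mul_le_mul_of_nonneg_left hJy hm₁0
      have h3 := norm_sub_le (d₀ • M₀ z⁻¹ (J y)) (M₁ z⁻¹ (J y))
      have h4 : 0 ≤ (1 - d₀) * (m₀ * (‖J‖ * ‖y‖)) :=
        mul_nonneg (by linarith) (by positivity)
      rw [hKdef]; linarith [h1, h2, h3, h4]
    -- decompose the real part of the first inner product
    have hdecomp : (inner ℂ (z • M₀ z⁻¹ x + M₁ z⁻¹ x - d₀ • M₀ z⁻¹ x + d₀ • W) x : ℂ).re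
        = (inner ℂ (z • M₀ z⁻¹ x + M₁ z⁻¹ x) x : ℂ).re
          - d₀ * (inner ℂ (M₀ z⁻¹ x) x : ℂ).re + d₀ * (inner ℂ W x : ℂ).re := by
      have e1 : (d₀:ℝ) • M₀ z⁻¹ x = ((d₀:ℝ):ℂ) • M₀ z⁻¹ x := (Complex.coe_smul _ _).symm
      have e2 : (d₀:ℝ) • W = ((d₀:ℝ):ℂ) • W := (Complex.coe_smul _ _).symm
      rw [e1, e2, inner_add_left, inner_sub_left, inner_smul_left, inner_smul_left,
        Complex.conj_ofReal]
      simp [Complex.add_re, Complex.sub_re, Complex.re_ofReal_mul, inner_add_left, inner_smul_left]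
      ring
    have b1 : (inner ℂ (M₀ z⁻¹ x) x : ℂ).re ≤ m₀ * (‖x‖ * ‖x‖) := by
      have h1 : (inner ℂ (M₀ z⁻¹ x) x : ℂ).re ≤ ‖(inner ℂ (M₀ z⁻¹ x) x : ℂ)‖ := by
        exact Complex.re_le_norm _
      have h2 : ‖(inner ℂ (M₀ z⁻¹ x) x : ℂ)‖ ≤ ‖M₀ z⁻¹ x‖ * ‖x‖ := norm_inner_le_norm _ _
      have h3 : ‖M₀ z⁻¹ x‖ * ‖x‖ ≤ (m₀ * ‖x‖) * ‖x‖ :=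
        mul_le_mul_of_nonneg_right (le_trans ((M₀ z⁻¹).le_opNorm x)
          (mul_le_mul_of_nonneg_right hP (norm_nonneg x))) (norm_nonneg x)
      nlinarith [h1, h2, h3]
    have b2 : -(K * ‖y‖ * ‖x‖) ≤ (inner ℂ W x : ℂ).re := by
      have habs : |(inner ℂ W x : ℂ).re| ≤ K * ‖y‖ * ‖x‖ := by
        refine le_trans (Complex.abs_re_le_norm _) ?_
        refine le_trans (norm_inner_le_norm _ _) ?_
        exact mul_le_mul_of_nonneg_right hW (norm_nonneg x)
      linarith [neg_abs_le ((inner ℂ W x : ℂ).re)]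
    have hv2 : (inner ℂ ((z + (d₀:ℂ)) • y) y : ℂ).re = (z.re + d₀) * ‖y‖^2 := by
      have hy2 : (inner ℂ y y : ℂ) = ((‖y‖^2 : ℝ) : ℂ) := by
        rw [inner_self_eq_norm_sq_to_K]; push_cast; rfl
      rw [inner_smul_left, hy2]
      simp only [Complex.mul_re, Complex.conj_re, Complex.conj_im, Complex.add_re,
        Complex.add_im, Complex.ofReal_re, Complex.ofReal_im]
      ring
    rw [hdecomp, hv2]
    exact aux_pos hd₀ (norm_nonneg x) (norm_nonneg y) hH2z b1 b2 hzd₀ hd₀c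
end

section
/- Let H be a complex Hilbert space, α > 0, and k : [0,∞) → L(H) strongly measurable with t ↦ ‖k(t)‖ measurable and |k|_{1,−α} := ∫₀^∞ e^{αt}‖k(t)‖ dt < 1. Assume k(t) is selfadjoint for a.e. t ≥ 0 and k(t)k(s) = k(s)k(t) for a.e. t, s ≥ 0. For t ∈ ℝ and ρ > −α let k̂(t−iρ) := (2π)^{−1/2}∫₀^∞ e^{−its}e^{−ρs}k(s) ds (Bochner integral), and note that 1 − √(2π) k̂(t−iρ) is invertible in L(H) since ‖√(2π) k̂(t−iρ)‖ ≤ |k|_{1,−α} < 1. Let δ > 0 and suppose there is g : (−α,∞) → [0,∞), continuous at 0 with g(0) > 0, such that ⟨t·Im k̂(t−iρ) x|x⟩ ≤ −g(ρ)‖x‖² for all x ∈ H, all t with |t| > δ, and all ρ > −α. Then there exist ρ₀ ∈ (0,α) and c > 0 such that for all t with |t| > δ, all ρ > −ρ₀, and all x ∈ H, with z = it + ρ: Re⟨z(1 − √(2π) k̂(t−iρ))^{-1}x|x⟩ ≥ c‖x‖². -/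
open MeasureTheory

variable {H : Type*} [NormedAddCommGroup H] [InnerProductSpace ℂ H] [CompleteSpace H]

/-- The operator-valued Fourier–Laplace transform
`k̂(t − iρ) = (2π)^{-1/2} ∫₀^∞ e^{−its} e^{−ρs} k(s) ds` (Bochner integral). -/
noncomputable def fourierLaplace (k : ℝ → H →L[ℂ] H) (t ρ : ℝ) : H →L[ℂ] H :=
  (Real.sqrt (2 * Real.pi))⁻¹ •
    ∫ s in Set.Ioi (0 : ℝ), Complex.exp (-(Complex.I * t * s) - ρ * s) • k s

/-- The imaginary part `Im T = (2i)⁻¹ (T − T*)` of a bounded operator. -/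
noncomputable def imPart (T : H →L[ℂ] H) : H →L[ℂ] H :=
  (2 * Complex.I)⁻¹ • (T - ContinuousLinearMap.adjoint T)

/-- inner product with imPart gives imaginary part of the inner product. -/
lemma inner_imPart (T : H →L[ℂ] H) (y : H) :
    (inner ℂ ((imPart T) y) y : ℂ) = ((inner ℂ y (T y) : ℂ).im : ℂ) := by
  have h : (inner ℂ (T y) y : ℂ) = starRingEnd ℂ (inner ℂ y (T y) : ℂ) :=
    (inner_conj_symm _ _).symm
  simp only [imPart, ContinuousLinearMap.smul_apply, ContinuousLinearMap.sub_apply,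
    inner_smul_left, inner_sub_left, ContinuousLinearMap.adjoint_inner_left, h]
  set v : ℂ := inner ℂ y (T y)
  simp [Complex.ext_iff, Complex.div_re, Complex.div_im, Complex.normSq]
  ring

set_option maxHeartbeats 2000000 in
/-- Subsection 3.2 of the paper: the material law
`M(z) = (1 − √(2π) k̂(−iz⁻¹))⁻¹` satisfies the local positivity (eq:pos_def_M_locally).
Let `k : [0,∞) → L(H)` be strongly measurable with measurable norm,
`∫₀^∞ e^{αt}‖k(t)‖ dt < 1`, `k(t)` selfadjoint a.e. and pairwise commuting a.e.
Let `δ > 0` and let `g : (−α,∞) → [0,∞)` be continuous at `0` with `g(0) > 0` such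
that `⟨t·Im k̂(t−iρ)x|x⟩ ≤ −g(ρ)‖x‖²` for `|t| > δ`, `ρ > −α`.  Then there are
`ρ₀ ∈ (0,α)` and `c > 0` such that for all `|t| > δ`, `ρ > −ρ₀`, every two-sided
inverse `S` of `1 − √(2π) k̂(t−iρ)` and all `x ∈ H`, with `z = it + ρ`:
`Re⟨z S x|x⟩ ≥ c‖x‖²`. -/
theorem stmt_11
    (α : ℝ) (hα : 0 < α)
    (k : ℝ → H →L[ℂ] H)
    (hmeas : AEStronglyMeasurable k (volume.restrict (Set.Ioi (0 : ℝ))))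
    (hnorm_meas : Measurable fun t => ‖k t‖)
    (hint : IntegrableOn (fun s => Real.exp (α * s) * ‖k s‖) (Set.Ioi (0 : ℝ)))
    (hlt1 : ∫ s in Set.Ioi (0 : ℝ), Real.exp (α * s) * ‖k s‖ < 1)
    (hsa : ∀ᵐ s ∂(volume.restrict (Set.Ioi (0 : ℝ))), IsSelfAdjoint (k s))
    (hcomm : ∀ᵐ s ∂(volume.restrict (Set.Ioi (0 : ℝ))),
      ∀ᵐ u ∂(volume.restrict (Set.Ioi (0 : ℝ))), Commute (k s) (k u))
    (δ : ℝ) (hδ : 0 < δ)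
    (g : ℝ → ℝ) (hg_nonneg : ∀ ρ : ℝ, -α < ρ → 0 ≤ g ρ)
    (hg_cont : ContinuousAt g 0) (hg_pos : 0 < g 0)
    (hIm : ∀ t ρ : ℝ, δ < |t| → -α < ρ → ∀ x : H,
      (inner ℂ ((t • imPart (fourierLaplace k t ρ)) x) x : ℂ).re ≤ -(g ρ) * ‖x‖ ^ 2) :
    ∃ ρ₀ : ℝ, 0 < ρ₀ ∧ ρ₀ < α ∧ ∃ c : ℝ, 0 < c ∧
      ∀ t ρ : ℝ, δ < |t| → -ρ₀ < ρ →
        ∀ S : H →L[ℂ] H,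
          S.comp (1 - Real.sqrt (2 * Real.pi) • fourierLaplace k t ρ) = 1 →
          (1 - Real.sqrt (2 * Real.pi) • fourierLaplace k t ρ).comp S = 1 →
          ∀ x : H,
            c * ‖x‖ ^ 2 ≤ (inner ℂ (((Complex.I * t + ρ) • S) x) x : ℂ).re := by
  have hq0 : 0 ≤ ∫ s in Set.Ioi (0 : ℝ), Real.exp (α * s) * ‖k s‖ :=
    integral_nonneg fun s => mul_nonneg (Real.exp_pos _).le (norm_nonneg _)
  have hs2 : (0 : ℝ) < Real.sqrt (2 * Real.pi) := Real.sqrt_pos.mpr (by positivity)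
  obtain ⟨q, hq_def⟩ : ∃ q : ℝ, q = ∫ s in Set.Ioi (0 : ℝ), Real.exp (α * s) * ‖k s‖ :=
    ⟨_, rfl⟩
  rw [← hq_def] at hlt1 hq0
  -- continuity of g at 0
  obtain ⟨ε, hε, hεg⟩ : ∃ ε > 0, ∀ ρ : ℝ, |ρ| < ε → g 0 / 2 ≤ g ρ := by
    obtain ⟨ε, hε, h⟩ := Metric.continuousAt_iff.mp hg_cont (g 0 / 2) (by linarith)
    refine ⟨ε, hε, fun ρ hρ => ?_⟩
    have h2 := h (x := ρ) (by simpa [Real.dist_eq] using hρ)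
    rw [Real.dist_eq] at h2
    have := abs_lt.mp h2
    linarith [this.1]
  obtain ⟨γ, hγ_def⟩ : ∃ γ : ℝ, γ = Real.sqrt (2 * Real.pi) * g 0 := ⟨_, rfl⟩
  have hγ : 0 < γ := hγ_def ▸ mul_pos hs2 hg_pos
  obtain ⟨ρ₀, hρ₀_def⟩ : ∃ ρ₀ : ℝ, ρ₀ = min (min (ε / 2) (α / 2)) (γ / 8) := ⟨_, rfl⟩
  have hρ₀pos : 0 < ρ₀ := by rw [hρ₀_def]; positivity
  have hρ₀ε : ρ₀ ≤ ε / 2 := hρ₀_def ▸ le_trans (min_le_left _ _) (min_le_left _ _)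
  have hρ₀α : ρ₀ ≤ α / 2 := hρ₀_def ▸ le_trans (min_le_left _ _) (min_le_right _ _)
  have hρ₀γ : ρ₀ ≤ γ / 8 := hρ₀_def ▸ min_le_right _ _
  obtain ⟨c', hc'_def⟩ : ∃ c' : ℝ, c' = min (γ / 4) (ε / 2 * (1 - q)) := ⟨_, rfl⟩
  have hc' : 0 < c' := by
    rw [hc'_def]; exact lt_min (by positivity) (by nlinarith)
  have hccγ : c' ≤ γ / 4 := hc'_def ▸ min_le_left _ _
  have hccε : c' ≤ ε / 2 * (1 - q) := hc'_def ▸ min_le_right _ _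
  refine ⟨ρ₀, hρ₀pos, by linarith, c' / 4, by linarith, ?_⟩
  intro t ρ ht hρ S hS1 hS2 x
  have hρα : -α < ρ := by linarith
  -- the operator B and its norm bound
  obtain ⟨B, hB_def⟩ : ∃ B : H →L[ℂ] H,
      B = Real.sqrt (2 * Real.pi) • fourierLaplace k t ρ := ⟨_, rfl⟩
  rw [← hB_def] at hS1 hS2
  have hBeq : B = ∫ s in Set.Ioi (0 : ℝ),
      Complex.exp (-(Complex.I * t * s) - ρ * s) • k s := by
    rw [hB_def, fourierLaplace, smul_smul, mul_inv_cancel₀ hs2.ne', one_smul]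
  have hBnorm : ‖B‖ ≤ q := by
    rw [hBeq, hq_def]
    refine norm_integral_le_of_norm_le hint ?_
    filter_upwards [self_mem_ae_restrict measurableSet_Ioi] with s hs
    have hs0 : (0 : ℝ) < s := hs
    rw [norm_smul]
    have he : ‖Complex.exp (-(Complex.I * t * s) - ρ * s)‖ = Real.exp (-(ρ * s)) := by
      rw [Complex.norm_exp]
      congr 1
      simp [Complex.sub_re, Complex.neg_re, Complex.mul_re]
    rw [he]
    exact mul_le_mul_of_nonneg_right (Real.exp_le_exp.mpr (by nlinarith)) (norm_nonneg _)
  -- y and its relation to x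
  obtain ⟨y, hy_def⟩ : ∃ y : H, y = S x := ⟨_, rfl⟩
  have hTy : y - B y = x := by
    have := congrArg (fun A : H →L[ℂ] H => A x) hS2
    simp only [ContinuousLinearMap.comp_apply, ContinuousLinearMap.sub_apply,
      ContinuousLinearMap.one_apply] at this
    rw [hy_def]
    exact this
  obtain ⟨w, hw_def⟩ : ∃ w : ℂ, w = inner ℂ y (B y) := ⟨_, rfl⟩
  have hBy : ‖B y‖ ≤ q * ‖y‖ := by
    calc ‖B y‖ ≤ ‖B‖ * ‖y‖ := B.le_opNorm y
    _ ≤ q * ‖y‖ := mul_le_mul_of_nonneg_right hBnorm (norm_nonneg _)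
  have hw_abs : ‖w‖ ≤ q * ‖y‖ ^ 2 := by
    rw [hw_def]
    calc ‖(inner ℂ y (B y) : ℂ)‖ ≤ ‖y‖ * ‖B y‖ := by
          exact norm_inner_le_norm _ _
    _ ≤ ‖y‖ * (q * ‖y‖) := mul_le_mul_of_nonneg_left hBy (norm_nonneg _)
    _ = q * ‖y‖ ^ 2 := by ring
  have hw_re : |w.re| ≤ q * ‖y‖ ^ 2 := le_trans (Complex.abs_re_le_norm w) hw_abs
  -- the imaginary part bound
  have him : t * w.im ≤ -(Real.sqrt (2 * Real.pi) * g ρ) * ‖y‖ ^ 2 := by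
    have h1 := hIm t ρ ht hρα y
    have h2 : (inner ℂ ((t • imPart (fourierLaplace k t ρ)) y) y : ℂ)
        = ((t * (inner ℂ y ((fourierLaplace k t ρ) y) : ℂ).im : ℝ) : ℂ) := by
      rw [ContinuousLinearMap.smul_apply, RCLike.real_smul_eq_coe_smul (K := ℂ),
        inner_smul_real_left, inner_imPart]
      push_cast
      rw [Complex.real_smul]
    rw [h2] at h1
    simp only [Complex.ofReal_re] at h1
    have h3 : w.im = Real.sqrt (2 * Real.pi) * (inner ℂ y ((fourierLaplace k t ρ) y) : ℂ).im := by
      have h4 : w = (Real.sqrt (2 * Real.pi) : ℝ) • (inner ℂ y ((fourierLaplace k t ρ) y) : ℂ) := by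
        rw [hw_def, hB_def, ContinuousLinearMap.smul_apply,
          RCLike.real_smul_eq_coe_smul (K := ℂ), inner_smul_right]
        simp [Complex.real_smul]
      rw [h4, Complex.smul_im, smul_eq_mul]
    have h5 : Real.sqrt (2 * Real.pi) * (t * (inner ℂ y ((fourierLaplace k t ρ) y) : ℂ).im)
        ≤ Real.sqrt (2 * Real.pi) * (-(g ρ) * ‖y‖ ^ 2) :=
      mul_le_mul_of_nonneg_left h1 hs2.le
    calc t * w.im
        = Real.sqrt (2 * Real.pi) * (t * (inner ℂ y ((fourierLaplace k t ρ) y) : ℂ).im) := by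
          rw [h3]; ring
    _ ≤ Real.sqrt (2 * Real.pi) * (-(g ρ) * ‖y‖ ^ 2) := h5
    _ = -(Real.sqrt (2 * Real.pi) * g ρ) * ‖y‖ ^ 2 := by ring
  -- the main value computation
  have hval : (inner ℂ (((Complex.I * t + ρ) • S) x) x : ℂ).re
      = ρ * (‖y‖ ^ 2 - w.re) - t * w.im := by
    have h1 : (((Complex.I * t + ρ) • S) x) = (Complex.I * t + ρ) • y := by
      rw [hy_def]; simp
    rw [h1, inner_smul_left]
    have h2 : (inner ℂ y x : ℂ) = (‖y‖ : ℂ) ^ 2 - w := by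
      rw [← hTy, inner_sub_right, ← hw_def, inner_self_eq_norm_sq_to_K]
      rfl
    rw [h2]
    simp only [map_add, map_mul, Complex.conj_I, Complex.conj_ofReal, Complex.mul_re,
      Complex.mul_im, Complex.add_re, Complex.add_im, Complex.sub_re, Complex.sub_im,
      Complex.I_re, Complex.I_im, Complex.ofReal_re, Complex.ofReal_im, Complex.neg_re,
      Complex.neg_im, ← Complex.ofReal_pow]
    ring
  rw [hval]
  -- norm comparison
  have hxy : ‖x‖ ≤ 2 * ‖y‖ := by
    calc ‖x‖ = ‖y - B y‖ := by rw [hTy]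
    _ ≤ ‖y‖ + ‖B y‖ := norm_sub_le _ _
    _ ≤ ‖y‖ + q * ‖y‖ := by linarith
    _ ≤ 2 * ‖y‖ := by
        have := mul_le_mul_of_nonneg_right hlt1.le (norm_nonneg y)
        linarith
  have hx2 : ‖x‖ ^ 2 ≤ 4 * ‖y‖ ^ 2 := by
    calc ‖x‖ ^ 2 ≤ (2 * ‖y‖) ^ 2 := pow_le_pow_left₀ (norm_nonneg x) hxy 2
    _ = 4 * ‖y‖ ^ 2 := by ring
  have hy2 : (0 : ℝ) ≤ ‖y‖ ^ 2 := sq_nonneg _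
  have habs := abs_le.mp hw_re
  obtain ⟨N, hN⟩ : ∃ N : ℝ, N = ‖y‖ ^ 2 := ⟨_, rfl⟩
  obtain ⟨X, hX⟩ : ∃ X : ℝ, X = ‖x‖ ^ 2 := ⟨_, rfl⟩
  obtain ⟨Wr, hWr⟩ : ∃ Wr : ℝ, Wr = w.re := ⟨_, rfl⟩
  obtain ⟨Wi, hWi⟩ : ∃ Wi : ℝ, Wi = w.im := ⟨_, rfl⟩
  simp only [← hN, ← hX, ← hWr, ← hWi] at him habs hx2 hy2 ⊢
  clear hIm hmeas hnorm_meas hint hsa hcomm hS1 hS2 hBeq hBnorm hB_def hy_def hw_def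
  clear hw_abs hw_re hval hg_cont hq_def hTy hBy hxy hN hX hWr hWi hρ₀_def hc'_def
  clear S x y w B k
  -- case analysis
  have hqN : q * N ≤ N := by
    have := mul_le_mul_of_nonneg_right hlt1.le hy2
    linarith
  rcases lt_or_ge ρ (ε / 2) with hcase | hcase
  · -- ρ ∈ (-ρ₀, ε/2): g ρ ≥ g 0 / 2
    have hgρ : g 0 / 2 ≤ g ρ := hεg ρ (abs_lt.mpr ⟨by linarith, by linarith⟩)
    have h1 : -(Real.sqrt (2 * Real.pi) * g ρ) * N ≤ -(γ / 2) * N := by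
      have hh : γ / 2 ≤ Real.sqrt (2 * Real.pi) * g ρ := by
        rw [hγ_def]
        nlinarith [mul_le_mul_of_nonneg_left hgρ hs2.le]
      have := mul_le_mul_of_nonneg_right hh hy2
      linarith
    have h2 : -(2 * ρ₀) * N ≤ ρ * (N - Wr) := by
      rcases le_or_gt 0 ρ with hρ0 | hρ0
      · have ha : (0:ℝ) ≤ N - Wr := by linarith [habs.2]
        have hb := mul_nonneg hρ0 ha
        have hc := mul_nonneg hρ₀pos.le hy2
        linarith
      · have ha : N - Wr ≤ 2 * N := by linarith [habs.1]
        have hb := mul_le_mul_of_nonpos_left ha hρ0.le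
        have hc : (-ρ₀) * (2 * N) ≤ ρ * (2 * N) :=
          mul_le_mul_of_nonneg_right (by linarith) (by linarith)
        linarith
    have h3 : (0:ℝ) ≤ (γ / 8 - ρ₀) * N := mul_nonneg (by linarith) hy2
    have h4 : (0:ℝ) ≤ (γ / 4 - c') * N := mul_nonneg (by linarith) hy2
    have h5 : (0:ℝ) ≤ c' * (4 * N - X) := mul_nonneg hc'.le (by linarith)
    linarith
  · -- ρ ≥ ε/2
    have hgρ : 0 ≤ g ρ := hg_nonneg ρ hρα
    have h1 : -(Real.sqrt (2 * Real.pi) * g ρ) * N ≤ 0 := by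
      nlinarith [mul_nonneg (mul_nonneg hs2.le hgρ) hy2]
    have h2 : ε / 2 * (1 - q) * N ≤ ρ * (N - Wr) := by
      have ha : (1 - q) * N ≤ N - Wr := by linarith [habs.2]
      have hb : (0:ℝ) ≤ N - Wr := by linarith [habs.2]
      have hc := mul_le_mul_of_nonneg_right hcase hb
      have hd := mul_le_mul_of_nonneg_left ha (by linarith : (0:ℝ) ≤ ε / 2)
      linarith
    have h3 : (0:ℝ) ≤ (ε / 2 * (1 - q) - c') * N := mul_nonneg (by linarith) hy2
    have h4 : (0:ℝ) ≤ c' * (4 * N - X) := mul_nonneg hc'.le (by linarith)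
    linarith
end

section
/- Let k : ℝ → ℝ satisfy: k(s) ≥ 0 for s ≥ 0, k is locally absolutely continuous on [0,∞) with a.e. derivative k', k(0) > 0, ∫₀^∞ k(s) ds < 1, and k'(s) ≤ −α₀ k(s) for a.e. s ≥ 0, for some α₀ > 0. Fix α with 0 < α < α₀. Then for every t > 0: ∫₀^∞ sin(ts) e^{αs} k(s) ds ≥ ((α₀ − α)/t)·∫₀^∞ (1 − cos(ts)) k(s) e^{αs} ds, and moreover ∫₀^∞ sin(ts) e^{αs} k(s) ds > 0. -/
open MeasureTheory Set Filter
open scoped ENNReal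

section stmt14aux
variable {k k' : ℝ → ℝ} {α₀ α : ℝ}

lemma stmt14_diff (hk'_int : ∀ s : ℝ, 0 ≤ s → IntervalIntegrable k' volume 0 s)
    (hk_ac : ∀ s : ℝ, 0 ≤ s → k s = k 0 + ∫ u in (0 : ℝ)..s, k' u)
    {a b : ℝ} (ha : 0 ≤ a) (hab : a ≤ b) :
    k b - k a = ∫ u in a..b, k' u := by
  have hb : 0 ≤ b := ha.trans hab
  rw [hk_ac a ha, hk_ac b hb]
  have h1 : IntervalIntegrable k' volume 0 a := hk'_int a ha
  have h2 : IntervalIntegrable k' volume 0 b := hk'_int b hb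
  have := intervalIntegral.integral_interval_sub_left h2 h1
  linarith [this]

lemma stmt14_int_ab (hk'_int : ∀ s : ℝ, 0 ≤ s → IntervalIntegrable k' volume 0 s)
    {a b : ℝ} (ha : 0 ≤ a) (hab : a ≤ b) :
    IntervalIntegrable k' volume a b := by
  apply (hk'_int b (ha.trans hab)).mono_set
  rw [uIcc_of_le hab, uIcc_of_le (ha.trans hab)]
  exact Icc_subset_Icc ha le_rfl

lemma stmt14_kp_ae (hα₀ : 0 < α₀) (hk_nonneg : ∀ s : ℝ, 0 ≤ s → 0 ≤ k s)
    (hk' : ∀ᵐ s : ℝ, 0 ≤ s → k' s ≤ -α₀ * k s) :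
    ∀ᵐ s : ℝ, 0 ≤ s → k' s ≤ 0 := by
  filter_upwards [hk'] with s hs h0s
  have := hs h0s
  nlinarith [hk_nonneg s h0s]

lemma stmt14_anti (hα₀ : 0 < α₀) (hk_nonneg : ∀ s : ℝ, 0 ≤ s → 0 ≤ k s)
    (hk'_int : ∀ s : ℝ, 0 ≤ s → IntervalIntegrable k' volume 0 s)
    (hk_ac : ∀ s : ℝ, 0 ≤ s → k s = k 0 + ∫ u in (0 : ℝ)..s, k' u)
    (hk' : ∀ᵐ s : ℝ, 0 ≤ s → k' s ≤ -α₀ * k s)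
    {a b : ℝ} (ha : 0 ≤ a) (hab : a ≤ b) :
    k b ≤ k a := by
  have hd := stmt14_diff hk'_int hk_ac ha hab
  have hmono : (∫ u in a..b, k' u) ≤ ∫ u in a..b, (0:ℝ) := by
    apply intervalIntegral.integral_mono_ae_restrict hab (stmt14_int_ab hk'_int ha hab)
      intervalIntegrable_const
    have h := stmt14_kp_ae hα₀ hk_nonneg hk'
    rw [EventuallyLE, ae_restrict_iff' measurableSet_Icc]
    filter_upwards [h] with s hs hmem
    exact hs (ha.trans hmem.1)
  simp only [intervalIntegral.integral_zero] at hmono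
  linarith

lemma stmt14_step (hα₀ : 0 < α₀) (hk_nonneg : ∀ s : ℝ, 0 ≤ s → 0 ≤ k s)
    (hk'_int : ∀ s : ℝ, 0 ≤ s → IntervalIntegrable k' volume 0 s)
    (hk_ac : ∀ s : ℝ, 0 ≤ s → k s = k 0 + ∫ u in (0 : ℝ)..s, k' u)
    (hk' : ∀ᵐ s : ℝ, 0 ≤ s → k' s ≤ -α₀ * k s)
    {a b : ℝ} (ha : 0 ≤ a) (hab : a ≤ b) :
    k b * (1 + α₀ * (b - a)) ≤ k a := by
  have hd := stmt14_diff hk'_int hk_ac ha hab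
  have hk_intab : IntervalIntegrable k volume a b := by
    apply AntitoneOn.intervalIntegrable
    rw [uIcc_of_le hab]
    intro x hx y hy hxy
    exact stmt14_anti hα₀ hk_nonneg hk'_int hk_ac hk' (ha.trans hx.1) hxy
  -- ∫ k' ≤ ∫ (-α₀ k)
  have h1 : (∫ u in a..b, k' u) ≤ ∫ u in a..b, -α₀ * k u := by
    apply intervalIntegral.integral_mono_ae_restrict hab (stmt14_int_ab hk'_int ha hab)
      (hk_intab.const_mul _)
    rw [EventuallyLE, ae_restrict_iff' measurableSet_Icc]
    filter_upwards [hk'] with s hs hmem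
    exact hs (ha.trans hmem.1)
  -- ∫ k ≥ (b-a) * k b
  have h2 : (b - a) * k b ≤ ∫ u in a..b, k u := by
    have : (∫ u in a..b, k b) ≤ ∫ u in a..b, k u := by
      apply intervalIntegral.integral_mono_on hab intervalIntegrable_const hk_intab
      intro x hx
      exact stmt14_anti hα₀ hk_nonneg hk'_int hk_ac hk' (ha.trans hx.1) hx.2
    simpa [smul_eq_mul] using this
  have h3 : (∫ u in a..b, -α₀ * k u) = -α₀ * ∫ u in a..b, k u := by
    simp [intervalIntegral.integral_const_mul]
  have hkb : 0 ≤ k b := hk_nonneg b (ha.trans hab)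
  nlinarith [h1, h2, hd]

lemma stmt14_decay (hα₀ : 0 < α₀) (hk_nonneg : ∀ s : ℝ, 0 ≤ s → 0 ≤ k s)
    (hk'_int : ∀ s : ℝ, 0 ≤ s → IntervalIntegrable k' volume 0 s)
    (hk_ac : ∀ s : ℝ, 0 ≤ s → k s = k 0 + ∫ u in (0 : ℝ)..s, k' u)
    (hk' : ∀ᵐ s : ℝ, 0 ≤ s → k' s ≤ -α₀ * k s)
    {s : ℝ} (hs : 0 ≤ s) :
    k s ≤ k 0 * Real.exp (-α₀ * s) := by
  -- for each n ≥ 1 : k s * (1 + α₀ * s / n) ^ n ≤ k 0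
  have key : ∀ n : ℕ, 0 < n → k s * (1 + α₀ * s / n) ^ n ≤ k 0 := by
    intro n hn
    set d : ℝ := s / n with hd
    have hd0 : 0 ≤ d := by positivity
    have main : ∀ j : ℕ, j ≤ n → k (j * d) * (1 + α₀ * d) ^ j ≤ k 0 := by
      intro j hj
      induction j with
      | zero => simp
      | succ i ih =>
        have hi : i ≤ n := le_of_lt (Nat.lt_of_succ_le hj)
        have h1 : k ((i + 1 : ℕ) * d) * (1 + α₀ * (((i + 1 : ℕ) * d) - i * d)) ≤ k (i * d) := by
          apply stmt14_step hα₀ hk_nonneg hk'_int hk_ac hk' (by positivity)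
          push_cast
          nlinarith
        have he : ((i + 1 : ℕ) : ℝ) * d - i * d = d := by push_cast; ring
        rw [he] at h1
        have hpos : (0:ℝ) ≤ (1 + α₀ * d) ^ i := by positivity
        have h2 : k ((i+1 : ℕ) * d) * (1 + α₀ * d) ^ (i+1) ≤ k (i * d) * (1 + α₀ * d) ^ i := by
          calc k ((i+1 : ℕ) * d) * (1 + α₀ * d) ^ (i+1)
              = (k ((i+1 : ℕ) * d) * (1 + α₀ * d)) * (1 + α₀ * d) ^ i := by ring
            _ ≤ k (i * d) * (1 + α₀ * d) ^ i := by
                apply mul_le_mul_of_nonneg_right h1 hpos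
        exact h2.trans (ih hi)
    have := main n le_rfl
    have hnd : (n : ℝ) * d = s := by
      rw [hd]; field_simp [(Nat.cast_pos.mpr hn).ne']
    rw [hnd] at this
    convert this using 3
    rw [hd]; ring
  -- take limit
  have hlim : Tendsto (fun n : ℕ => k s * (1 + α₀ * s / n) ^ n) atTop
      (nhds (k s * Real.exp (α₀ * s))) := by
    exact (Real.tendsto_one_add_div_pow_exp (α₀ * s)).const_mul _
  have hle : k s * Real.exp (α₀ * s) ≤ k 0 := by
    apply le_of_tendsto hlim
    filter_upwards [eventually_gt_atTop 0] with n hn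
    exact key n hn
  have hexp : 0 < Real.exp (α₀ * s) := Real.exp_pos _
  rw [neg_mul, Real.exp_neg]
  rw [← sub_nonneg] at hle ⊢
  have heq : k 0 * (Real.exp (α₀ * s))⁻¹ - k s = (k 0 - k s * Real.exp (α₀ * s)) * (Real.exp (α₀ * s))⁻¹ := by
    field_simp
  rw [heq]
  positivity

lemma stmt14_cont (hk'_int : ∀ s : ℝ, 0 ≤ s → IntervalIntegrable k' volume 0 s)
    (hk_ac : ∀ s : ℝ, 0 ≤ s → k s = k 0 + ∫ u in (0 : ℝ)..s, k' u) :
    ContinuousOn k (Ici 0) := by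
  intro x hx
  have hx0 : (0:ℝ) ≤ x := hx
  have hIcc : ContinuousOn k (Icc 0 (x+1)) := by
    have h1 : ContinuousOn (fun b => k 0 + ∫ u in (0:ℝ)..b, k' u) (Icc 0 (x+1)) := by
      apply ContinuousOn.add continuousOn_const
      have := intervalIntegral.continuousOn_primitive_interval'
        (hk'_int (x+1) (by linarith)) (Set.left_mem_uIcc (a := (0:ℝ)) (b := x+1))
      rwa [uIcc_of_le (by linarith : (0:ℝ) ≤ x+1)] at this
    exact h1.congr (fun s hs => hk_ac s hs.1)
  have hmem : Icc 0 (x+1) ∈ nhdsWithin x (Ici 0) := by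
    apply mem_nhdsWithin.mpr
    exact ⟨Iio (x+1), isOpen_Iio, by simp, fun y hy => ⟨hy.2, le_of_lt hy.1⟩⟩
  exact (hIcc x ⟨hx0, by linarith⟩).mono_of_mem_nhdsWithin hmem

lemma stmt14_integrable (hα₀ : 0 < α₀) (hk_nonneg : ∀ s : ℝ, 0 ≤ s → 0 ≤ k s)
    (hk'_int : ∀ s : ℝ, 0 ≤ s → IntervalIntegrable k' volume 0 s)
    (hk_ac : ∀ s : ℝ, 0 ≤ s → k s = k 0 + ∫ u in (0 : ℝ)..s, k' u)
    (hk' : ∀ᵐ s : ℝ, 0 ≤ s → k' s ≤ -α₀ * k s) (hαα₀ : α < α₀)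
    {φ : ℝ → ℝ} {C : ℝ} (hφ : Continuous φ)
    (hφb : ∀ s : ℝ, 0 ≤ s → |φ s| ≤ C * Real.exp (α * s)) :
    IntegrableOn (fun s => φ s * k s) (Ioi 0) := by
  have hg : IntegrableOn (fun s => (C * k 0) * Real.exp (-(α₀ - α) * s)) (Ioi 0) :=
    (exp_neg_integrableOn_Ioi 0 (by linarith)).const_mul _
  apply Integrable.mono hg
  · exact (hφ.continuousOn.mul
      ((stmt14_cont hk'_int hk_ac).mono Ioi_subset_Ici_self)).aestronglyMeasurable
      measurableSet_Ioi
  · rw [ae_restrict_iff' measurableSet_Ioi]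
    filter_upwards with s hs
    have hs0 : (0:ℝ) ≤ s := le_of_lt hs
    have h1 : 0 ≤ k s := hk_nonneg s hs0
    have h2 : k s ≤ k 0 * Real.exp (-α₀ * s) := stmt14_decay hα₀ hk_nonneg hk'_int hk_ac hk' hs0
    have h3 : |φ s| ≤ C * Real.exp (α * s) := hφb s hs0
    rw [Real.norm_eq_abs, Real.norm_eq_abs, abs_mul]
    have hC : 0 ≤ C * Real.exp (α * s) := le_trans (abs_nonneg _) h3
    have key : |φ s| * |k s| ≤ (C * Real.exp (α * s)) * (k 0 * Real.exp (-α₀ * s)) := by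
      rw [abs_of_nonneg h1]
      exact mul_le_mul h3 h2 h1 hC
    apply key.trans
    have hCk : 0 ≤ C := by
      have h := hφb 0 le_rfl
      rw [mul_zero, Real.exp_zero, mul_one] at h
      exact le_trans (abs_nonneg _) h
    have hk00 : 0 ≤ k 0 := hk_nonneg 0 le_rfl
    rw [abs_of_nonneg (by positivity)]
    rw [show -(α₀ - α) * s = α * s + -α₀ * s by ring, Real.exp_add]
    apply le_of_eq; ring

lemma stmt14_k'_integrableOn (hα₀ : 0 < α₀) (hk_nonneg : ∀ s : ℝ, 0 ≤ s → 0 ≤ k s)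
    (hk'_int : ∀ s : ℝ, 0 ≤ s → IntervalIntegrable k' volume 0 s)
    (hk_ac : ∀ s : ℝ, 0 ≤ s → k s = k 0 + ∫ u in (0 : ℝ)..s, k' u)
    (hk' : ∀ᵐ s : ℝ, 0 ≤ s → k' s ≤ -α₀ * k s)
    {a : ℝ} (ha : 0 ≤ a) : IntegrableOn k' (Ioi a) := by
  have habn : ∀ n : ℕ, a ≤ a + n := fun n => le_add_of_nonneg_right (Nat.cast_nonneg n)
  apply integrableOn_Ioi_of_intervalIntegral_norm_bounded (k a) a
    (b := fun n : ℕ => a + n) (l := atTop)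
  · intro n
    exact (intervalIntegrable_iff_integrableOn_Ioc_of_le (habn n)).mp
      (stmt14_int_ab hk'_int ha (habn n))
  · exact tendsto_atTop_add_const_left atTop a tendsto_natCast_atTop_atTop
  · filter_upwards with n
    have hnorm : (∫ x in a..(a + n), ‖k' x‖) = ∫ x in a..(a+n), -k' x := by
      apply intervalIntegral.integral_congr_ae
      filter_upwards [stmt14_kp_ae hα₀ hk_nonneg hk'] with x hx hmem
      rw [uIoc_of_le (habn n)] at hmem
      rw [Real.norm_eq_abs, abs_of_nonpos (hx (le_of_lt (lt_of_le_of_lt ha hmem.1)))]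
    rw [hnorm, intervalIntegral.integral_neg]
    have := stmt14_diff hk'_int hk_ac ha (habn n)
    have h0 : 0 ≤ k (a + n) := hk_nonneg _ (ha.trans (habn n))
    linarith

lemma stmt14_tendsto_zero (hα₀ : 0 < α₀) (hk_nonneg : ∀ s : ℝ, 0 ≤ s → 0 ≤ k s)
    (hk'_int : ∀ s : ℝ, 0 ≤ s → IntervalIntegrable k' volume 0 s)
    (hk_ac : ∀ s : ℝ, 0 ≤ s → k s = k 0 + ∫ u in (0 : ℝ)..s, k' u)
    (hk' : ∀ᵐ s : ℝ, 0 ≤ s → k' s ≤ -α₀ * k s) :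
    Tendsto k atTop (nhds 0) := by
  have h1 : Tendsto (fun s => k 0 * Real.exp (-α₀ * s)) atTop (nhds 0) := by
    have h2 : Tendsto (fun s : ℝ => Real.exp (-α₀ * s)) atTop (nhds 0) := by
      apply Real.tendsto_exp_atBot.comp
      exact Tendsto.const_mul_atTop_of_neg (by linarith : -α₀ < 0) tendsto_id
    simpa using h2.const_mul (k 0)
  apply squeeze_zero' (g := fun s => k 0 * Real.exp (-α₀ * s))
  · filter_upwards [eventually_ge_atTop (0:ℝ)] with s hs; exact hk_nonneg s hs
  · filter_upwards [eventually_ge_atTop (0:ℝ)] with s hs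
    exact stmt14_decay hα₀ hk_nonneg hk'_int hk_ac hk' hs
  · exact h1

lemma stmt14_rep (hα₀ : 0 < α₀) (hk_nonneg : ∀ s : ℝ, 0 ≤ s → 0 ≤ k s)
    (hk'_int : ∀ s : ℝ, 0 ≤ s → IntervalIntegrable k' volume 0 s)
    (hk_ac : ∀ s : ℝ, 0 ≤ s → k s = k 0 + ∫ u in (0 : ℝ)..s, k' u)
    (hk' : ∀ᵐ s : ℝ, 0 ≤ s → k' s ≤ -α₀ * k s)
    {u : ℝ} (hu : 0 ≤ u) : (∫ x in Ioi u, (-k' x)) = k u := by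
  have hint : IntegrableOn (fun x => -k' x) (Ioi u) :=
    (stmt14_k'_integrableOn hα₀ hk_nonneg hk'_int hk_ac hk' hu).neg
  have h1 : Tendsto (fun T => ∫ x in u..T, -k' x) atTop (nhds (∫ x in Ioi u, -k' x)) :=
    intervalIntegral_tendsto_integral_Ioi u hint tendsto_id
  have h2 : Tendsto (fun T => ∫ x in u..T, -k' x) atTop (nhds (k u)) := by
    have heq : ∀ᶠ T in atTop, (∫ x in u..T, -k' x) = k u - k T := by
      filter_upwards [eventually_ge_atTop u] with T hT
      rw [intervalIntegral.integral_neg, ← stmt14_diff hk'_int hk_ac hu hT]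
      ring
    rw [show nhds (k u) = nhds (k u - 0) by rw [sub_zero]]
    apply Tendsto.congr' (EventuallyEq.symm heq)
    exact tendsto_const_nhds.sub (stmt14_tendsto_zero hα₀ hk_nonneg hk'_int hk_ac hk')
  exact tendsto_nhds_unique h1 h2

lemma stmt14_fubini (hk'_meas : Measurable k') (hα₀ : 0 < α₀)
    (hk_nonneg : ∀ s : ℝ, 0 ≤ s → 0 ≤ k s)
    (hk'_int : ∀ s : ℝ, 0 ≤ s → IntervalIntegrable k' volume 0 s)
    (hk_ac : ∀ s : ℝ, 0 ≤ s → k s = k 0 + ∫ u in (0 : ℝ)..s, k' u)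
    (hk' : ∀ᵐ s : ℝ, 0 ≤ s → k' s ≤ -α₀ * k s) (hαα₀ : α < α₀)
    {φ : ℝ → ℝ} {C : ℝ} (hφ : Continuous φ) (hφ0 : ∀ s, 0 ≤ φ s)
    (hφb : ∀ s : ℝ, 0 ≤ s → φ s ≤ C * Real.exp (α * s)) :
    IntegrableOn (fun u => (-k' u) * ∫ s in (0:ℝ)..u, φ s) (Ioi 0) ∧
    (∫ s in Ioi 0, φ s * k s) = ∫ u in Ioi 0, (-k' u) * ∫ s in (0:ℝ)..u, φ s := by
  set P : ℝ → ℝ := fun u => ∫ s in (0:ℝ)..u, φ s with hP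
  have hPcont : Continuous P :=
    intervalIntegral.continuous_primitive (fun a b => hφ.intervalIntegrable a b) 0
  have hPnn : ∀ u : ℝ, 0 ≤ u → 0 ≤ P u := fun u hu =>
    intervalIntegral.integral_nonneg hu (fun x _ => hφ0 x)
  set F : ℝ → ℝ≥0∞ := fun s => ENNReal.ofReal (φ s) with hF
  set G : ℝ → ℝ≥0∞ := fun u => ENNReal.ofReal (-k' u) with hG
  have hFmeas : Measurable F := ENNReal.measurable_ofReal.comp hφ.measurable
  have hGmeas : Measurable G := ENNReal.measurable_ofReal.comp hk'_meas.neg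
  -- a.e. nonnegativity of -k'
  have hknn0 : ∀ᵐ u : ℝ, 0 < u → 0 ≤ -k' u := by
    filter_upwards [hk'] with u hu hmem
    have h2 := hu hmem.le
    have h3 := hk_nonneg u hmem.le
    nlinarith
  have hknn : ∀ a : ℝ, 0 ≤ a → (0 : ℝ → ℝ) ≤ᵐ[volume.restrict (Ioi a)] fun u => -k' u := by
    intro a ha
    rw [EventuallyLE, ae_restrict_iff' measurableSet_Ioi]
    filter_upwards [hknn0] with u hu hmem
    exact hu (lt_of_le_of_lt ha hmem)
  -- Step A : representation of ofReal (k s)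
  have hrep : ∀ s : ℝ, 0 < s → ENNReal.ofReal (k s) = ∫⁻ u in Ioi s, G u := by
    intro s hs
    rw [← stmt14_rep hα₀ hk_nonneg hk'_int hk_ac hk' hs.le]
    exact ofReal_integral_eq_lintegral_ofReal
      (stmt14_k'_integrableOn hα₀ hk_nonneg hk'_int hk_ac hk' hs.le).neg (hknn s hs.le)
  -- the product kernel
  set S : Set (ℝ × ℝ) := {p : ℝ × ℝ | 0 < p.1 ∧ p.1 < p.2} with hS
  have hSmeas : MeasurableSet S :=
    (measurableSet_lt measurable_const measurable_fst).inter
      (measurableSet_lt measurable_fst measurable_snd)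
  set f : ℝ → ℝ → ℝ≥0∞ := fun s u => S.indicator (fun _ => (1:ℝ≥0∞)) (s, u) * (F s * G u)
    with hf
  have hfmeas : AEMeasurable (Function.uncurry f) ((volume : Measure ℝ).prod volume) := by
    apply Measurable.aemeasurable
    have : Function.uncurry f = fun p : ℝ × ℝ =>
        S.indicator (fun _ => (1:ℝ≥0∞)) p * (F p.1 * G p.2) := rfl
    rw [this]
    exact ((measurable_const.indicator hSmeas)).mul
      ((hFmeas.comp measurable_fst).mul (hGmeas.comp measurable_snd))
  -- Claim 1
  have claim1 : ∀ s : ℝ, (∫⁻ u, f s u) =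
      (Ioi (0:ℝ)).indicator (fun s => F s * ENNReal.ofReal (k s)) s := by
    intro s
    by_cases hs : 0 < s
    · have heq : (fun u => f s u) = (Ioi s).indicator (fun u => F s * G u) := by
        funext u
        by_cases hu : s < u
        · simp [hf, indicator_of_mem, hS, hs, hu, Set.mem_setOf_eq,
            Set.mem_Ioi, one_mul]
        · simp [hf, hS, hs, hu, Set.mem_setOf_eq, Set.mem_Ioi]
      rw [heq, lintegral_indicator measurableSet_Ioi,
        lintegral_const_mul' _ _ ENNReal.ofReal_ne_top, ← hrep s hs,
        indicator_of_mem (Set.mem_Ioi.mpr hs)]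
    · have heq : (fun u => f s u) = fun _ => 0 := by
        funext u
        simp [hf, hS, hs, Set.mem_setOf_eq]
      rw [heq, lintegral_const 0, zero_mul, indicator_of_notMem (by simpa using hs)]
  -- Claim 2
  have claim2 : ∀ u : ℝ, (∫⁻ s, f s u) =
      (Ioi (0:ℝ)).indicator (fun u => G u * ENNReal.ofReal (P u)) u := by
    intro u
    by_cases hu : 0 < u
    · have heq : (fun s => f s u) = (Ioo 0 u).indicator (fun s => F s * G u) := by
        funext s
        by_cases hs : 0 < s ∧ s < u
        · simp [hf, hS, hs.1, hs.2, Set.mem_setOf_eq, Set.mem_Ioo]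
        · rw [Set.indicator_of_notMem (by simpa [Set.mem_Ioo] using hs)]
          have : (s, u) ∉ S := by simpa [hS, Set.mem_setOf_eq] using hs
          simp [hf, Set.indicator_of_notMem this]
      rw [heq, lintegral_indicator measurableSet_Ioo,
        lintegral_mul_const' _ _ ENNReal.ofReal_ne_top]
      have hil : ∫⁻ s in Ioo 0 u, F s = ENNReal.ofReal (P u) := by
        have hint : IntegrableOn φ (Ioo 0 u) := by
          apply ((intervalIntegrable_iff_integrableOn_Ioc_of_le hu.le).mp
            (hφ.intervalIntegrable 0 u)).mono_set Ioo_subset_Ioc_self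
        rw [← ofReal_integral_eq_lintegral_ofReal hint
          (ae_of_all _ (fun x => hφ0 x))]
        congr 1
        show (∫ x in Ioo 0 u, φ x) = ∫ s in (0:ℝ)..u, φ s
        rw [intervalIntegral.integral_of_le hu.le, integral_Ioc_eq_integral_Ioo]
      rw [hil, indicator_of_mem (Set.mem_Ioi.mpr hu), mul_comm]
    · have heq : (fun s => f s u) = fun _ => 0 := by
        funext s
        have : (s, u) ∉ S := by
          simp only [hS, Set.mem_setOf_eq, not_and]
          intro h1; intro h2; exact hu (h1.trans h2)
        simp [hf, Set.indicator_of_notMem this]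
      rw [heq, lintegral_const 0, zero_mul, indicator_of_notMem (by simpa using hu)]
  -- the main lintegral identity
  have hint_lhs : IntegrableOn (fun s => φ s * k s) (Ioi 0) := by
    apply stmt14_integrable hα₀ hk_nonneg hk'_int hk_ac hk' hαα₀ hφ
    intro s hs; rw [abs_of_nonneg (hφ0 s)]; exact hφb s hs
  have hlhs_nn : (0 : ℝ → ℝ) ≤ᵐ[volume.restrict (Ioi 0)] fun s => φ s * k s := by
    rw [EventuallyLE, ae_restrict_iff' measurableSet_Ioi]
    filter_upwards with s hs
    exact mul_nonneg (hφ0 s) (hk_nonneg s hs.le)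
  have key : ENNReal.ofReal (∫ s in Ioi 0, φ s * k s)
      = ∫⁻ u in Ioi 0, G u * ENNReal.ofReal (P u) := by
    rw [ofReal_integral_eq_lintegral_ofReal hint_lhs hlhs_nn]
    calc ∫⁻ s in Ioi 0, ENNReal.ofReal (φ s * k s)
        = ∫⁻ s in Ioi 0, F s * ENNReal.ofReal (k s) := by
          apply lintegral_congr; intro s; exact ENNReal.ofReal_mul (hφ0 s)
      _ = ∫⁻ s, (Ioi (0:ℝ)).indicator (fun s => F s * ENNReal.ofReal (k s)) s := by
          rw [lintegral_indicator measurableSet_Ioi]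
      _ = ∫⁻ s, ∫⁻ u, f s u := by apply lintegral_congr; intro s; rw [claim1 s]
      _ = ∫⁻ u, ∫⁻ s, f s u := lintegral_lintegral_swap hfmeas
      _ = ∫⁻ u, (Ioi (0:ℝ)).indicator (fun u => G u * ENNReal.ofReal (P u)) u := by
          apply lintegral_congr; intro u; rw [claim2 u]
      _ = ∫⁻ u in Ioi 0, G u * ENNReal.ofReal (P u) := by
          rw [lintegral_indicator measurableSet_Ioi]
  -- RHS a.e. nonneg and pointwise ofReal-mul identity
  have hrhs_nn : (0 : ℝ → ℝ) ≤ᵐ[volume.restrict (Ioi 0)] fun u => (-k' u) * P u := by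
    rw [EventuallyLE, ae_restrict_iff' measurableSet_Ioi]
    filter_upwards [hknn0] with u hu hmem
    simp only [Pi.zero_apply]
    exact mul_nonneg (hu hmem) (hPnn u hmem.le)
  have hcongr : ∀ᵐ u ∂(volume.restrict (Ioi 0)),
      ENNReal.ofReal ((-k' u) * P u) = G u * ENNReal.ofReal (P u) := by
    rw [ae_restrict_iff' measurableSet_Ioi]
    filter_upwards [hknn0] with u hu hmem
    exact ENNReal.ofReal_mul (hu hmem)
  have hmeasRHS : AEStronglyMeasurable (fun u => (-k' u) * P u) (volume.restrict (Ioi 0)) :=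
    ((hk'_meas.neg.mul hPcont.measurable)).aestronglyMeasurable
  have hfin : HasFiniteIntegral (fun u => (-k' u) * P u) (volume.restrict (Ioi 0)) := by
    rw [hasFiniteIntegral_iff_ofReal hrhs_nn]
    have h1 : (∫⁻ u in Ioi 0, ENNReal.ofReal ((-k' u) * P u)) =
        ∫⁻ u in Ioi 0, G u * ENNReal.ofReal (P u) := lintegral_congr_ae hcongr
    rw [h1, ← key]
    exact ENNReal.ofReal_lt_top
  have hintRHS : IntegrableOn (fun u => (-k' u) * P u) (Ioi 0) := ⟨hmeasRHS, hfin⟩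
  refine ⟨hintRHS, ?_⟩
  have h2 : ENNReal.ofReal (∫ u in Ioi 0, (-k' u) * P u) =
      ∫⁻ u in Ioi 0, G u * ENNReal.ofReal (P u) := by
    rw [ofReal_integral_eq_lintegral_ofReal hintRHS hrhs_nn]
    exact lintegral_congr_ae hcongr
  have h3 := key.trans h2.symm
  have lhs_nn : 0 ≤ ∫ s in Ioi 0, φ s * k s := integral_nonneg_of_ae hlhs_nn
  have rhs_nn : 0 ≤ ∫ u in Ioi 0, (-k' u) * P u := integral_nonneg_of_ae hrhs_nn
  exact (ENNReal.ofReal_eq_ofReal_iff lhs_nn rhs_nn).mp h3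

lemma stmt14_ftc (t α : ℝ) (u : ℝ) :
    t * (∫ s in (0:ℝ)..u, Real.sin (t*s) * Real.exp (α*s))
      + α * (∫ s in (0:ℝ)..u, (1 - Real.cos (t*s)) * Real.exp (α*s))
    = (1 - Real.cos (t*u)) * Real.exp (α*u) := by
  have hderiv : ∀ s : ℝ, HasDerivAt (fun s => (1 - Real.cos (t*s)) * Real.exp (α*s))
      (t * (Real.sin (t*s) * Real.exp (α*s)) + α * ((1 - Real.cos (t*s)) * Real.exp (α*s))) s := by
    intro s
    have hts : HasDerivAt (fun s : ℝ => t * s) t s := by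
      simpa using (hasDerivAt_id s).const_mul t
    have hαs : HasDerivAt (fun s : ℝ => α * s) α s := by
      simpa using (hasDerivAt_id s).const_mul α
    have h1 : HasDerivAt (fun s : ℝ => 1 - Real.cos (t*s)) (Real.sin (t*s) * t) s := by
      have := ((Real.hasDerivAt_cos (t*s)).comp s hts).const_sub 1
      simpa using this
    have h2 : HasDerivAt (fun s : ℝ => Real.exp (α*s)) (Real.exp (α*s) * α) s :=
      (Real.hasDerivAt_exp (α*s)).comp s hαs
    have h3 : HasDerivAt (fun s => (1 - Real.cos (t*s)) * Real.exp (α*s)) _ s := h1.mul h2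
    convert h3 using 1
    ring
  have hc1 : Continuous (fun s : ℝ => Real.sin (t*s) * Real.exp (α*s)) :=
    (Real.continuous_sin.comp (continuous_const.mul continuous_id)).mul
      (Real.continuous_exp.comp (continuous_const.mul continuous_id))
  have hc2 : Continuous (fun s : ℝ => (1 - Real.cos (t*s)) * Real.exp (α*s)) :=
    ((continuous_const.sub (Real.continuous_cos.comp
      (continuous_const.mul continuous_id))).mul
      (Real.continuous_exp.comp (continuous_const.mul continuous_id)))
  have hcont : Continuous (fun s => t * (Real.sin (t*s) * Real.exp (α*s))
      + α * ((1 - Real.cos (t*s)) * Real.exp (α*s))) :=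
    (continuous_const.mul hc1).add (continuous_const.mul hc2)
  have hint := intervalIntegral.integral_eq_sub_of_hasDerivAt
    (fun s _ => hderiv s) (hcont.intervalIntegrable 0 u)
  rw [intervalIntegral.integral_add (f := fun s => t * (Real.sin (t*s) * Real.exp (α*s)))
      (g := fun s => α * ((1 - Real.cos (t*s)) * Real.exp (α*s))) ((continuous_const.mul hc1).intervalIntegrable 0 u)
      ((continuous_const.mul hc2).intervalIntegrable 0 u),
    intervalIntegral.integral_const_mul, intervalIntegral.integral_const_mul] at hint
  rw [hint]
  simp

lemma stmt14_main (hk'_meas : Measurable k') (hα₀ : 0 < α₀)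
    (hk_nonneg : ∀ s : ℝ, 0 ≤ s → 0 ≤ k s)
    (hk'_int : ∀ s : ℝ, 0 ≤ s → IntervalIntegrable k' volume 0 s)
    (hk_ac : ∀ s : ℝ, 0 ≤ s → k s = k 0 + ∫ u in (0 : ℝ)..s, k' u)
    (hk0 : 0 < k 0)
    (hk' : ∀ᵐ s : ℝ, 0 ≤ s → k' s ≤ -α₀ * k s)
    (hα : 0 < α) (hαα₀ : α < α₀) {t : ℝ} (ht : 0 < t) :
    ((α₀ - α) / t) * (∫ s in Set.Ioi (0 : ℝ),
        (1 - Real.cos (t * s)) * k s * Real.exp (α * s)) ≤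
      (∫ s in Set.Ioi (0 : ℝ), Real.sin (t * s) * Real.exp (α * s) * k s) ∧
    0 < ∫ s in Set.Ioi (0 : ℝ), Real.sin (t * s) * Real.exp (α * s) * k s := by
  set φ1 : ℝ → ℝ := fun s => (1 - Real.cos (t*s)) * Real.exp (α*s) with hφ1
  set φ2 : ℝ → ℝ := fun s => (1 + Real.sin (t*s)) * Real.exp (α*s) with hφ2
  set φ3 : ℝ → ℝ := fun s => Real.exp (α*s) with hφ3
  have hc1 : Continuous φ1 :=
    ((continuous_const.sub (Real.continuous_cos.comp
      (continuous_const.mul continuous_id))).mul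
      (Real.continuous_exp.comp (continuous_const.mul continuous_id)))
  have hc2 : Continuous φ2 :=
    ((continuous_const.add (Real.continuous_sin.comp
      (continuous_const.mul continuous_id))).mul
      (Real.continuous_exp.comp (continuous_const.mul continuous_id)))
  have hc3 : Continuous φ3 :=
    Real.continuous_exp.comp (continuous_const.mul continuous_id)
  have hnn1 : ∀ s, 0 ≤ φ1 s := fun s =>
    mul_nonneg (by nlinarith [Real.cos_le_one (t*s)]) (Real.exp_pos _).le
  have hnn2 : ∀ s, 0 ≤ φ2 s := fun s =>
    mul_nonneg (by nlinarith [Real.neg_one_le_sin (t*s)]) (Real.exp_pos _).le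
  have hnn3 : ∀ s, 0 ≤ φ3 s := fun s => (Real.exp_pos _).le
  have hb1 : ∀ s : ℝ, 0 ≤ s → φ1 s ≤ 2 * Real.exp (α * s) := fun s _ => by
    show (1 - Real.cos (t*s)) * Real.exp (α*s) ≤ 2 * Real.exp (α*s)
    nlinarith [Real.neg_one_le_cos (t*s), Real.exp_pos (α*s)]
  have hb2 : ∀ s : ℝ, 0 ≤ s → φ2 s ≤ 2 * Real.exp (α * s) := fun s _ => by
    show (1 + Real.sin (t*s)) * Real.exp (α*s) ≤ 2 * Real.exp (α*s)
    nlinarith [Real.sin_le_one (t*s), Real.exp_pos (α*s)]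
  have hb3 : ∀ s : ℝ, 0 ≤ s → φ3 s ≤ 2 * Real.exp (α * s) := fun s _ => by
    show Real.exp (α*s) ≤ 2 * Real.exp (α*s)
    nlinarith [Real.exp_pos (α*s)]
  have habs : ∀ (φ : ℝ → ℝ), (∀ s, 0 ≤ φ s) → (∀ s : ℝ, 0 ≤ s → φ s ≤ 2 * Real.exp (α * s)) →
      (∀ s : ℝ, 0 ≤ s → |φ s| ≤ 2 * Real.exp (α * s)) := by
    intro φ h0 hb s hs
    rw [abs_of_nonneg (h0 s)]; exact hb s hs
  -- integrability of φi * k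
  have hkint1 := stmt14_integrable hα₀ hk_nonneg hk'_int hk_ac hk' hαα₀ hc1 (habs φ1 hnn1 hb1)
  have hkint2 := stmt14_integrable hα₀ hk_nonneg hk'_int hk_ac hk' hαα₀ hc2 (habs φ2 hnn2 hb2)
  have hkint3 := stmt14_integrable hα₀ hk_nonneg hk'_int hk_ac hk' hαα₀ hc3 (habs φ3 hnn3 hb3)
  -- Fubini identities
  obtain ⟨hint1, heq1⟩ := stmt14_fubini hk'_meas hα₀ hk_nonneg hk'_int hk_ac hk' hαα₀ hc1 hnn1 hb1
  obtain ⟨hint2, heq2⟩ := stmt14_fubini hk'_meas hα₀ hk_nonneg hk'_int hk_ac hk' hαα₀ hc2 hnn2 hb2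
  obtain ⟨hint3, heq3⟩ := stmt14_fubini hk'_meas hα₀ hk_nonneg hk'_int hk_ac hk' hαα₀ hc3 hnn3 hb3
  set P1 : ℝ → ℝ := fun u => ∫ s in (0:ℝ)..u, φ1 s with hP1
  set P2 : ℝ → ℝ := fun u => ∫ s in (0:ℝ)..u, φ2 s with hP2
  set P3 : ℝ → ℝ := fun u => ∫ s in (0:ℝ)..u, φ3 s with hP3
  set A : ℝ → ℝ := fun u => ∫ s in (0:ℝ)..u, Real.sin (t*s) * Real.exp (α*s) with hA
  have hPA : ∀ u, P2 u - P3 u = A u := by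
    intro u
    have hsplit : P2 u = A u + P3 u := by
      have hcsin : Continuous (fun s : ℝ => Real.sin (t * s) * Real.exp (α * s)) :=
        (Real.continuous_sin.comp (continuous_const.mul continuous_id)).mul
          (Real.continuous_exp.comp (continuous_const.mul continuous_id))
      rw [hP2, hA, hP3, ← intervalIntegral.integral_add
        (hcsin.intervalIntegrable 0 u) (hc3.intervalIntegrable 0 u)]
      apply intervalIntegral.integral_congr
      intro s _
      show (1 + Real.sin (t*s)) * Real.exp (α*s)
        = Real.sin (t*s) * Real.exp (α*s) + Real.exp (α*s)
      ring
    rw [hsplit]; ring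
  -- rewrite the goal integrals
  have hJg : (fun s => (1 - Real.cos (t * s)) * k s * Real.exp (α * s))
      = fun s => φ1 s * k s := by
    funext s; rw [hφ1]; ring
  have hIg : (fun s : ℝ => Real.sin (t * s) * Real.exp (α * s) * k s)
      = fun s => φ2 s * k s - φ3 s * k s := by
    funext s; rw [hφ2, hφ3]; ring
  set J : ℝ := ∫ s in Ioi (0:ℝ), φ1 s * k s with hJ
  have hIJ : (∫ s in Set.Ioi (0 : ℝ), (1 - Real.cos (t * s)) * k s * Real.exp (α * s)) = J := by
    rw [hJ, hJg]
  set I : ℝ := ∫ s in Ioi (0:ℝ), Real.sin (t * s) * Real.exp (α * s) * k s with hI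
  -- I = ∫ (-k') A
  have hAint : IntegrableOn (fun u => (-k' u) * A u) (Ioi 0) := by
    apply (hint2.sub hint3).congr
    rw [EventuallyEq]
    apply ae_of_all
    intro u
    show (-k' u) * P2 u - (-k' u) * P3 u = (-k' u) * A u
    rw [← hPA u]; ring
  have hIA : I = ∫ u in Ioi (0:ℝ), (-k' u) * A u := by
    rw [hI, hIg, integral_sub hkint2 hkint3, heq2, heq3, ← integral_sub hint2 hint3]
    apply setIntegral_congr_fun measurableSet_Ioi
    intro u _
    show (-k' u) * P2 u - (-k' u) * P3 u = (-k' u) * A u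
    rw [← hPA u]; ring
  -- N and its properties
  set g : ℝ → ℝ := fun u => (-k' u) * ((1 - Real.cos (t*u)) * Real.exp (α*u)) with hg
  have hgid : ∀ u, g u = t * ((-k' u) * A u) + α * ((-k' u) * P1 u) := by
    intro u
    have h : t * A u + α * P1 u = (1 - Real.cos (t*u)) * Real.exp (α*u) := stmt14_ftc t α u
    show (-k' u) * ((1 - Real.cos (t*u)) * Real.exp (α*u))
      = t * ((-k' u) * A u) + α * ((-k' u) * P1 u)
    rw [← h]; ring
  have hgint : IntegrableOn g (Ioi 0) := by
    apply (((hAint.const_mul t).add (hint1.const_mul α))).congr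
    apply ae_of_all
    intro u
    exact (hgid u).symm
  have hNval : (∫ u in Ioi (0:ℝ), g u)
      = t * (∫ u in Ioi (0:ℝ), (-k' u) * A u) + α * J := by
    have h1 : (∫ u in Ioi (0:ℝ), g u)
        = ∫ u in Ioi (0:ℝ), (t * ((-k' u) * A u) + α * ((-k' u) * P1 u)) := by
      apply setIntegral_congr_fun measurableSet_Ioi
      intro u _; exact hgid u
    rw [h1, integral_add (hAint.const_mul t) (hint1.const_mul α),
      integral_const_mul, integral_const_mul, ← heq1]
  -- N ≥ α₀ J
  have hmono : α₀ * J ≤ ∫ u in Ioi (0:ℝ), g u := by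
    rw [hJ, ← integral_const_mul]
    apply setIntegral_mono_ae_restrict (hkint1.const_mul α₀) hgint
    rw [EventuallyLE, ae_restrict_iff' measurableSet_Ioi]
    filter_upwards [hk'] with u hu hmem
    have h1 := hu hmem.le
    have h2 := hk_nonneg u hmem.le
    have h3 : 0 ≤ φ1 u := hnn1 u
    show α₀ * (φ1 u * k u) ≤ g u
    rw [hg]
    have h4 : α₀ * k u ≤ -k' u := by linarith
    have : (α₀ * k u) * φ1 u ≤ (-k' u) * φ1 u := mul_le_mul_of_nonneg_right h4 h3
    calc α₀ * (φ1 u * k u) = (α₀ * k u) * φ1 u := by ring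
      _ ≤ (-k' u) * φ1 u := this
      _ = g u := by rw [hg]
  have hkey : (α₀ - α) * J ≤ t * I := by
    rw [hIA]
    have := hNval
    linarith [hmono]
  -- positivity of J
  have hJnn : (0 : ℝ → ℝ) ≤ᵐ[volume.restrict (Ioi 0)] fun s => φ1 s * k s := by
    rw [EventuallyLE, ae_restrict_iff' measurableSet_Ioi]
    apply ae_of_all
    intro s hs
    exact mul_nonneg (hnn1 s) (hk_nonneg s hs.le)
  have hJpos : 0 < J := by
    rw [hJ]
    rw [setIntegral_pos_iff_support_of_nonneg_ae hJnn hkint1]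
    -- find δ with k > 0 on [0, δ)
    have hcw : ContinuousWithinAt k (Ici 0) 0 :=
      (stmt14_cont hk'_int hk_ac) 0 Set.self_mem_Ici
    have hev : k ⁻¹' (Ioi 0) ∈ nhdsWithin (0:ℝ) (Ici 0) := hcw (Ioi_mem_nhds hk0)
    rw [Metric.mem_nhdsWithin_iff] at hev
    obtain ⟨δ, hδ, hball⟩ := hev
    set Z : Set ℝ := {s : ℝ | Real.cos (t*s) = 1} with hZdef
    have hZ : volume Z = 0 := by
      have hZsub : Z ⊆ Set.range (fun n : ℤ => (n : ℝ) * (2 * Real.pi) / t) := by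
        intro s hs
        rw [hZdef, Set.mem_setOf_eq, Real.cos_eq_one_iff] at hs
        obtain ⟨n, hn⟩ := hs
        refine ⟨n, ?_⟩
        show (n : ℝ) * (2 * Real.pi) / t = s
        rw [div_eq_iff ht.ne']
        linarith [hn]
      exact measure_mono_null hZsub (Set.Countable.measure_zero (Set.countable_range _) _)
    have hsub : Ioo 0 δ \ Z ⊆ Function.support (fun s => φ1 s * k s) ∩ Ioi 0 := by
      intro s hs
      obtain ⟨⟨hs0, hsδ⟩, hsZ⟩ := hs
      constructor
      · have hks : 0 < k s := by
          apply hball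
          constructor
          · rw [Metric.mem_ball, Real.dist_eq, sub_zero, abs_of_pos hs0]; exact hsδ
          · exact hs0.le
        have hcos : Real.cos (t*s) < 1 := by
          rcases lt_or_eq_of_le (Real.cos_le_one (t*s)) with h | h
          · exact h
          · exact absurd h hsZ
        have hpos : 0 < φ1 s * k s := by
          apply mul_pos _ hks
          exact mul_pos (by linarith) (Real.exp_pos _)
        exact ne_of_gt hpos
      · exact hs0
    calc (0:ℝ≥0∞) < ENNReal.ofReal δ := ENNReal.ofReal_pos.mpr hδ
      _ = volume (Ioo 0 δ \ Z) := by
          rw [measure_diff_null hZ, Real.volume_Ioo, sub_zero]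
      _ ≤ volume (Function.support (fun s => φ1 s * k s) ∩ Ioi 0) := measure_mono hsub
  -- conclude
  have hIpos : 0 < I := by
    have h1 : 0 < (α₀ - α) * J := mul_pos (by linarith) hJpos
    nlinarith [hkey]
  constructor
  · rw [hIJ, div_mul_eq_mul_div, div_le_iff₀ ht]
    nlinarith [hkey]
  · exact hIpos

end stmt14aux

/-- positivity claim `Φ(t) > 0` in the proof of the Lemma in
Section 4 of the paper.  Under the standing assumptions on the kernel `k` and
`0 < α < α₀`, for every `t > 0`:
`∫₀^∞ sin(ts) e^{αs} k(s) ds ≥ ((α₀−α)/t) ∫₀^∞ (1 − cos(ts)) k(s) e^{αs} ds`, and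
`∫₀^∞ sin(ts) e^{αs} k(s) ds > 0`. -/
theorem stmt_14
    (k k' : ℝ → ℝ) (α₀ : ℝ) (hα₀ : 0 < α₀)
    (hk_nonneg : ∀ s : ℝ, 0 ≤ s → 0 ≤ k s)
    (hk'_int : ∀ s : ℝ, 0 ≤ s → IntervalIntegrable k' volume 0 s)
    (hk_ac : ∀ s : ℝ, 0 ≤ s → k s = k 0 + ∫ u in (0 : ℝ)..s, k' u)
    (hk0 : 0 < k 0)
    (hk_int1 : ∫ s in Set.Ioi (0 : ℝ), k s < 1)
    (hk' : ∀ᵐ s : ℝ, 0 ≤ s → k' s ≤ -α₀ * k s)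
    (α : ℝ) (hα : 0 < α) (hαα₀ : α < α₀) :
    ∀ t : ℝ, 0 < t →
      ((α₀ - α) / t) * (∫ s in Set.Ioi (0 : ℝ),
          (1 - Real.cos (t * s)) * k s * Real.exp (α * s)) ≤
        (∫ s in Set.Ioi (0 : ℝ), Real.sin (t * s) * Real.exp (α * s) * k s) ∧
      0 < ∫ s in Set.Ioi (0 : ℝ), Real.sin (t * s) * Real.exp (α * s) * k s := by
  intro t ht
  -- choose a measurable representative of k' on (0, ∞)
  have hU : Ioi (0:ℝ) = ⋃ n : ℕ, Ioc (0:ℝ) (n:ℝ) := by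
    ext x
    simp only [mem_Ioi, mem_iUnion, mem_Ioc]
    constructor
    · intro hx
      obtain ⟨n, hn⟩ := exists_nat_ge x
      exact ⟨n, hx, hn⟩
    · rintro ⟨n, hn, -⟩
      exact hn
  have hae : AEMeasurable k' (volume.restrict (Ioi 0)) := by
    rw [hU, aemeasurable_iUnion_iff]
    intro n
    exact ((hk'_int n (Nat.cast_nonneg n)).1).aestronglyMeasurable.aemeasurable
  set g : ℝ → ℝ := hae.mk k' with hgdef
  have hgmeas : Measurable g := hae.measurable_mk
  have hgeq' : ∀ᵐ x ∂(volume : Measure ℝ), x ∈ Ioi (0:ℝ) → k' x = g x :=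
    (ae_restrict_iff' measurableSet_Ioi).mp hae.ae_eq_mk
  -- transfer the hypotheses to g
  have hcongr_set : ∀ s : ℝ, 0 ≤ s → (∀ᵐ x ∂(volume.restrict (Ioc (0:ℝ) s)), k' x = g x) := by
    intro s hs
    rw [ae_restrict_iff' measurableSet_Ioc]
    filter_upwards [hgeq'] with x hx hmem
    exact hx (mem_Ioi.mpr hmem.1)
  have hg_int : ∀ s : ℝ, 0 ≤ s → IntervalIntegrable g volume 0 s := by
    intro s hs
    rw [intervalIntegrable_iff_integrableOn_Ioc_of_le hs]
    exact (((hk'_int s hs).1)).congr_fun_ae (hcongr_set s hs)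
  have hg_ac : ∀ s : ℝ, 0 ≤ s → k s = k 0 + ∫ u in (0 : ℝ)..s, g u := by
    intro s hs
    rw [hk_ac s hs]
    congr 1
    apply intervalIntegral.integral_congr_ae
    filter_upwards [hgeq'] with x hx hmem
    rw [uIoc_of_le hs] at hmem
    exact hx (mem_Ioi.mpr hmem.1)
  have h0 : ∀ᵐ x : ℝ ∂(volume : Measure ℝ), x ≠ 0 := by
    rw [ae_iff]
    have : {x : ℝ | ¬ x ≠ 0} = {0} := by ext x; simp
    rw [this]
    exact measure_singleton 0
  have hg' : ∀ᵐ s : ℝ, 0 ≤ s → g s ≤ -α₀ * k s := by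
    filter_upwards [hk', hgeq', h0] with s h1 h2 h3 hs0
    have hs : 0 < s := lt_of_le_of_ne hs0 (Ne.symm h3)
    rw [← h2 (mem_Ioi.mpr hs)]
    exact h1 hs0
  exact stmt14_main hgmeas hα₀ hk_nonneg hg_int hg_ac hk0 hg' hα hαα₀ ht
end

section
/- Let k : ℝ → ℝ satisfy: k(s) ≥ 0 for s ≥ 0, k is locally absolutely continuous on [0,∞) with a.e. derivative k', k(0) > 0, ∫₀^∞ k(s) ds < 1, and k'(s) ≤ −α₀ k(s) for a.e. s ≥ 0, for some α₀ > 0. Fix α with 0 < α < α₀. Then liminf_{t→∞} ((1+t²)/t)·∫₀^∞ sin(ts) e^{αs} k(s) ds ≥ (α₀ − α)·∫₀^∞ e^{αs} k(s) ds. -/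
open MeasureTheory Set Filter intervalIntegral

/-- Fubini: swap the order in `∫₀ᵇ φ'(u) ∫₀ᵘ k'(v) dv du`. -/
lemma fubini_primitive (k' : ℝ → ℝ) (b : ℝ) (hb : 0 ≤ b)
    (hk' : IntegrableOn k' (Set.Ioc 0 b) volume)
    (φ' : ℝ → ℝ) (hφ' : Continuous φ') :
    ∫ u in Set.Ioc (0:ℝ) b, φ' u * (∫ v in Set.Ioc (0:ℝ) u, k' v)
      = ∫ v in Set.Ioc (0:ℝ) b, k' v * (∫ u in Set.Ioc v b, φ' u) := by
  set μ : Measure ℝ := volume.restrict (Set.Ioc (0:ℝ) b) with hμ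
  have hS : MeasurableSet {p : ℝ × ℝ | p.2 ≤ p.1} :=
    measurableSet_le measurable_snd measurable_fst
  have hk'm : AEStronglyMeasurable k' μ := hk'.aestronglyMeasurable
  have hprod : Integrable (fun p : ℝ × ℝ => φ' p.1 * k' p.2) (μ.prod μ) := by
    refine Integrable.mul_prod ?_ hk'
    exact (hφ'.continuousOn.integrableOn_compact isCompact_Icc).mono_set Ioc_subset_Icc_self
  have hint : Integrable (fun p : ℝ × ℝ =>
      {p : ℝ × ℝ | p.2 ≤ p.1}.indicator (fun p => φ' p.1 * k' p.2) p) (μ.prod μ) :=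
    hprod.indicator hS
  have swap := MeasureTheory.integral_integral_swap (f := fun u v =>
      {p : ℝ × ℝ | p.2 ≤ p.1}.indicator (fun p : ℝ × ℝ => φ' p.1 * k' p.2) (u, v)) hint
  have hL : (∫ u, ∫ v, {p : ℝ × ℝ | p.2 ≤ p.1}.indicator
        (fun p : ℝ × ℝ => φ' p.1 * k' p.2) (u, v) ∂μ ∂μ)
      = ∫ u in Set.Ioc (0:ℝ) b, φ' u * (∫ v in Set.Ioc (0:ℝ) u, k' v) := by
    rw [hμ]
    refine setIntegral_congr_fun measurableSet_Ioc (fun u hu => ?_)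
    have h1 : ∀ v : ℝ, {p : ℝ × ℝ | p.2 ≤ p.1}.indicator
        (fun p : ℝ × ℝ => φ' p.1 * k' p.2) (u, v)
        = (Set.Iic u).indicator (fun v => φ' u * k' v) v := by
      intro v
      by_cases h : v ≤ u <;> simp [Set.indicator_apply, h]
    have hset : Set.Iic u ∩ Set.Ioc 0 b = Set.Ioc 0 u := by
      ext x
      simp only [Set.mem_inter_iff, Set.mem_Iic, Set.mem_Ioc]
      exact ⟨fun h => ⟨h.2.1, h.1⟩, fun h => ⟨h.2, h.1, h.2.trans hu.2⟩⟩
    simp_rw [h1]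
    rw [MeasureTheory.integral_indicator measurableSet_Iic,
      Measure.restrict_restrict measurableSet_Iic, hset, MeasureTheory.integral_const_mul]
  have hR : (∫ v, ∫ u, {p : ℝ × ℝ | p.2 ≤ p.1}.indicator
        (fun p : ℝ × ℝ => φ' p.1 * k' p.2) (u, v) ∂μ ∂μ)
      = ∫ v in Set.Ioc (0:ℝ) b, k' v * (∫ u in Set.Ioc v b, φ' u) := by
    rw [hμ]
    refine setIntegral_congr_fun measurableSet_Ioc (fun v hv => ?_)
    have h1 : ∀ u : ℝ, {p : ℝ × ℝ | p.2 ≤ p.1}.indicator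
        (fun p : ℝ × ℝ => φ' p.1 * k' p.2) (u, v)
        = (Set.Ici v).indicator (fun u => k' v * φ' u) u := by
      intro u
      by_cases h : v ≤ u <;> simp [Set.indicator_apply, h, mul_comm]
    simp_rw [h1]
    have hset : Set.Ici v ∩ Set.Ioc 0 b = Set.Icc v b := by
      ext x
      simp only [Set.mem_inter_iff, Set.mem_Ici, Set.mem_Ioc, Set.mem_Icc]
      exact ⟨fun h => ⟨h.1, h.2.2⟩, fun h => ⟨h.1, lt_of_lt_of_le hv.1 h.1, h.2⟩⟩
    rw [MeasureTheory.integral_indicator measurableSet_Ici,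
      Measure.restrict_restrict measurableSet_Ici, hset,
      integral_Icc_eq_integral_Ioc, MeasureTheory.integral_const_mul]
  rw [hL, hR] at swap
  exact swap

/-- Integration by parts where `k` is an indefinite integral of `k'` and `φ` is `C¹`. -/
lemma ibp_primitive (k k' : ℝ → ℝ)
    (hk'_int : ∀ s : ℝ, 0 ≤ s → IntervalIntegrable k' volume 0 s)
    (hk_ac : ∀ s : ℝ, 0 ≤ s → k s = k 0 + ∫ u in (0 : ℝ)..s, k' u)
    (φ φ' : ℝ → ℝ) (hφ : ∀ x, HasDerivAt φ (φ' x) x) (hφ' : Continuous φ')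
    (b : ℝ) (hb : 0 ≤ b) :
    ∫ s in Set.Ioc (0:ℝ) b, φ' s * k s
      = φ b * k b - φ 0 * k 0 - ∫ s in Set.Ioc (0:ℝ) b, φ s * k' s := by
  have hφc : Continuous φ := by
    rw [continuous_iff_continuousAt]; exact fun x => (hφ x).continuousAt
  have hk'b : IntegrableOn k' (Set.Ioc 0 b) volume :=
    (intervalIntegrable_iff_integrableOn_Ioc_of_le hb).1 (hk'_int b hb)
  have hk'Icc : IntegrableOn k' (Set.Icc 0 b) volume := by
    rwa [integrableOn_Icc_iff_integrableOn_Ioc]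
  have hFTC : ∀ v : ℝ, v ≤ b → ∫ u in Set.Ioc v b, φ' u = φ b - φ v := by
    intro v hvb
    rw [← intervalIntegral.integral_of_le hvb]
    exact integral_eq_sub_of_hasDerivAt (fun x _ => hφ x) (hφ'.intervalIntegrable v b)
  have hKdef : ∀ s ∈ Set.Ioc (0:ℝ) b, k s = k 0 + ∫ v in Set.Ioc (0:ℝ) s, k' v := by
    intro s hs
    rw [hk_ac s hs.1.le, intervalIntegral.integral_of_le hs.1.le]
  have hI1 : IntegrableOn (fun s => φ' s * k 0) (Set.Ioc 0 b) volume :=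
    ((hφ'.mul continuous_const).continuousOn.integrableOn_compact isCompact_Icc).mono_set
      Set.Ioc_subset_Icc_self
  have hKcont : ContinuousOn (fun s => ∫ v in Set.Ioc (0:ℝ) s, k' v) (Set.Icc 0 b) :=
    intervalIntegral.continuousOn_primitive hk'Icc
  have hI2 : IntegrableOn (fun s => φ' s * (∫ v in Set.Ioc (0:ℝ) s, k' v))
      (Set.Ioc 0 b) volume :=
    ((hφ'.continuousOn.mul hKcont).integrableOn_compact isCompact_Icc).mono_set
      Set.Ioc_subset_Icc_self
  have hk'φ : IntegrableOn (fun s => k' s * φ s) (Set.Ioc 0 b) volume :=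
    (intervalIntegrable_iff_integrableOn_Ioc_of_le hb).1
      ((hk'_int b hb).mul_continuousOn hφc.continuousOn)
  have step1 : ∫ s in Set.Ioc (0:ℝ) b, φ' s * k s
      = (∫ s in Set.Ioc (0:ℝ) b, φ' s * k 0)
        + ∫ s in Set.Ioc (0:ℝ) b, φ' s * (∫ v in Set.Ioc (0:ℝ) s, k' v) := by
    rw [← integral_add hI1 hI2]
    refine setIntegral_congr_fun measurableSet_Ioc (fun s hs => ?_)
    rw [hKdef s hs]; ring
  have step2 : ∫ s in Set.Ioc (0:ℝ) b, φ' s * k 0 = (φ b - φ 0) * k 0 := by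
    rw [MeasureTheory.integral_mul_const, hFTC 0 hb]
  have step3 : ∫ s in Set.Ioc (0:ℝ) b, φ' s * (∫ v in Set.Ioc (0:ℝ) s, k' v)
      = φ b * (∫ v in Set.Ioc (0:ℝ) b, k' v) - ∫ s in Set.Ioc (0:ℝ) b, φ s * k' s := by
    rw [fubini_primitive k' b hb hk'b φ' hφ']
    have : ∀ v ∈ Set.Ioc (0:ℝ) b, k' v * (∫ u in Set.Ioc v b, φ' u)
        = φ b * k' v - k' v * φ v := by
      intro v hv
      rw [hFTC v hv.2]; ring
    rw [setIntegral_congr_fun measurableSet_Ioc this,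
      integral_sub (hk'b.integrable.const_mul _) hk'φ.integrable, MeasureTheory.integral_const_mul]
    congr 1
    exact setIntegral_congr_fun measurableSet_Ioc (fun v _ => mul_comm _ _)
  have hkb : k b = k 0 + ∫ v in Set.Ioc (0:ℝ) b, k' v := by
    rw [hk_ac b hb, intervalIntegral.integral_of_le hb]
  rw [step1, step2, step3, hkb]; ring

lemma k_contOn (k k' : ℝ → ℝ)
    (hk'_int : ∀ s : ℝ, 0 ≤ s → IntervalIntegrable k' volume 0 s)
    (hk_ac : ∀ s : ℝ, 0 ≤ s → k s = k 0 + ∫ u in (0 : ℝ)..s, k' u)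
    (b : ℝ) (hb : 0 ≤ b) : ContinuousOn k (Set.Icc 0 b) := by
  have hk'Icc : IntegrableOn k' (Set.Icc 0 b) volume := by
    rw [integrableOn_Icc_iff_integrableOn_Ioc]
    exact (intervalIntegrable_iff_integrableOn_Ioc_of_le hb).1 (hk'_int b hb)
  have hc : ContinuousOn (fun x : ℝ => k 0 + ∫ t in Set.Ioc (0:ℝ) x, k' t) (Set.Icc 0 b) :=
    continuousOn_const.add (intervalIntegral.continuousOn_primitive hk'Icc)
  refine hc.congr ?_
  intro s hs
  rw [hk_ac s hs.1, intervalIntegral.integral_of_le hs.1]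

lemma k_decay (k k' : ℝ → ℝ) (α₀ : ℝ) (hα₀ : 0 < α₀)
    (hk'_int : ∀ s : ℝ, 0 ≤ s → IntervalIntegrable k' volume 0 s)
    (hk_ac : ∀ s : ℝ, 0 ≤ s → k s = k 0 + ∫ u in (0 : ℝ)..s, k' u)
    (hk' : ∀ᵐ s : ℝ, 0 ≤ s → k' s ≤ -α₀ * k s)
    (b : ℝ) (hb : 0 ≤ b) : k b ≤ k 0 * Real.exp (-(α₀ * b)) := by
  set φ : ℝ → ℝ := fun s => Real.exp (α₀ * s) with hφdef
  set φ' : ℝ → ℝ := fun s => α₀ * Real.exp (α₀ * s) with hφ'def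
  have hφ : ∀ x : ℝ, HasDerivAt φ (φ' x) x := by
    intro x
    have := ((hasDerivAt_id x).const_mul α₀).exp
    simpa [hφdef, hφ'def, mul_comm] using this
  have hφ'c : Continuous φ' := by fun_prop
  have hφc : Continuous φ := by fun_prop
  have hibp := ibp_primitive k k' hk'_int hk_ac φ φ' hφ hφ'c b hb
  have hφ0 : φ 0 = 1 := by simp [hφdef]
  have hkcont := k_contOn k k' hk'_int hk_ac b hb
  have hI1 : IntegrableOn (fun s => φ' s * k s) (Set.Ioc 0 b) volume :=
    ((hφ'c.continuousOn.mul hkcont).integrableOn_compact isCompact_Icc).mono_set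
      Set.Ioc_subset_Icc_self
  have hI2 : IntegrableOn (fun s => φ s * k' s) (Set.Ioc 0 b) volume := by
    have h := (intervalIntegrable_iff_integrableOn_Ioc_of_le hb).1
      ((hk'_int b hb).mul_continuousOn hφc.continuousOn)
    exact h.congr_fun (fun s _ => mul_comm _ _) measurableSet_Ioc
  have hsum : (∫ s in Set.Ioc (0:ℝ) b, φ' s * k s)
      + (∫ s in Set.Ioc (0:ℝ) b, φ s * k' s) ≤ 0 := by
    rw [← integral_add hI1 hI2]
    refine integral_nonpos_of_ae ?_
    have h1 : ∀ᵐ s ∂(volume.restrict (Set.Ioc (0:ℝ) b)), 0 ≤ s → k' s ≤ -α₀ * k s :=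
      ae_restrict_of_ae hk'
    have h2 : ∀ᵐ s ∂(volume.restrict (Set.Ioc (0:ℝ) b)), s ∈ Set.Ioc (0:ℝ) b :=
      ae_restrict_mem measurableSet_Ioc
    filter_upwards [h1, h2] with s h1 h2
    have hk's := h1 h2.1.le
    have hmul : Real.exp (α₀*s) * k' s ≤ Real.exp (α₀*s) * (-α₀ * k s) :=
      mul_le_mul_of_nonneg_left hk's (Real.exp_pos _).le
    simp only [Pi.zero_apply, hφ'def, hφdef]
    linarith [hmul]
  have key : Real.exp (α₀ * b) * k b ≤ k 0 := by
    rw [hφ0, one_mul] at hibp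
    have hφb : φ b = Real.exp (α₀ * b) := rfl
    rw [← hφb]
    linarith [hsum, hibp]
  have hpos : (0:ℝ) < Real.exp (α₀ * b) := Real.exp_pos _
  rw [Real.exp_neg, ← div_eq_mul_inv, le_div_iff₀ hpos, mul_comm]
  exact key

open Real in
lemma RL_cos (g : ℝ → ℝ) (hg : IntegrableOn g (Set.Ioi 0) volume) :
    Filter.Tendsto (fun t : ℝ => ∫ s in Set.Ioi (0:ℝ), Real.cos (t * s) * g s)
      Filter.atTop (nhds 0) := by
  set gI : ℝ → ℝ := (Set.Ioi (0:ℝ)).indicator g with hgI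
  have hgIint : Integrable gI volume := (integrable_indicator_iff measurableSet_Ioi).2 hg
  set G : ℝ → ℂ := fun v => (gI v : ℂ) with hG
  have hGint : Integrable G volume := hgIint.ofReal
  have RL := Real.tendsto_integral_exp_smul_cocompact G
  have hw : Tendsto (fun t : ℝ => t / (2*π)) atTop (cocompact ℝ) := by
    rw [cocompact_eq_atBot_atTop]
    exact (tendsto_id.atTop_div_const (by positivity)).mono_right le_sup_right
  have h1 : Tendsto (fun t : ℝ => ∫ v : ℝ, Real.fourierChar (-(v * (t/(2*π)))) • G v)
      atTop (nhds 0) := RL.comp hw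
  have h2 : Tendsto (fun t : ℝ => (∫ v : ℝ, Real.fourierChar (-(v * (t/(2*π)))) • G v).re)
      atTop (nhds 0) := by
    have := (Complex.continuous_re.tendsto 0).comp h1
    exact this
  refine h2.congr (fun t => ?_)
  have hint : Integrable (fun v : ℝ => Real.fourierChar (-(v * (t/(2*π)))) • G v) volume := by
    have : Integrable (fun v : ℝ => Real.fourierChar (-(inner ℝ v (t/(2*π)) : ℝ)) • G v) volume :=
      (Real.fourierIntegral_convergent_iff (t/(2*π))).2 hGint
    simpa [real_inner_comm, RCLike.inner_apply, mul_comm] using this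
  rw [show (∫ v : ℝ, Real.fourierChar (-(v * (t/(2*π)))) • G v).re
      = RCLike.re (∫ v : ℝ, Real.fourierChar (-(v * (t/(2*π)))) • G v) from rfl,
    ← integral_re hint]
  simp only [RCLike.re_to_complex]
  have hpt : ∀ v : ℝ, (Real.fourierChar (-(v * (t/(2*π)))) • G v).re
      = Real.cos (t * v) * gI v := by
    intro v
    have hsmul : (Real.fourierChar (-(v * (t/(2*π)))) • G v)
        = Complex.exp ((↑(2 * π * (-(v * (t/(2*π))))) : ℂ) * Complex.I) * (gI v : ℂ) := by
      rw [hG]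
      simp [Circle.smul_def, Real.fourierChar_apply, smul_eq_mul]
    rw [hsmul]
    have harg : 2 * π * (-(v * (t/(2*π)))) = -(t * v) := by
      have hπ : (2:ℝ) * π ≠ 0 := by positivity
      field_simp
    rw [harg, Complex.mul_re, Complex.exp_ofReal_mul_I_re, Complex.exp_ofReal_mul_I_im]
    simp [Complex.ofReal_re, Complex.ofReal_im, Real.cos_neg]
  simp_rw [hpt]
  have : ∀ v : ℝ, Real.cos (t * v) * gI v
      = (Set.Ioi (0:ℝ)).indicator (fun s => Real.cos (t * s) * g s) v := by
    intro v
    by_cases h : v ∈ Set.Ioi (0:ℝ) <;> simp [hgI, Set.indicator_of_mem, Set.indicator_of_notMem, h]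
  simp_rw [this]
  rw [MeasureTheory.integral_indicator measurableSet_Ioi]

lemma k_contOn_Ici (k k' : ℝ → ℝ)
    (hk'_int : ∀ s : ℝ, 0 ≤ s → IntervalIntegrable k' volume 0 s)
    (hk_ac : ∀ s : ℝ, 0 ≤ s → k s = k 0 + ∫ u in (0 : ℝ)..s, k' u) :
    ContinuousOn k (Set.Ici 0) := by
  intro x hx
  have hx0 : (0:ℝ) ≤ x := hx
  have h := k_contOn k k' hk'_int hk_ac (x+1) (by linarith)
  have hcw : ContinuousWithinAt k (Set.Icc 0 (x+1)) x := h x ⟨hx0, by linarith⟩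
  refine hcw.mono_of_mem_nhdsWithin ?_
  rw [mem_nhdsWithin]
  exact ⟨Set.Iio (x+1), isOpen_Iio, lt_add_one x,
    fun y hy => ⟨hy.2, le_of_lt hy.1⟩⟩

set_option maxHeartbeats 2000000 in
/-- The key finite-interval estimates coming from integration by parts. -/
lemma key_ineqs (k k' : ℝ → ℝ) (α₀ α : ℝ) (hα₀ : 0 < α₀) (hα : 0 < α) (hαα₀ : α < α₀)
    (hk_nonneg : ∀ s : ℝ, 0 ≤ s → 0 ≤ k s)
    (hk'_int : ∀ s : ℝ, 0 ≤ s → IntervalIntegrable k' volume 0 s)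
    (hk_ac : ∀ s : ℝ, 0 ≤ s → k s = k 0 + ∫ u in (0 : ℝ)..s, k' u)
    (hk' : ∀ᵐ s : ℝ, 0 ≤ s → k' s ≤ -α₀ * k s)
    (hg_int : IntegrableOn (fun s => Real.exp (α*s) * k s) (Set.Ioi 0) volume)
    (t b : ℝ) (hb : 0 ≤ b) :
    ((α₀ - α) * (∫ s in Set.Ioc (0:ℝ) b, (1 - Real.cos (t*s)) * (Real.exp (α*s) * k s))
      ≤ t * (∫ s in Set.Ioc (0:ℝ) b, Real.sin (t*s) * (Real.exp (α*s) * k s)))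
    ∧ t * (∫ s in Set.Ioc (0:ℝ) b, Real.sin (t*s) * (Real.exp (α*s) * k s))
      ≤ 4 * k 0 + 2 * (α * ∫ s in Set.Ioi (0:ℝ), Real.exp (α*s) * k s) := by
  set g : ℝ → ℝ := fun s => Real.exp (α*s) * k s with hgdef
  set I : ℝ := ∫ s in Set.Ioi (0:ℝ), g s with hIdef
  set φ : ℝ → ℝ := fun s => (1 - Real.cos (t*s)) * Real.exp (α*s) with hφdef
  set φ' : ℝ → ℝ := fun s => Real.sin (t*s) * t * Real.exp (α*s)
    + (1 - Real.cos (t*s)) * (Real.exp (α*s) * α) with hφ'def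
  have hφ : ∀ x : ℝ, HasDerivAt φ (φ' x) x := by
    intro x
    have hlin : HasDerivAt (fun s : ℝ => t*s) t x := by
      simpa using (hasDerivAt_id x).const_mul t
    have hcos : HasDerivAt (fun s : ℝ => Real.cos (t*s)) (-Real.sin (t*x) * t) x :=
      (Real.hasDerivAt_cos (t*x)).comp x hlin
    have h1 : HasDerivAt (fun s : ℝ => 1 - Real.cos (t*s)) (Real.sin (t*x) * t) x := by
      simpa using hcos.const_sub (1:ℝ)
    have hlin2 : HasDerivAt (fun s : ℝ => α*s) α x := by
      simpa using (hasDerivAt_id x).const_mul α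
    have h2 : HasDerivAt (fun s : ℝ => Real.exp (α*s)) (Real.exp (α*x) * α) x := hlin2.exp
    exact h1.mul h2
  have hφ'c : Continuous φ' := by fun_prop
  have hφc : Continuous φ := by fun_prop
  have hibp := ibp_primitive k k' hk'_int hk_ac φ φ' hφ hφ'c b hb
  have hφ0 : φ 0 = 0 := by simp [hφdef]
  have hkcOn := k_contOn k k' hk'_int hk_ac b hb
  have hgcont : ContinuousOn g (Set.Icc 0 b) := by
    exact ((Real.continuous_exp.comp (continuous_const.mul continuous_id)).continuousOn).mul hkcOn
  have hIsin : IntegrableOn (fun s => Real.sin (t*s) * g s) (Set.Ioc 0 b) volume :=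
    ((((by fun_prop : Continuous fun s : ℝ => Real.sin (t*s)).continuousOn).mul
      hgcont).integrableOn_compact isCompact_Icc).mono_set Set.Ioc_subset_Icc_self
  have hI1m : IntegrableOn (fun s => (1 - Real.cos (t*s)) * g s) (Set.Ioc 0 b) volume :=
    ((((by fun_prop : Continuous fun s : ℝ => 1 - Real.cos (t*s)).continuousOn).mul
      hgcont).integrableOn_compact isCompact_Icc).mono_set Set.Ioc_subset_Icc_self
  have hφk' : IntegrableOn (fun s => φ s * k' s) (Set.Ioc 0 b) volume := by
    have h := (intervalIntegrable_iff_integrableOn_Ioc_of_le hb).1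
      ((hk'_int b hb).mul_continuousOn hφc.continuousOn)
    exact h.congr_fun (fun s _ => mul_comm _ _) measurableSet_Ioc
  have hek' : IntegrableOn (fun s => Real.exp (α*s) * k' s) (Set.Ioc 0 b) volume := by
    have h := (intervalIntegrable_iff_integrableOn_Ioc_of_le hb).1
      ((hk'_int b hb).mul_continuousOn
        (by fun_prop : Continuous fun s : ℝ => Real.exp (α*s)).continuousOn)
    exact h.congr_fun (fun s _ => mul_comm _ _) measurableSet_Ioc
  have hsplit : ∫ s in Set.Ioc (0:ℝ) b, φ' s * k s
      = t * (∫ s in Set.Ioc (0:ℝ) b, Real.sin (t*s) * g s)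
        + α * (∫ s in Set.Ioc (0:ℝ) b, (1 - Real.cos (t*s)) * g s) := by
    have hpt : ∀ s ∈ Set.Ioc (0:ℝ) b, φ' s * k s
        = t * (Real.sin (t*s) * g s) + α * ((1 - Real.cos (t*s)) * g s) := by
      intro s _; simp only [hφ'def, hgdef]; ring
    rw [setIntegral_congr_fun measurableSet_Ioc hpt,
      integral_add (hIsin.const_mul t) (hI1m.const_mul α),
      MeasureTheory.integral_const_mul, MeasureTheory.integral_const_mul]
  -- a.e. facts on the restricted measure
  have h1 : ∀ᵐ s ∂(volume.restrict (Set.Ioc (0:ℝ) b)), 0 ≤ s → k' s ≤ -α₀ * k s :=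
    ae_restrict_of_ae hk'
  have h2 : ∀ᵐ s ∂(volume.restrict (Set.Ioc (0:ℝ) b)), s ∈ Set.Ioc (0:ℝ) b :=
    ae_restrict_mem measurableSet_Ioc
  -- the sign estimate for the k' term
  have hk'term : (∫ s in Set.Ioc (0:ℝ) b, φ s * k' s)
      + α₀ * (∫ s in Set.Ioc (0:ℝ) b, (1 - Real.cos (t*s)) * g s) ≤ 0 := by
    rw [← MeasureTheory.integral_const_mul, ← integral_add hφk' (hI1m.const_mul α₀)]
    refine integral_nonpos_of_ae ?_
    filter_upwards [h1, h2] with s hs1 hs2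
    have hk's := hs1 hs2.1.le
    have hφge : 0 ≤ (1 - Real.cos (t*s)) * Real.exp (α*s) :=
      mul_nonneg (by nlinarith [Real.cos_le_one (t*s)]) (Real.exp_nonneg _)
    have hmul : ((1 - Real.cos (t*s)) * Real.exp (α*s)) * k' s
        ≤ ((1 - Real.cos (t*s)) * Real.exp (α*s)) * (-α₀ * k s) :=
      mul_le_mul_of_nonneg_left hk's hφge
    simp only [Pi.zero_apply, hφdef, hgdef]
    linarith [hmul]
  -- first inequality
  have hfirst : (α₀ - α) * (∫ s in Set.Ioc (0:ℝ) b, (1 - Real.cos (t*s)) * g s)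
      ≤ t * (∫ s in Set.Ioc (0:ℝ) b, Real.sin (t*s) * g s) := by
    have hφbk : 0 ≤ φ b * k b := by
      refine mul_nonneg ?_ (hk_nonneg b hb)
      simp only [hφdef]
      exact mul_nonneg (by nlinarith [Real.cos_le_one (t*b)]) (Real.exp_nonneg _)
    rw [hφ0, zero_mul, sub_zero] at hibp
    linarith [hibp, hsplit, hk'term]
  refine ⟨hfirst, ?_⟩
  -- second inequality (uniform bound)
  -- ibp with ψ = exp(α·)
  have hψ : ∀ x : ℝ, HasDerivAt (fun s : ℝ => Real.exp (α*s)) (Real.exp (α*x) * α) x := by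
    intro x
    exact (by simpa using (hasDerivAt_id x).const_mul α : HasDerivAt (fun s : ℝ => α*s) α x).exp
  have hibp2 := ibp_primitive k k' hk'_int hk_ac (fun s => Real.exp (α*s))
    (fun s => Real.exp (α*s) * α) hψ (by fun_prop) b hb
  simp only [mul_zero, Real.exp_zero, one_mul] at hibp2
  have hgI : ∫ s in Set.Ioc (0:ℝ) b, (Real.exp (α*s) * α) * k s
      = α * ∫ s in Set.Ioc (0:ℝ) b, g s := by
    rw [← MeasureTheory.integral_const_mul]
    exact setIntegral_congr_fun measurableSet_Ioc (fun s _ => by simp only [hgdef]; ring)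
  have hg0r : 0 ≤ᵐ[volume.restrict (Set.Ioi (0:ℝ))] g := by
    filter_upwards [ae_restrict_mem measurableSet_Ioi] with s hs
    exact mul_nonneg (Real.exp_nonneg _) (hk_nonneg s (le_of_lt hs))
  have hIocI : ∫ s in Set.Ioc (0:ℝ) b, g s ≤ I := by
    exact setIntegral_mono_set hg_int hg0r
      (HasSubset.Subset.eventuallyLE Set.Ioc_subset_Ioi_self)
  have hIpos : 0 ≤ I := setIntegral_nonneg measurableSet_Ioi
    (fun s hs => mul_nonneg (Real.exp_nonneg _) (hk_nonneg s (le_of_lt hs)))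
  have hkb0 : 0 ≤ k b := hk_nonneg b hb
  have hek'le : -(∫ s in Set.Ioc (0:ℝ) b, Real.exp (α*s) * k' s) ≤ k 0 + α * I := by
    have hkbexp : 0 ≤ Real.exp (α*b) * k b := mul_nonneg (Real.exp_nonneg _) hkb0
    have hmono := mul_le_mul_of_nonneg_left hIocI hα.le
    linarith [hibp2, hgI, hkbexp, hmono]
  -- compare φ·k' with 2·exp·k'
  have hcmp : (∫ s in Set.Ioc (0:ℝ) b, 2 * (Real.exp (α*s) * k' s))
      ≤ ∫ s in Set.Ioc (0:ℝ) b, φ s * k' s := by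
    refine integral_mono_ae (hek'.const_mul 2) hφk' ?_
    filter_upwards [h1, h2] with s hs1 hs2
    have hk's : k' s ≤ 0 := le_trans (hs1 hs2.1.le)
      (by nlinarith [hk_nonneg s hs2.1.le])
    have hφle : φ s ≤ 2 * Real.exp (α*s) := by
      simp only [hφdef]
      nlinarith [Real.neg_one_le_cos (t*s), Real.exp_nonneg (α*s)]
    have hφge : 0 ≤ φ s := by
      simp only [hφdef]
      exact mul_nonneg (by nlinarith [Real.cos_le_one (t*s)]) (Real.exp_nonneg _)
    nlinarith [hφle, hk's]
  have hφbk2 : φ b * k b ≤ 2 * k 0 := by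
    have hkble := k_decay k k' α₀ hα₀ hk'_int hk_ac hk' b hb
    have hφble : φ b ≤ 2 * Real.exp (α*b) := by
      simp only [hφdef]
      nlinarith [Real.neg_one_le_cos (t*b), Real.exp_nonneg (α*b)]
    have hφbge : 0 ≤ φ b := by
      simp only [hφdef]
      exact mul_nonneg (by nlinarith [Real.cos_le_one (t*b)]) (Real.exp_nonneg _)
    have h3 : φ b * k b ≤ 2 * Real.exp (α*b) * (k 0 * Real.exp (-(α₀*b))) :=
      mul_le_mul hφble hkble hkb0 (by positivity)
    have h4 : 2 * Real.exp (α*b) * (k 0 * Real.exp (-(α₀*b))) ≤ 2 * k 0 := by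
      have hexp : Real.exp (α*b) * Real.exp (-(α₀*b)) ≤ 1 := by
        rw [← Real.exp_add]
        refine Real.exp_le_one_iff.2 ?_
        nlinarith [hb, hαα₀]
      have hk00 : 0 ≤ k 0 := hk_nonneg 0 le_rfl
      nlinarith [hexp, hk00, Real.exp_nonneg (α*b), Real.exp_nonneg (-(α₀*b))]
    linarith
  have hcosnn : 0 ≤ ∫ s in Set.Ioc (0:ℝ) b, (1 - Real.cos (t*s)) * g s := by
    refine setIntegral_nonneg measurableSet_Ioc (fun s hs => ?_)
    refine mul_nonneg (by nlinarith [Real.cos_le_one (t*s)])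
      (mul_nonneg (Real.exp_nonneg _) (hk_nonneg s hs.1.le))
  rw [hφ0, zero_mul, sub_zero] at hibp
  have hint2 : (∫ s in Set.Ioc (0:ℝ) b, 2 * (Real.exp (α*s) * k' s))
      = 2 * ∫ s in Set.Ioc (0:ℝ) b, Real.exp (α*s) * k' s := MeasureTheory.integral_const_mul 2 _
  have hαQ : 0 ≤ α * ∫ s in Set.Ioc (0:ℝ) b, (1 - Real.cos (t*s)) * g s :=
    mul_nonneg hα.le hcosnn
  linarith [hibp, hsplit, hcmp, hint2, hek'le, hφbk2, hαQ]

set_option maxHeartbeats 2000000 in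
/-- the liminf claim for `Φ` in the proof of the Lemma in Section 4
of the paper.  Under the standing assumptions on the kernel `k` and `0 < α < α₀`:
`liminf_{t→∞} ((1+t²)/t) ∫₀^∞ sin(ts) e^{αs} k(s) ds ≥ (α₀ − α) ∫₀^∞ e^{αs} k(s) ds`. -/
theorem stmt_15
    (k k' : ℝ → ℝ) (α₀ : ℝ) (hα₀ : 0 < α₀)
    (hk_nonneg : ∀ s : ℝ, 0 ≤ s → 0 ≤ k s)
    (hk'_int : ∀ s : ℝ, 0 ≤ s → IntervalIntegrable k' volume 0 s)
    (hk_ac : ∀ s : ℝ, 0 ≤ s → k s = k 0 + ∫ u in (0 : ℝ)..s, k' u)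
    (hk0 : 0 < k 0)
    (hk_int1 : ∫ s in Set.Ioi (0 : ℝ), k s < 1)
    (hk' : ∀ᵐ s : ℝ, 0 ≤ s → k' s ≤ -α₀ * k s)
    (α : ℝ) (hα : 0 < α) (hαα₀ : α < α₀) :
    (α₀ - α) * (∫ s in Set.Ioi (0 : ℝ), Real.exp (α * s) * k s) ≤
      Filter.liminf (fun t : ℝ => ((1 + t ^ 2) / t) *
        ∫ s in Set.Ioi (0 : ℝ), Real.sin (t * s) * Real.exp (α * s) * k s)
        Filter.atTop := by
  have hαα : (0:ℝ) < α₀ - α := sub_pos.2 hαα₀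
  have hkc := k_contOn_Ici k k' hk'_int hk_ac
  have hdecay := k_decay k k' α₀ hα₀ hk'_int hk_ac hk'
  have hgmeas : AEStronglyMeasurable (fun s => Real.exp (α*s) * k s)
      (volume.restrict (Set.Ioi (0:ℝ))) :=
    (((Real.continuous_exp.comp (continuous_const.mul continuous_id)).continuousOn).mul
      (hkc.mono Set.Ioi_subset_Ici_self)).aestronglyMeasurable measurableSet_Ioi
  have hg_int : IntegrableOn (fun s => Real.exp (α*s) * k s) (Set.Ioi 0) volume := by
    refine Integrable.mono' ((exp_neg_integrableOn_Ioi 0 hαα).const_mul (k 0)) hgmeas ?_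
    filter_upwards [ae_restrict_mem measurableSet_Ioi] with s hs
    have hs0 : (0:ℝ) ≤ s := le_of_lt hs
    rw [Real.norm_eq_abs, abs_of_nonneg (mul_nonneg (Real.exp_nonneg _) (hk_nonneg s hs0))]
    calc Real.exp (α*s) * k s ≤ Real.exp (α*s) * (k 0 * Real.exp (-(α₀*s))) :=
          mul_le_mul_of_nonneg_left (hdecay s hs0) (Real.exp_nonneg _)
      _ = k 0 * Real.exp (-(α₀-α)*s) := by
          rw [show -(α₀-α)*s = α*s + -(α₀*s) by ring, Real.exp_add]; ring
  have hsin_int : ∀ t : ℝ, IntegrableOn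
      (fun s => Real.sin (t*s) * (Real.exp (α*s) * k s)) (Set.Ioi 0) volume := by
    intro t
    refine hg_int.bdd_mul (c := 1)
      ((by fun_prop : Continuous fun s : ℝ => Real.sin (t*s)).aestronglyMeasurable)
      (ae_of_all _ fun x => ?_)
    rw [Real.norm_eq_abs]; exact Real.abs_sin_le_one _
  have hcos_int : ∀ t : ℝ, IntegrableOn
      (fun s => Real.cos (t*s) * (Real.exp (α*s) * k s)) (Set.Ioi 0) volume := by
    intro t
    refine hg_int.bdd_mul (c := 1)
      ((by fun_prop : Continuous fun s : ℝ => Real.cos (t*s)).aestronglyMeasurable)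
      (ae_of_all _ fun x => ?_)
    rw [Real.norm_eq_abs]; exact Real.abs_cos_le_one _
  have h1mcos_int : ∀ t : ℝ, IntegrableOn
      (fun s => (1 - Real.cos (t*s)) * (Real.exp (α*s) * k s)) (Set.Ioi 0) volume := by
    intro t
    refine hg_int.bdd_mul (c := 2)
      ((by fun_prop : Continuous fun s : ℝ => 1 - Real.cos (t*s)).aestronglyMeasurable)
      (ae_of_all _ fun x => ?_)
    rw [Real.norm_eq_abs]
    refine abs_le.2 ⟨?_, ?_⟩
    · linarith [Real.cos_le_one (t*x)]
    · linarith [Real.neg_one_le_cos (t*x)]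
  have hlimsin : ∀ t : ℝ, Filter.Tendsto
      (fun b => ∫ s in Set.Ioc (0:ℝ) b, Real.sin (t*s) * (Real.exp (α*s) * k s))
      Filter.atTop (nhds (∫ s in Set.Ioi (0:ℝ), Real.sin (t*s) * (Real.exp (α*s) * k s))) := by
    intro t
    refine (intervalIntegral_tendsto_integral_Ioi 0 (hsin_int t) tendsto_id).congr' ?_
    filter_upwards [eventually_ge_atTop (0:ℝ)] with b hb
    exact intervalIntegral.integral_of_le hb
  have hlim1m : ∀ t : ℝ, Filter.Tendsto
      (fun b => ∫ s in Set.Ioc (0:ℝ) b, (1 - Real.cos (t*s)) * (Real.exp (α*s) * k s))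
      Filter.atTop (nhds (∫ s in Set.Ioi (0:ℝ), (1 - Real.cos (t*s)) * (Real.exp (α*s) * k s))) := by
    intro t
    refine (intervalIntegral_tendsto_integral_Ioi 0 (h1mcos_int t) tendsto_id).congr' ?_
    filter_upwards [eventually_ge_atTop (0:ℝ)] with b hb
    exact intervalIntegral.integral_of_le hb
  have hkey := fun (t b : ℝ) (hb : 0 ≤ b) =>
    key_ineqs k k' α₀ α hα₀ hα hαα₀ hk_nonneg hk'_int hk_ac hk' hg_int t b hb
  have key1 : ∀ t : ℝ,
      (α₀-α) * (∫ s in Set.Ioi (0:ℝ), (1 - Real.cos (t*s)) * (Real.exp (α*s) * k s))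
        ≤ t * ∫ s in Set.Ioi (0:ℝ), Real.sin (t*s) * (Real.exp (α*s) * k s) := by
    intro t
    refine le_of_tendsto_of_tendsto ((hlim1m t).const_mul (α₀-α))
      ((hlimsin t).const_mul t) ?_
    filter_upwards [eventually_ge_atTop (0:ℝ)] with b hb
    exact (hkey t b hb).1
  have key2 : ∀ t : ℝ,
      t * (∫ s in Set.Ioi (0:ℝ), Real.sin (t*s) * (Real.exp (α*s) * k s))
        ≤ 4 * k 0 + 2 * (α * ∫ s in Set.Ioi (0:ℝ), Real.exp (α*s) * k s) := by
    intro t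
    refine le_of_tendsto ((hlimsin t).const_mul t) ?_
    filter_upwards [eventually_ge_atTop (0:ℝ)] with b hb
    exact (hkey t b hb).2
  have hBI : ∀ t : ℝ,
      (∫ s in Set.Ioi (0:ℝ), (1 - Real.cos (t*s)) * (Real.exp (α*s) * k s))
        = (∫ s in Set.Ioi (0:ℝ), Real.exp (α*s) * k s)
          - ∫ s in Set.Ioi (0:ℝ), Real.cos (t*s) * (Real.exp (α*s) * k s) := by
    intro t
    rw [← integral_sub hg_int (hcos_int t)]
    exact setIntegral_congr_fun measurableSet_Ioi (fun s _ => by ring)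
  have hBnn : ∀ t : ℝ,
      0 ≤ ∫ s in Set.Ioi (0:ℝ), (1 - Real.cos (t*s)) * (Real.exp (α*s) * k s) := by
    intro t
    refine setIntegral_nonneg measurableSet_Ioi (fun s hs => ?_)
    exact mul_nonneg (by linarith [Real.cos_le_one (t*s)])
      (mul_nonneg (Real.exp_nonneg _) (hk_nonneg s (le_of_lt hs)))
  have hRL := RL_cos (fun s => Real.exp (α*s) * k s) hg_int
  have hAeq : ∀ t : ℝ,
      (∫ s in Set.Ioi (0:ℝ), Real.sin (t*s) * Real.exp (α*s) * k s)
        = ∫ s in Set.Ioi (0:ℝ), Real.sin (t*s) * (Real.exp (α*s) * k s) :=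
    fun t => setIntegral_congr_fun measurableSet_Ioi (fun s _ => mul_assoc _ _ _)
  set I : ℝ := ∫ s in Set.Ioi (0:ℝ), Real.exp (α*s) * k s with hIdef
  set C : ℝ → ℝ := fun t => ∫ s in Set.Ioi (0:ℝ), Real.cos (t*s) * (Real.exp (α*s) * k s)
    with hCdef
  set F : ℝ → ℝ := fun t => ((1 + t^2)/t) *
    ∫ s in Set.Ioi (0:ℝ), Real.sin (t*s) * Real.exp (α*s) * k s with hFdef
  have hInn : 0 ≤ I := setIntegral_nonneg measurableSet_Ioi
    (fun s hs => mul_nonneg (Real.exp_nonneg _) (hk_nonneg s (le_of_lt hs)))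
  have hM0 : (0:ℝ) ≤ 4 * k 0 + 2 * (α * I) := by positivity
  have hFlower : ∀ᶠ t in Filter.atTop, (α₀-α) * (I - C t) ≤ F t := by
    filter_upwards [eventually_ge_atTop (1:ℝ)] with t ht
    have ht0 : (0:ℝ) < t := lt_of_lt_of_le one_pos ht
    have h1 := key1 t
    rw [hBI t] at h1
    have hAnn : 0 ≤ t * ∫ s in Set.Ioi (0:ℝ), Real.sin (t*s) * (Real.exp (α*s) * k s) :=
      le_trans (mul_nonneg hαα.le (hBnn t)) (key1 t)
    have hrat : (1:ℝ) ≤ (1+t^2)/t^2 := by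
      rw [le_div_iff₀ (by positivity)]; nlinarith
    have hFeq : F t = ((1+t^2)/t^2) *
        (t * ∫ s in Set.Ioi (0:ℝ), Real.sin (t*s) * (Real.exp (α*s) * k s)) := by
      rw [hFdef]
      simp only []
      rw [hAeq t]
      field_simp
      ring
      simp_rw [mul_comm _ α]
    calc (α₀-α) * (I - C t) ≤ t * ∫ s in Set.Ioi (0:ℝ),
          Real.sin (t*s) * (Real.exp (α*s) * k s) := h1
      _ = 1 * (t * ∫ s in Set.Ioi (0:ℝ), Real.sin (t*s) * (Real.exp (α*s) * k s)) :=
          (one_mul _).symm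
      _ ≤ ((1+t^2)/t^2) * (t * ∫ s in Set.Ioi (0:ℝ),
            Real.sin (t*s) * (Real.exp (α*s) * k s)) :=
          mul_le_mul_of_nonneg_right hrat hAnn
      _ = F t := hFeq.symm
  have hFupper : ∀ᶠ t in Filter.atTop, F t ≤ 2 * (4 * k 0 + 2 * (α * I)) := by
    filter_upwards [eventually_ge_atTop (1:ℝ)] with t ht
    have ht0 : (0:ℝ) < t := lt_of_lt_of_le one_pos ht
    have h1 := key1 t
    have hAnn : 0 ≤ t * ∫ s in Set.Ioi (0:ℝ), Real.sin (t*s) * (Real.exp (α*s) * k s) :=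
      le_trans (mul_nonneg hαα.le (hBnn t)) h1
    have hrat2 : (1+t^2)/t^2 ≤ 2 := by
      rw [div_le_iff₀ (by positivity)]; nlinarith
    have hFeq : F t = ((1+t^2)/t^2) *
        (t * ∫ s in Set.Ioi (0:ℝ), Real.sin (t*s) * (Real.exp (α*s) * k s)) := by
      rw [hFdef]
      simp only []
      rw [hAeq t]
      field_simp
      ring
      simp_rw [mul_comm _ α]
    rw [hFeq]
    calc ((1+t^2)/t^2) * (t * ∫ s in Set.Ioi (0:ℝ),
          Real.sin (t*s) * (Real.exp (α*s) * k s))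
        ≤ 2 * (t * ∫ s in Set.Ioi (0:ℝ), Real.sin (t*s) * (Real.exp (α*s) * k s)) :=
          mul_le_mul_of_nonneg_right hrat2 hAnn
      _ ≤ 2 * (4 * k 0 + 2 * (α * I)) := by
          have := key2 t
          linarith
  have hvt : Filter.Tendsto (fun t => (α₀-α) * (I - C t)) Filter.atTop
      (nhds ((α₀-α) * I)) := by
    have h2 : Filter.Tendsto (fun t => I - C t) Filter.atTop (nhds (I - 0)) :=
      tendsto_const_nhds.sub hRL
    have h3 := h2.const_mul (α₀-α)
    simpa using h3
  have hcob : Filter.IsCoboundedUnder (· ≥ ·) Filter.atTop F := by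
    refine Filter.IsBoundedUnder.isCoboundedUnder_ge ?_
    exact ⟨2 * (4 * k 0 + 2 * (α * I)), by simpa using hFupper⟩
  have hbdd : Filter.IsBoundedUnder (· ≥ ·) Filter.atTop (fun t => (α₀-α) * (I - C t)) :=
    hvt.isBoundedUnder_ge
  calc (α₀ - α) * I = Filter.liminf (fun t => (α₀-α) * (I - C t)) Filter.atTop :=
        (hvt.liminf_eq).symm
    _ ≤ Filter.liminf F Filter.atTop := Filter.liminf_le_liminf hFlower hbdd hcob
end

section
/- Let k : ℝ → ℝ satisfy: k(s) ≥ 0 for s ≥ 0, k is locally absolutely continuous on [0,∞) with a.e. derivative k', k(0) > 0, ∫₀^∞ k(s) ds < 1, and k'(s) ≤ −α₀ k(s) for a.e. s ≥ 0, for some α₀ > 0. Then for every α with 0 < α < α₀ the weighted derivative is integrable with ∫₀^∞ e^{αt} |k'(t)| dt ≤ k(0) + α·∫₀^∞ e^{αt} k(t) dt < ∞. -/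
open MeasureTheory

open Set in

lemma exp_interval_int (α a b : ℝ) (hα : α ≠ 0) :
    ∫ s in a..b, Real.exp (α * s) = (Real.exp (α * b) - Real.exp (α * a)) / α := by
  have h : ∀ x ∈ Set.uIcc a b, HasDerivAt (fun y => Real.exp (α * y) / α)
      (Real.exp (α * x)) x := by
    intro x _
    have h1 : HasDerivAt (fun y => α * y) α x := by
      simpa using (hasDerivAt_id x).const_mul α
    have h2 := (Real.hasDerivAt_exp (α * x)).comp x h1
    have h3 := h2.div_const α
    simpa [mul_comm, mul_div_assoc, mul_div_cancel_left₀ _ hα] using h3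
  rw [intervalIntegral.integral_eq_sub_of_hasDerivAt h
      (Continuous.intervalIntegrable (by continuity) a b)]
  ring

open Set in
lemma ibp_aux (k k' : ℝ → ℝ) (α N : ℝ) (hα : 0 < α) (hN : 0 ≤ N)
    (hk'i : IntegrableOn k' (Set.Ioc 0 N))
    (hk_ac : ∀ s : ℝ, 0 ≤ s → k s = k 0 + ∫ u in (0 : ℝ)..s, k' u)
    (hφk : IntegrableOn (fun t => Real.exp (α * t) * k t) (Set.Ioc 0 N))
    (hφk' : IntegrableOn (fun t => Real.exp (α * t) * k' t) (Set.Ioc 0 N)) :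
    ∫ t in Set.Ioc (0:ℝ) N, Real.exp (α * t) * k' t
      = Real.exp (α * N) * k N - k 0 - α * ∫ t in Set.Ioc (0:ℝ) N, Real.exp (α * t) * k t := by
  have hI0N : IntervalIntegrable k' volume 0 N :=
    (intervalIntegrable_iff_integrableOn_Ioc_of_le hN).mpr hk'i
  set μ := volume.restrict (Set.Ioc (0:ℝ) N) with hμ
  set g : ℝ → ℝ → ℝ := fun s t => if s < t then α * Real.exp (α * s) * k' t else 0 with hg
  have hk'm : AEStronglyMeasurable k' μ := hk'i.aestronglyMeasurable
  have hslice : ∀ s : ℝ, Integrable (fun t => g s t) μ := by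
    intro s
    have : (fun t => g s t)
        = Set.indicator (Set.Ioi s) (fun t => α * Real.exp (α * s) * k' t) := by
      funext t; simp [hg, Set.indicator_apply, Set.mem_Ioi]
    rw [this]
    exact ((hk'i.const_mul _).indicator measurableSet_Ioi)
  have hgm : AEStronglyMeasurable (Function.uncurry g) (μ.prod μ) := by
    have h1 : AEStronglyMeasurable (fun p : ℝ × ℝ => α * Real.exp (α * p.1) * k' p.2)
        (μ.prod μ) :=
      (Continuous.aestronglyMeasurable (by continuity)).mul hk'm.comp_snd
    have h2 : MeasurableSet {p : ℝ × ℝ | p.1 < p.2} :=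
      measurableSet_lt measurable_fst measurable_snd
    have he : Function.uncurry g = Set.indicator {p : ℝ × ℝ | p.1 < p.2}
        (fun p : ℝ × ℝ => α * Real.exp (α * p.1) * k' p.2) := by
      funext p
      simp only [Function.uncurry, hg, Set.indicator_apply, Set.mem_setOf_eq]
    rw [he]
    exact h1.indicator h2
  have hgi : Integrable (Function.uncurry g) (μ.prod μ) := by
    rw [integrable_prod_iff hgm]
    refine ⟨ae_of_all _ hslice, ?_⟩
    set C : ℝ := ∫ t, α * Real.exp (α * N) * |k' t| ∂μ with hC
    refine Integrable.mono' (g := fun _ => C)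
      (integrableOn_const measure_Ioc_lt_top.ne)
      hgm.norm.integral_prod_right' ?_
    filter_upwards [self_mem_ae_restrict measurableSet_Ioc] with s hs
    have hb : ∀ᵐ t ∂μ, ‖g s t‖ ≤ α * Real.exp (α * N) * |k' t| := by
      refine ae_of_all _ fun t => ?_
      by_cases h : s < t
      · simp only [hg, if_pos h, Real.norm_eq_abs]
        rw [abs_mul, abs_mul, abs_of_pos hα, abs_of_pos (Real.exp_pos _)]
        have : Real.exp (α * s) ≤ Real.exp (α * N) :=
          Real.exp_le_exp.2 (by nlinarith [hs.2])
        exact mul_le_mul_of_nonneg_right (mul_le_mul_of_nonneg_left this hα.le)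
          (abs_nonneg _)
      · simp only [hg, if_neg h, norm_zero]
        positivity
    have hint : Integrable (fun t => α * Real.exp (α * N) * |k' t|) μ :=
      (hk'i.abs.const_mul _)
    rw [Real.norm_eq_abs, abs_of_nonneg (integral_nonneg fun t => norm_nonneg _)]
    exact integral_mono_ae (hslice s).norm hint hb
  have hswap := integral_integral_swap hgi
  -- LHS computation : ∫ s ∫ t
  have hLHS : ∫ s, ∫ t, g s t ∂μ ∂μ
      = ∫ s in Set.Ioc (0:ℝ) N, α * Real.exp (α * s) * (k N - k s) := by
    refine setIntegral_congr_fun measurableSet_Ioc fun s hs => ?_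
    have hinner : (fun t => g s t)
        = Set.indicator (Set.Ioi s) (fun t => α * Real.exp (α * s) * k' t) := by
      funext t; simp [hg, Set.indicator_apply, Set.mem_Ioi]
    rw [hinner, hμ, integral_indicator measurableSet_Ioi,
      Measure.restrict_restrict measurableSet_Ioi]
    have hset : Set.Ioi s ∩ Set.Ioc (0:ℝ) N = Set.Ioc s N := by
      ext t
      simp only [Set.mem_inter_iff, Set.mem_Ioi, Set.mem_Ioc]
      constructor
      · rintro ⟨h1, _, h3⟩; exact ⟨h1, h3⟩
      · rintro ⟨h1, h2⟩; exact ⟨h1, lt_trans hs.1 h1, h2⟩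
    have hsN : s ≤ N := hs.2
    have h0s : (0:ℝ) ≤ s := le_of_lt hs.1
    have hI0s : IntervalIntegrable k' volume 0 s :=
      (intervalIntegrable_iff_integrableOn_Ioc_of_le h0s).mpr
        (hk'i.mono_set (Set.Ioc_subset_Ioc_right hsN))
    have hksN : ∫ t in Set.Ioc s N, k' t = k N - k s := by
      rw [← intervalIntegral.integral_of_le hsN,
        ← intervalIntegral.integral_interval_sub_left hI0N hI0s,
        hk_ac N hN, hk_ac s h0s]
      ring
    rw [hset, integral_const_mul, hksN]
  -- RHS computation : ∫ t ∫ s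
  have hRHS : ∫ t, ∫ s, g s t ∂μ ∂μ
      = ∫ t in Set.Ioc (0:ℝ) N, (Real.exp (α * t) - 1) * k' t := by
    refine setIntegral_congr_fun measurableSet_Ioc fun t ht => ?_
    have hinner : (fun s => g s t)
        = Set.indicator (Set.Iio t) (fun s => α * Real.exp (α * s) * k' t) := by
      funext s; simp [hg, Set.indicator_apply, Set.mem_Iio]
    rw [hinner, hμ, integral_indicator measurableSet_Iio,
      Measure.restrict_restrict measurableSet_Iio]
    have hset : Set.Iio t ∩ Set.Ioc (0:ℝ) N = Set.Ioo 0 t := by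
      ext s
      simp only [Set.mem_inter_iff, Set.mem_Iio, Set.mem_Ioc, Set.mem_Ioo]
      constructor
      · rintro ⟨h1, h2, _⟩; exact ⟨h2, h1⟩
      · rintro ⟨h1, h2⟩; exact ⟨h2, h1, le_trans (le_of_lt h2) ht.2⟩
    rw [hset]
    have h0t : (0:ℝ) ≤ t := le_of_lt ht.1
    have hexp : ∫ s in Set.Ioo (0:ℝ) t, α * Real.exp (α * s)
        = Real.exp (α * t) - 1 := by
      rw [← integral_Ioc_eq_integral_Ioo, ← intervalIntegral.integral_of_le h0t,
        intervalIntegral.integral_const_mul, exp_interval_int α 0 t (ne_of_gt hα)]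
      field_simp
      simp
    ring
    calc ∫ s in Set.Ioo (0:ℝ) t, α * Real.exp (α * s) * k' t
        = (∫ s in Set.Ioo (0:ℝ) t, α * Real.exp (α * s)) * k' t := by
          rw [integral_mul_const]
      _ = (Real.exp (α * t) - 1) * k' t := by rw [hexp]
      _ = -k' t + k' t * Real.exp (α * t) := by ring
  rw [hLHS, hRHS] at hswap
  -- expand both sides
  have hexpi : IntegrableOn (fun s => Real.exp (α * s)) (Set.Ioc (0:ℝ) N) :=
    (Continuous.integrableOn_Ioc (Real.continuous_exp.comp (continuous_const.mul continuous_id)))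
  have hE1 : ∫ s in Set.Ioc (0:ℝ) N, α * Real.exp (α * s) * (k N - k s)
      = α * k N * ((Real.exp (α * N) - 1) / α)
        - α * ∫ s in Set.Ioc (0:ℝ) N, Real.exp (α * s) * k s := by
    have : (fun s => α * Real.exp (α * s) * (k N - k s))
        = fun s => (α * k N) * Real.exp (α * s) - α * (Real.exp (α * s) * k s) := by
      funext s; ring
    rw [this, integral_sub ((hexpi.const_mul _)) (hφk.const_mul _),
      integral_const_mul, integral_const_mul]
    have : ∫ s in Set.Ioc (0:ℝ) N, Real.exp (α * s)
        = (Real.exp (α * N) - 1) / α := by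
      rw [← intervalIntegral.integral_of_le hN, exp_interval_int α 0 N (ne_of_gt hα)]
      simp
    rw [this]
  have hE2 : ∫ t in Set.Ioc (0:ℝ) N, (Real.exp (α * t) - 1) * k' t
      = (∫ t in Set.Ioc (0:ℝ) N, Real.exp (α * t) * k' t) - (k N - k 0) := by
    have h1 : (fun t => (Real.exp (α * t) - 1) * k' t)
        = fun t => Real.exp (α * t) * k' t - k' t := by
      funext t; ring
    rw [h1, integral_sub hφk' hk'i]
    have : ∫ t in Set.Ioc (0:ℝ) N, k' t = k N - k 0 := by
      rw [← intervalIntegral.integral_of_le hN, hk_ac N hN]; ring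
    rw [this]
  have hαne : α ≠ 0 := ne_of_gt hα
  have hcanc : α * k N * ((Real.exp (α * N) - 1) / α) = k N * (Real.exp (α * N) - 1) := by
    field_simp
  rw [hE1, hE2, hcanc] at hswap
  simp only [← hμ] at hswap ⊢
  linarith [hswap]

/-- the claim `k' ∈ L_{1,−α}` in the Lemma of Section 4 of the
paper.  Under the standing assumptions on the kernel `k`, for `0 < α < α₀` the
weighted derivative is integrable with
`∫₀^∞ e^{αt}|k'(t)| dt ≤ k(0) + α ∫₀^∞ e^{αt} k(t) dt < ∞`. -/
theorem stmt_18
    (k k' : ℝ → ℝ) (α₀ : ℝ) (hα₀ : 0 < α₀)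
    (hk_nonneg : ∀ s : ℝ, 0 ≤ s → 0 ≤ k s)
    (hk'_int : ∀ s : ℝ, 0 ≤ s → IntervalIntegrable k' volume 0 s)
    (hk_ac : ∀ s : ℝ, 0 ≤ s → k s = k 0 + ∫ u in (0 : ℝ)..s, k' u)
    (hk0 : 0 < k 0)
    (hk_int1 : ∫ s in Set.Ioi (0 : ℝ), k s < 1)
    (hk' : ∀ᵐ s : ℝ, 0 ≤ s → k' s ≤ -α₀ * k s)
    (α : ℝ) (hα : 0 < α) (hαα₀ : α < α₀) :
    IntegrableOn (fun t => Real.exp (α * t) * |k' t|) (Set.Ioi (0 : ℝ)) ∧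
    ∫ t in Set.Ioi (0 : ℝ), Real.exp (α * t) * |k' t| ≤
      k 0 + α * ∫ t in Set.Ioi (0 : ℝ), Real.exp (α * t) * k t := by
  -- derivative is a.e. nonpositive on [0,∞)
  have hk'neg : ∀ᵐ t : ℝ, 0 ≤ t → k' t ≤ 0 ∧ |k' t| = -k' t := by
    filter_upwards [hk'] with t ht h0t
    have h1 : k' t ≤ -α₀ * k t := ht h0t
    have h2 : 0 ≤ k t := hk_nonneg t h0t
    have h3 : k' t ≤ 0 := le_trans h1 (by nlinarith)
    exact ⟨h3, abs_of_nonpos h3⟩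
  -- basic integrabilities on each Ioc 0 N
  have hk'i : ∀ N : ℝ, 0 ≤ N → IntegrableOn k' (Set.Ioc 0 N) := fun N hN =>
    (intervalIntegrable_iff_integrableOn_Ioc_of_le hN).mp (hk'_int N hN)
  have hkcont : ∀ N : ℝ, 0 ≤ N → ContinuousOn k (Set.Icc 0 N) := by
    intro N hN
    have h1 : IntegrableOn k' (Set.uIcc 0 N) := by
      rw [Set.uIcc_of_le hN, integrableOn_Icc_iff_integrableOn_Ioc]
      exact hk'i N hN
    have h2 := intervalIntegral.continuousOn_primitive_interval (a := 0) (b := N)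
      (f := k') (μ := volume) h1
    have h3 : ContinuousOn (fun s => k 0 + ∫ u in (0:ℝ)..s, k' u) (Set.Icc 0 N) := by
      rw [← Set.uIcc_of_le hN]
      exact continuousOn_const.add h2
    exact h3.congr fun s hs => hk_ac s hs.1
  have hφk : ∀ N : ℝ, 0 ≤ N →
      IntegrableOn (fun t => Real.exp (α * t) * k t) (Set.Ioc 0 N) := by
    intro N hN
    have hc : ContinuousOn (fun t => Real.exp (α * t) * k t) (Set.Icc 0 N) :=
      ((Real.continuous_exp.comp (continuous_const.mul continuous_id)).continuousOn).mul
        (hkcont N hN)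
    exact (hc.integrableOn_Icc).mono_set Set.Ioc_subset_Icc_self
  have hφk' : ∀ N : ℝ, 0 ≤ N →
      IntegrableOn (fun t => Real.exp (α * t) * k' t) (Set.Ioc 0 N) := by
    intro N hN
    refine Integrable.bdd_mul (c := Real.exp (α * N)) (hk'i N hN)
      ((Real.continuous_exp.comp (continuous_const.mul continuous_id)).aestronglyMeasurable) ?_
    filter_upwards [self_mem_ae_restrict measurableSet_Ioc] with t ht
    rw [Real.norm_eq_abs, abs_of_pos (Real.exp_pos _)]
    exact Real.exp_le_exp.2 (by nlinarith [ht.2])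
  -- the integration-by-parts identity
  have hId : ∀ N : ℝ, 0 ≤ N →
      ∫ t in Set.Ioc (0:ℝ) N, Real.exp (α * t) * k' t
        = Real.exp (α * N) * k N - k 0
          - α * ∫ t in Set.Ioc (0:ℝ) N, Real.exp (α * t) * k t := fun N hN =>
    ibp_aux k k' α N hα hN (hk'i N hN) hk_ac (hφk N hN) (hφk' N hN)
  -- comparison: ∫ φ k' ≤ -α₀ ∫ φ k on Ioc 0 N
  have hcomp : ∀ N : ℝ, 0 ≤ N →
      ∫ t in Set.Ioc (0:ℝ) N, Real.exp (α * t) * k' t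
        ≤ -α₀ * ∫ t in Set.Ioc (0:ℝ) N, Real.exp (α * t) * k t := by
    intro N hN
    rw [← integral_const_mul]
    refine integral_mono_ae (hφk' N hN) ((hφk N hN).const_mul _) ?_
    filter_upwards [ae_restrict_of_ae hk', self_mem_ae_restrict measurableSet_Ioc]
      with t ht hmem
    have h1 := ht (le_of_lt hmem.1)
    have h2 := Real.exp_pos (α * t)
    calc Real.exp (α * t) * k' t ≤ Real.exp (α * t) * (-α₀ * k t) := by nlinarith
      _ = -α₀ * (Real.exp (α * t) * k t) := by ring
  -- nonnegativity of partial integrals of φ k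
  have hφknn : ∀ N : ℝ, 0 ≤ N →
      0 ≤ ∫ t in Set.Ioc (0:ℝ) N, Real.exp (α * t) * k t := by
    intro N hN
    refine setIntegral_nonneg measurableSet_Ioc fun t ht => ?_
    exact mul_nonneg (Real.exp_pos _).le (hk_nonneg t (le_of_lt ht.1))
  -- uniform bound on ∫_{Ioc 0 N} φ k
  set B : ℝ := k 0 / (α₀ - α) with hB
  have hbd : ∀ N : ℝ, 0 ≤ N → ∫ t in Set.Ioc (0:ℝ) N, Real.exp (α * t) * k t ≤ B := by
    intro N hN
    have h1 := hId N hN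
    have h2 := hcomp N hN
    have h3 : 0 ≤ Real.exp (α * N) * k N :=
      mul_nonneg (Real.exp_pos _).le (hk_nonneg N hN)
    rw [hB, le_div_iff₀ (by linarith)]
    nlinarith
  -- integrability of φ k on Ioi 0
  have hIk : IntegrableOn (fun t => Real.exp (α * t) * k t) (Set.Ioi (0:ℝ)) := by
    refine integrableOn_Ioi_of_intervalIntegral_norm_bounded (f := fun t => Real.exp (α * t) * k t)
      (b := fun N : ℝ => N) (l := Filter.atTop) B 0 ?_ Filter.tendsto_id ?_
    · intro i
      rcases le_or_gt 0 i with h | h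
      · exact hφk i h
      · rw [Set.Ioc_eq_empty (by linarith)]
        exact integrableOn_empty
    · filter_upwards [Filter.eventually_ge_atTop (0:ℝ)] with N hN
      rw [intervalIntegral.integral_of_le hN]
      calc ∫ t in Set.Ioc (0:ℝ) N, ‖Real.exp (α * t) * k t‖
          = ∫ t in Set.Ioc (0:ℝ) N, Real.exp (α * t) * k t := by
            refine setIntegral_congr_fun measurableSet_Ioc fun t ht => ?_
            rw [Real.norm_eq_abs,
              abs_of_nonneg (mul_nonneg (Real.exp_pos _).le (hk_nonneg t (le_of_lt ht.1)))]
        _ ≤ B := hbd N hN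
  set J : ℝ := ∫ t in Set.Ioi (0:ℝ), Real.exp (α * t) * k t with hJ
  have hJN : ∀ N : ℝ, 0 ≤ N → ∫ t in Set.Ioc (0:ℝ) N, Real.exp (α * t) * k t ≤ J := by
    intro N hN
    refine setIntegral_mono_set hIk ?_ (HasSubset.Subset.eventuallyLE Set.Ioc_subset_Ioi_self)
    filter_upwards [self_mem_ae_restrict measurableSet_Ioi] with t ht
    exact mul_nonneg (Real.exp_pos _).le (hk_nonneg t (le_of_lt ht))
  -- |k'| version on Ioc
  have habs : ∀ N : ℝ, 0 ≤ N →
      ∫ t in Set.Ioc (0:ℝ) N, Real.exp (α * t) * |k' t|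
        = -∫ t in Set.Ioc (0:ℝ) N, Real.exp (α * t) * k' t := by
    intro N hN
    rw [← integral_neg]
    refine setIntegral_congr_ae measurableSet_Ioc ?_
    filter_upwards [hk'neg] with t ht hmem
    rw [(ht (le_of_lt hmem.1)).2]
    ring
  have habsint : ∀ N : ℝ, 0 ≤ N →
      IntegrableOn (fun t => Real.exp (α * t) * |k' t|) (Set.Ioc 0 N) := by
    intro N hN
    refine ((hφk' N hN).abs).congr (ae_of_all _ fun t => ?_)
    simp only
    rw [abs_mul, abs_of_pos (Real.exp_pos _)]
  -- the key uniform bound on ∫_{0..N} φ |k'|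
  have hkey : ∀ N : ℝ, 0 ≤ N →
      ∫ t in Set.Ioc (0:ℝ) N, Real.exp (α * t) * |k' t| ≤ k 0 + α * J := by
    intro N hN
    rw [habs N hN, hId N hN]
    have h3 : 0 ≤ Real.exp (α * N) * k N :=
      mul_nonneg (Real.exp_pos _).le (hk_nonneg N hN)
    have h4 := hJN N hN
    nlinarith
  have hf_nonneg : ∀ t : ℝ, 0 ≤ Real.exp (α * t) * |k' t| := fun t =>
    mul_nonneg (Real.exp_pos _).le (abs_nonneg _)
  -- integrability of φ |k'| on Ioi 0
  have hIf : IntegrableOn (fun t => Real.exp (α * t) * |k' t|) (Set.Ioi (0:ℝ)) := by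
    refine integrableOn_Ioi_of_intervalIntegral_norm_bounded
      (f := fun t => Real.exp (α * t) * |k' t|)
      (b := fun N : ℝ => N) (l := Filter.atTop) (k 0 + α * J) 0 ?_ Filter.tendsto_id ?_
    · intro i
      rcases le_or_gt 0 i with h | h
      · exact habsint i h
      · rw [Set.Ioc_eq_empty (by linarith)]
        exact integrableOn_empty
    · filter_upwards [Filter.eventually_ge_atTop (0:ℝ)] with N hN
      rw [intervalIntegral.integral_of_le hN]
      calc ∫ t in Set.Ioc (0:ℝ) N, ‖Real.exp (α * t) * |k' t|‖
          = ∫ t in Set.Ioc (0:ℝ) N, Real.exp (α * t) * |k' t| := by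
            refine setIntegral_congr_fun measurableSet_Ioc fun t _ => ?_
            rw [Real.norm_eq_abs, abs_of_nonneg (hf_nonneg t)]
        _ ≤ k 0 + α * J := hkey N hN
  refine ⟨hIf, ?_⟩
  -- pass to the limit
  have htend := intervalIntegral_tendsto_integral_Ioi (f := fun t => Real.exp (α * t) * |k' t|)
    (b := fun N : ℝ => N) (l := Filter.atTop) 0 hIf Filter.tendsto_id
  refine le_of_tendsto htend ?_
  filter_upwards [Filter.eventually_ge_atTop (0:ℝ)] with N hN
  rw [intervalIntegral.integral_of_le hN]
  exact hkey N hN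
end
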